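/- arXiv:1910.13564 — 6 statements merged into one kernel-verified Lean document; each statement's English description precedes it below -/
import Mathlib

section
/- For every f ∈ C^{r0}(ℝ^n, ℝ) and every z ∈ ℝ^n one has |e^f|_{T_z} ≤ e^{f(z)} (1 + |f|_{T_z})^{r0} and |e^f − 1|_{T_z} ≤ max(e^{f(z)}, 1) · (1 + |f|_{T_z})^{r0} · |f|_{T_z}. -/
open scoped BigOperators

/-- Partial derivative in the `i`-th coordinate direction. -/
noncomputable def pd1 {n : ℕ} (i : Fin n) (f : (Fin n → ℝ) → ℝ) : (Fin n → ℝ) → ℝ :=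
  fun z => fderiv ℝ f z (Pi.single i 1)

/-- Iterated partial derivative in one coordinate direction. -/
noncomputable def pdPow {n : ℕ} (i : Fin n) : ℕ → ((Fin n → ℝ) → ℝ) → (Fin n → ℝ) → ℝ
  | 0, f => f
  | k + 1, f => pd1 i (pdPow i k f)

/-- Multiindex partial derivative `∂^α`. -/
noncomputable def pdMulti {n : ℕ} (α : Fin n → ℕ) (f : (Fin n → ℝ) → ℝ) : (Fin n → ℝ) → ℝ :=
  (List.finRange n).foldr (fun i g => pdPow i (α i) g) f

/-- Multiindex factorial `α! = α₁! ⋯ αₙ!`. -/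
def mfact {n : ℕ} (α : Fin n → ℕ) : ℕ := ∏ i, Nat.factorial (α i)

/-- The truncated Taylor norm `|f|_{T_z} = ∑_{|α| ≤ r0} |∂^α f(z)| / α!`. -/
noncomputable def taylorNorm {n : ℕ} (r0 : ℕ) (f : (Fin n → ℝ) → ℝ) (z : Fin n → ℝ) : ℝ :=
  ∑ α ∈ (Finset.Iic (fun _ : Fin n => r0)).filter (fun α => ∑ i, α i ≤ r0),
    |pdMulti α f z| / ((mfact α : ℕ) : ℝ)

namespace S1
variable {n : ℕ}


abbrev F (n : ℕ) := (Fin n → ℝ) → ℝ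

/-- total degree -/
def deg {n : ℕ} (α : Fin n → ℕ) : ℕ := ∑ i, α i

/-- fold used in pdMulti, over a general list -/
noncomputable def pdFold {n : ℕ} (l : List (Fin n)) (α : Fin n → ℕ) (f : F n) : F n :=
  l.foldr (fun i g => pdPow i (α i) g) f

lemma pdMulti_eq_pdFold (α : Fin n → ℕ) (f : F n) :
    pdMulti α f = pdFold (List.finRange n) α f := rfl

lemma contDiff_pd1 {m : ℕ} {f : F n} (i : Fin n) (hf : ContDiff ℝ (m + 1 : ℕ) f) :
    ContDiff ℝ (m : ℕ) (pd1 i f) := by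
  have h : ContDiff ℝ (m : ℕ) (fderiv ℝ f) := by
    apply hf.fderiv_right
    exact_mod_cast le_refl _
  exact h.clm_apply contDiff_const

lemma contDiff_pdPow {f : F n} (i : Fin n) (k : ℕ) :
    ∀ (m : ℕ), ContDiff ℝ (m + k : ℕ) f → ContDiff ℝ (m : ℕ) (pdPow i k f) := by
  induction k with
  | zero => intro m hf; simpa [pdPow] using hf
  | succ k ih =>
    intro m hf
    have : ContDiff ℝ ((m + 1 : ℕ)) (pdPow i k f) := by
      apply ih (m+1)
      convert hf using 2
      omega
    exact contDiff_pd1 i this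

lemma contDiff_pdFold {f : F n} (l : List (Fin n)) (α : Fin n → ℕ) :
    ∀ (m : ℕ), ContDiff ℝ (m + (l.map α).sum : ℕ) f → ContDiff ℝ (m : ℕ) (pdFold l α f) := by
  induction l with
  | nil => intro m hf; simpa [pdFold] using hf
  | cons a l ih =>
    intro m hf
    have h1 : ContDiff ℝ (m + α a : ℕ) (pdFold l α f) := by
      apply ih
      convert hf using 2
      simp [List.sum_cons]; omega
    exact contDiff_pdPow a (α a) m h1

lemma sum_finRange_map (α : Fin n → ℕ) : ((List.finRange n).map α).sum = deg α := by
  rw [deg, Fin.sum_univ_def]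

lemma contDiff_pdMulti {f : F n} (α : Fin n → ℕ) (m : ℕ)
    (hf : ContDiff ℝ (m + deg α : ℕ) f) : ContDiff ℝ (m : ℕ) (pdMulti α f) := by
  rw [pdMulti_eq_pdFold]
  exact contDiff_pdFold _ _ m (by rwa [sum_finRange_map])



lemma pd1_add {g h : F n} (i : Fin n) (hg : Differentiable ℝ g) (hh : Differentiable ℝ h) :
    pd1 i (fun z => g z + h z) = fun z => pd1 i g z + pd1 i h z := by
  funext z
  simp only [pd1]
  show fderiv ℝ (g + h) z (Pi.single i 1) = _
  rw [((hg z).hasFDerivAt.add (hh z).hasFDerivAt).fderiv]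
  rfl

lemma pd1_mul {g h : F n} (i : Fin n) (hg : Differentiable ℝ g) (hh : Differentiable ℝ h) :
    pd1 i (fun z => g z * h z) = fun z => pd1 i g z * h z + g z * pd1 i h z := by
  funext z
  simp only [pd1]
  show fderiv ℝ (g * h) z (Pi.single i 1) = _
  rw [((hg z).hasFDerivAt.mul (hh z).hasFDerivAt).fderiv]
  simp
  ring

lemma pd1_exp {g : F n} (i : Fin n) (hg : Differentiable ℝ g) :
    pd1 i (fun z => Real.exp (g z)) = fun z => Real.exp (g z) * pd1 i g z := by
  funext z
  simp [pd1, fderiv_exp (hg z)]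

lemma pd1_sub_const {g : F n} (i : Fin n) (c : ℝ) :
    pd1 i (fun z => g z - c) = pd1 i g := by
  funext z
  simp [pd1, fderiv_sub_const]



/-- increment a multiindex at coordinate i -/
def inc (i : Fin n) (α : Fin n → ℕ) : Fin n → ℕ := Function.update α i (α i + 1)

lemma pdFold_congr {α β : Fin n → ℕ} {f : F n} (l : List (Fin n))
    (h : ∀ j ∈ l, α j = β j) : pdFold l α f = pdFold l β f := by
  induction l with
  | nil => rfl
  | cons a l ih =>
    show pdPow a (α a) (pdFold l α f) = pdPow a (β a) (pdFold l β f)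
    rw [h a (List.mem_cons_self), ih (fun j hj => h j (List.mem_cons_of_mem a hj))]

lemma pdFold_of_zero {α : Fin n → ℕ} {f : F n} (l : List (Fin n))
    (h : ∀ j ∈ l, α j = 0) : pdFold l α f = f := by
  induction l with
  | nil => rfl
  | cons a l ih =>
    show pdPow a (α a) (pdFold l α f) = f
    rw [h a (List.mem_cons_self), ih (fun j hj => h j (List.mem_cons_of_mem a hj))]
    rfl

lemma pdPow_succ' (i : Fin n) (k : ℕ) (f : F n) :
    pdPow i (k + 1) f = pdPow i k (pd1 i f) := by
  induction k with
  | zero => rfl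
  | succ k ih =>
    show pd1 i (pdPow i (k+1) f) = pd1 i (pdPow i k (pd1 i f))
    rw [ih]

lemma pdFold_peel {δ : Fin n → ℕ} {f : F n} {i : Fin n} (l : List (Fin n))
    (hp : l.Pairwise (· < ·)) (hi : i ∈ l) (hz : ∀ j ∈ l, i < j → δ j = 0) :
    pdFold l (inc i δ) f = pdFold l δ (pd1 i f) := by
  induction l with
  | nil => simp at hi
  | cons a l ih =>
    by_cases hia : i = a
    · subst hia
      show pdPow i (inc i δ i) (pdFold l (inc i δ) f) = pdPow i (δ i) (pdFold l δ (pd1 i f))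
      have hlz : ∀ j ∈ l, δ j = 0 := by
        intro j hj
        exact hz j (List.mem_cons_of_mem _ hj) ((List.pairwise_cons.mp hp).1 j hj)
      have hlz' : ∀ j ∈ l, inc i δ j = 0 := by
        intro j hj
        have hij : i < j := (List.pairwise_cons.mp hp).1 j hj
        rw [inc, Function.update_of_ne (ne_of_gt hij)]
        exact hlz j hj
      rw [pdFold_of_zero l hlz', pdFold_of_zero l hlz]
      have : inc i δ i = δ i + 1 := by simp [inc]
      rw [this, pdPow_succ']
    · have hil : i ∈ l := by
        rcases List.mem_cons.mp hi with h | h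
        · exact absurd h hia
        · exact h
      have hai : a ≠ i := fun h => hia h.symm
      show pdPow a (inc i δ a) (pdFold l (inc i δ) f) = pdPow a (δ a) (pdFold l δ (pd1 i f))
      rw [show inc i δ a = δ a by simp [inc, Function.update_of_ne hai]]
      rw [ih (List.pairwise_cons.mp hp).2 hil
        (fun j hj hij => hz j (List.mem_cons_of_mem _ hj) hij)]

lemma pdMulti_peel {δ : Fin n → ℕ} {f : F n} {i : Fin n}
    (hz : ∀ j, i < j → δ j = 0) :
    pdMulti (inc i δ) f = pdMulti δ (pd1 i f) := by
  rw [pdMulti_eq_pdFold, pdMulti_eq_pdFold]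
  exact pdFold_peel _ (List.pairwise_lt_finRange n) (List.mem_finRange i)
    (fun j _ hij => hz j hij)

lemma pdMulti_zero_idx (f : F n) : pdMulti (fun _ => 0) f = f := by
  rw [pdMulti_eq_pdFold]
  exact pdFold_of_zero _ (fun _ _ => rfl)

lemma pdPow_add {X Y : F n} (i : Fin n) (k : ℕ)
    (hX : ContDiff ℝ (k : ℕ) X) (hY : ContDiff ℝ (k : ℕ) Y) :
    pdPow i k (fun z => X z + Y z) = fun z => pdPow i k X z + pdPow i k Y z := by
  induction k with
  | zero => rfl
  | succ k ih =>
    have hX' : ContDiff ℝ (k : ℕ) X := hX.of_le (by exact_mod_cast Nat.le_succ k)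
    have hY' : ContDiff ℝ (k : ℕ) Y := hY.of_le (by exact_mod_cast Nat.le_succ k)
    show pd1 i (pdPow i k fun z => X z + Y z) = _
    rw [ih hX' hY']
    have dX : Differentiable ℝ (pdPow i k X) := by
      have : ContDiff ℝ (1 : ℕ) (pdPow i k X) := contDiff_pdPow i k 1 (by
        convert hX using 2; omega)
      exact this.differentiable (by exact_mod_cast (by omega : (1:ℕ) ≠ 0))
    have dY : Differentiable ℝ (pdPow i k Y) := by
      have : ContDiff ℝ (1 : ℕ) (pdPow i k Y) := contDiff_pdPow i k 1 (by
        convert hY using 2; omega)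
      exact this.differentiable (by exact_mod_cast (by omega : (1:ℕ) ≠ 0))
    exact pd1_add i dX dY

lemma pdFold_add {X Y : F n} (l : List (Fin n)) (α : Fin n → ℕ)
    (hX : ContDiff ℝ ((l.map α).sum : ℕ) X) (hY : ContDiff ℝ ((l.map α).sum : ℕ) Y) :
    pdFold l α (fun z => X z + Y z) = fun z => pdFold l α X z + pdFold l α Y z := by
  induction l with
  | nil => rfl
  | cons a l ih =>
    have hs : (List.map α (a :: l)).sum = α a + (l.map α).sum := by simp
    have hX1 : ContDiff ℝ ((l.map α).sum : ℕ) X := hX.of_le (by exact_mod_cast by omega)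
    have hY1 : ContDiff ℝ ((l.map α).sum : ℕ) Y := hY.of_le (by exact_mod_cast by omega)
    show pdPow a (α a) (pdFold l α fun z => X z + Y z) = _
    rw [ih hX1 hY1]
    rw [hs] at hX hY
    exact pdPow_add a (α a) (contDiff_pdFold l α (α a) hX) (contDiff_pdFold l α (α a) hY)

lemma pdMulti_add {X Y : F n} (α : Fin n → ℕ)
    (hX : ContDiff ℝ (deg α : ℕ) X) (hY : ContDiff ℝ (deg α : ℕ) Y) :
    pdMulti α (fun z => X z + Y z) = fun z => pdMulti α X z + pdMulti α Y z := by
  rw [pdMulti_eq_pdFold, pdMulti_eq_pdFold, pdMulti_eq_pdFold]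
  exact pdFold_add _ _ (by rwa [sum_finRange_map]) (by rwa [sum_finRange_map])



def mchoose (β γ : Fin n → ℕ) : ℕ := ∏ j, Nat.choose (β j) (γ j)

lemma mchoose_split (β γ : Fin n → ℕ) (i : Fin n) :
    mchoose β γ = Nat.choose (β i) (γ i) * ∏ j ∈ Finset.univ.erase i, Nat.choose (β j) (γ j) :=
  (Finset.mul_prod_erase Finset.univ _ (Finset.mem_univ i)).symm

lemma mchoose_update_left (β γ : Fin n → ℕ) (i : Fin n) (b : ℕ) :
    mchoose (Function.update β i b) γ
      = Nat.choose b (γ i) * ∏ j ∈ Finset.univ.erase i, Nat.choose (β j) (γ j) := by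
  rw [mchoose_split _ _ i, Function.update_self]
  congr 1
  apply Finset.prod_congr rfl
  intro j hj
  rw [Function.update_of_ne (Finset.ne_of_mem_erase hj)]

lemma mchoose_update_both (β γ : Fin n → ℕ) (i : Fin n) (b k : ℕ) :
    mchoose (Function.update β i b) (Function.update γ i k)
      = Nat.choose b k * ∏ j ∈ Finset.univ.erase i, Nat.choose (β j) (γ j) := by
  rw [mchoose_update_left]
  rw [Function.update_self]
  congr 1
  apply Finset.prod_congr rfl
  intro j hj
  rw [Function.update_of_ne (Finset.ne_of_mem_erase hj)]

lemma deg_update (α : Fin n → ℕ) (i : Fin n) (v : ℕ) :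
    deg (Function.update α i v) + α i = deg α + v := by
  rw [deg, deg, Finset.sum_update_of_mem (Finset.mem_univ i),
    ← Finset.add_sum_erase Finset.univ α (Finset.mem_univ i)]
  have : Finset.univ \ {i} = Finset.univ.erase i := by
    ext; simp [Finset.mem_erase, and_comm]
  rw [this]
  omega



lemma nat_pascal_mchoose {β γ : Fin n → ℕ} (i : Fin n) (hβi : β i ≠ 0) :
    mchoose β γ = mchoose (Function.update β i (β i - 1)) γ
      + (if γ i = 0 then 0 else
          mchoose (Function.update β i (β i - 1)) (Function.update γ i (γ i - 1))) := by
  rcases Nat.exists_eq_succ_of_ne_zero hβi with ⟨b, hb⟩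
  rcases Nat.eq_zero_or_pos (γ i) with h0 | hpos
  · rw [if_pos h0, mchoose_split β γ i, mchoose_update_left, h0]
    simp
  · rcases Nat.exists_eq_succ_of_ne_zero (Nat.pos_iff_ne_zero.mp hpos) with ⟨k, hk⟩
    rw [if_neg (Nat.pos_iff_ne_zero.mp hpos), mchoose_split β γ i, mchoose_update_left,
      mchoose_update_both, hb, hk]
    simp only [Nat.succ_sub_one]
    rw [Nat.choose_succ_succ]
    ring

lemma leibniz (m : ℕ) : ∀ (β : Fin n → ℕ), deg β ≤ m → ∀ (g h : F n),
    ContDiff ℝ (m : ℕ) g → ContDiff ℝ (m : ℕ) h → ∀ z,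
    pdMulti β (fun w => g w * h w) z
      = ∑ γ ∈ Finset.Iic β, (mchoose β γ : ℝ) * (pdMulti γ g z * pdMulti (β - γ) h z) := by
  induction m with
  | zero =>
    intro β hβ g h hg hh z
    have hβ0 : β = fun _ => 0 := by
      funext j
      have := Finset.sum_eq_zero_iff.mp (Nat.le_zero.mp hβ)
      exact this j (Finset.mem_univ j)
    subst hβ0
    have hI : Finset.Iic (fun _ : Fin n => 0) = {fun _ : Fin n => 0} := by
      ext γ
      simp only [Finset.mem_Iic, Finset.mem_singleton]
      constructor
      · intro hγ; funext j; exact Nat.le_zero.mp (hγ j)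
      · rintro rfl; exact le_refl _
    rw [hI, Finset.sum_singleton]
    have hsub : ((fun _ : Fin n => 0) - (fun _ : Fin n => 0)) = (fun _ : Fin n => 0) := by
      funext j; rfl
    rw [hsub, pdMulti_zero_idx, pdMulti_zero_idx, pdMulti_zero_idx]
    have : mchoose (fun _ : Fin n => 0) (fun _ : Fin n => 0) = 1 := by
      simp [mchoose]
    rw [this]
    push_cast
    ring
  | succ m ih =>
    intro β hβ g h hg hh z
    by_cases hβ0 : β = fun _ => 0
    · subst hβ0
      have hI : Finset.Iic (fun _ : Fin n => 0) = {fun _ : Fin n => 0} := by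
        ext γ
        simp only [Finset.mem_Iic, Finset.mem_singleton]
        constructor
        · intro hγ; funext j; exact Nat.le_zero.mp (hγ j)
        · rintro rfl; exact le_refl _
      rw [hI, Finset.sum_singleton]
      have hsub : ((fun _ : Fin n => 0) - (fun _ : Fin n => 0)) = (fun _ : Fin n => 0) := by
        funext j; rfl
      rw [hsub, pdMulti_zero_idx, pdMulti_zero_idx, pdMulti_zero_idx]
      have : mchoose (fun _ : Fin n => 0) (fun _ : Fin n => 0) = 1 := by
        simp [mchoose]
      rw [this]
      push_cast
      ring
    · -- find the largest index with β i ≠ 0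
      have hβne : ∃ j, β j ≠ 0 := by
        by_contra hc; push_neg at hc; exact hβ0 (funext hc)
      have hsne : (Finset.univ.filter (fun j => β j ≠ 0)).Nonempty :=
        ⟨hβne.choose, by simp [hβne.choose_spec]⟩
      obtain ⟨i, hβi, hgt⟩ : ∃ i : Fin n, β i ≠ 0 ∧ ∀ j, i < j → β j = 0 := by
        refine ⟨(Finset.univ.filter (fun j => β j ≠ 0)).max' hsne, ?_, ?_⟩
        · have := Finset.max'_mem _ hsne
          simpa using this
        · intro j hj
          by_contra hc
          exact absurd (Finset.le_max' _ j (by simp [hc])) (not_le.mpr hj)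
      have hb1 : 1 ≤ β i := Nat.pos_of_ne_zero hβi
      obtain ⟨β', hβ'def⟩ : ∃ β', β' = Function.update β i (β i - 1) := ⟨_, rfl⟩
      have hβ'gt : ∀ j, i < j → β' j = 0 := by
        intro j hj
        rw [hβ'def, Function.update_of_ne (ne_of_gt hj)]
        exact hgt j hj
      have hβ'i : β' i = β i - 1 := by rw [hβ'def, Function.update_self]
      have hβ'j : ∀ j, j ≠ i → β' j = β j := by
        intro j hj; rw [hβ'def, Function.update_of_ne hj]
      have hinc : inc i β' = β := by
        funext j
        by_cases hji : j = i
        · subst hji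
          rw [inc, Function.update_self, hβ'i]
          omega
        · rw [inc, Function.update_of_ne hji, hβ'j j hji]
      have hdeg' : deg β' ≤ m := by
        have hdu := deg_update β i (β i - 1)
        rw [← hβ'def] at hdu
        omega
      -- smoothness bookkeeping
      have hg1 : ContDiff ℝ (m : ℕ) (pd1 i g) := contDiff_pd1 i hg
      have hh1 : ContDiff ℝ (m : ℕ) (pd1 i h) := contDiff_pd1 i hh
      have hgm : ContDiff ℝ (m : ℕ) g := hg.of_le (by exact_mod_cast Nat.le_succ m)
      have hhm : ContDiff ℝ (m : ℕ) h := hh.of_le (by exact_mod_cast Nat.le_succ m)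
      have hgd : Differentiable ℝ g := hg.differentiable (by exact_mod_cast Nat.succ_ne_zero m)
      have hhd : Differentiable ℝ h := hh.differentiable (by exact_mod_cast Nat.succ_ne_zero m)
      -- peel one derivative
      have e1 : pdMulti β (fun w => g w * h w) = pdMulti β' (pd1 i (fun w => g w * h w)) := by
        conv_lhs => rw [← hinc]
        exact pdMulti_peel hβ'gt
      have e2 : pd1 i (fun w => g w * h w)
          = fun w => (pd1 i g w * h w) + (g w * pd1 i h w) := pd1_mul i hgd hhd
      have hX : ContDiff ℝ (deg β' : ℕ) (fun w => pd1 i g w * h w) :=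
        (hg1.mul hhm).of_le (by exact_mod_cast hdeg')
      have hY : ContDiff ℝ (deg β' : ℕ) (fun w => g w * pd1 i h w) :=
        (hgm.mul hh1).of_le (by exact_mod_cast hdeg')
      have e3 : pdMulti β (fun w => g w * h w) z
          = pdMulti β' (fun w => pd1 i g w * h w) z
            + pdMulti β' (fun w => g w * pd1 i h w) z := by
        rw [e1, e2, pdMulti_add β' hX hY]
      rw [e3, ih β' hdeg' (pd1 i g) h hg1 hhm z, ih β' hdeg' g (pd1 i h) hgm hh1 z]
      -- notation
      set T : (Fin n → ℕ) → ℝ := fun γ => pdMulti γ g z * pdMulti (β - γ) h z with hT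
      -- rewrite the two sums
      have claim1 : ∑ γ ∈ Finset.Iic β', (mchoose β' γ : ℝ)
            * (pdMulti γ (pd1 i g) z * pdMulti (β' - γ) h z)
          = ∑ γ ∈ Finset.Iic β', (mchoose β' γ : ℝ) * T (inc i γ) := by
        apply Finset.sum_congr rfl
        intro γ hγ
        have hγle : γ ≤ β' := Finset.mem_Iic.mp hγ
        have hγgt : ∀ j, i < j → γ j = 0 := fun j hj =>
          Nat.le_zero.mp (le_of_le_of_eq (hγle j) (hβ'gt j hj))
        have hpeel : pdMulti γ (pd1 i g) = pdMulti (inc i γ) g := (pdMulti_peel hγgt).symm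
        have hidx : β' - γ = β - inc i γ := by
          funext j
          by_cases hji : j = i
          · subst hji
            simp only [Pi.sub_apply, inc, Function.update_self, hβ'i]
            omega
          · simp only [Pi.sub_apply, inc, Function.update_of_ne hji, hβ'j j hji]
        rw [hpeel, hidx, hT]
      have claim2 : ∑ γ ∈ Finset.Iic β', (mchoose β' γ : ℝ)
            * (pdMulti γ g z * pdMulti (β' - γ) (pd1 i h) z)
          = ∑ γ ∈ Finset.Iic β', (mchoose β' γ : ℝ) * T γ := by
        apply Finset.sum_congr rfl
        intro γ hγ
        have hγle : γ ≤ β' := Finset.mem_Iic.mp hγ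
        have hδgt : ∀ j, i < j → (β' - γ) j = 0 := by
          intro j hj
          simp only [Pi.sub_apply, hβ'gt j hj, Nat.zero_sub]
        have hpeel : pdMulti (β' - γ) (pd1 i h) = pdMulti (inc i (β' - γ)) h :=
          (pdMulti_peel hδgt).symm
        have hidx : inc i (β' - γ) = β - γ := by
          funext j
          by_cases hji : j = i
          · subst hji
            have h1 : γ j ≤ β j - 1 := le_of_le_of_eq (hγle j) hβ'i
            simp only [inc, Function.update_self, Pi.sub_apply, hβ'i]
            omega
          · simp only [inc, Function.update_of_ne hji, Pi.sub_apply, hβ'j j hji]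
        rw [hpeel, hidx, hT]
      rw [claim1, claim2]
      -- now pure Finset algebra on the target
      have claim3 : ∑ γ ∈ Finset.Iic β, (mchoose β γ : ℝ) * T γ
          = (∑ γ ∈ Finset.Iic β, (mchoose β' γ : ℝ) * T γ)
            + ∑ γ ∈ Finset.Iic β, ((if γ i = 0 then (0:ℕ) else
                mchoose β' (Function.update γ i (γ i - 1))) : ℝ) * T γ := by
        rw [← Finset.sum_add_distrib]
        apply Finset.sum_congr rfl
        intro γ _
        have := nat_pascal_mchoose (β := β) (γ := γ) i hβi
        rw [← hβ'def] at this
        have hcast : (mchoose β γ : ℝ) = (mchoose β' γ : ℝ)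
            + ((if γ i = 0 then (0:ℕ) else mchoose β' (Function.update γ i (γ i - 1))) : ℝ) := by
          exact_mod_cast congrArg (Nat.cast (R := ℝ)) this
        rw [hcast]
        ring
      have hβ'le : β' ≤ β := by
        rw [Pi.le_def]
        intro j
        by_cases hji : j = i
        · subst hji; rw [hβ'i]; omega
        · rw [hβ'j j hji]
      have claim4 : ∑ γ ∈ Finset.Iic β, (mchoose β' γ : ℝ) * T γ
          = ∑ γ ∈ Finset.Iic β', (mchoose β' γ : ℝ) * T γ := by
        symm
        apply Finset.sum_subset (Finset.Iic_subset_Iic.mpr hβ'le)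
        intro γ hγ hγ'
        have hγle : γ ≤ β := Finset.mem_Iic.mp hγ
        have : ¬ γ ≤ β' := fun hc => hγ' (Finset.mem_Iic.mpr hc)
        have hγi : β' i < γ i := by
          by_contra hc
          apply this
          rw [Pi.le_def]
          intro j
          by_cases hji : j = i
          · subst hji; omega
          · rw [hβ'j j hji]; exact hγle j
        have hz : mchoose β' γ = 0 := by
          rw [mchoose_split β' γ i, Nat.choose_eq_zero_of_lt hγi, Nat.zero_mul]
        rw [hz]
        push_cast
        ring
      have claim5 : ∑ γ ∈ Finset.Iic β, ((if γ i = 0 then (0:ℕ) else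
              mchoose β' (Function.update γ i (γ i - 1))) : ℝ) * T γ
          = ∑ γ ∈ Finset.Iic β', (mchoose β' γ : ℝ) * T (inc i γ) := by
        rw [← Finset.sum_filter_of_ne (p := fun γ => γ i ≠ 0)
          (by intro γ _ hne; intro h0; apply hne; rw [h0]; push_cast; ring)]
        apply Finset.sum_nbij' (i := fun γ => Function.update γ i (γ i - 1))
          (j := fun γ => inc i γ)
        · intro γ hγ
          simp only [Finset.mem_filter, Finset.mem_Iic] at hγ
          apply Finset.mem_Iic.mpr
          rw [Pi.le_def]
          intro j
          by_cases hji : j = i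
          · subst hji
            rw [Function.update_self, hβ'i]
            have h9 : γ j ≤ β j := hγ.1 j
            omega
          · rw [Function.update_of_ne hji, hβ'j j hji]
            exact hγ.1 j
        · intro γ hγ
          have hγle : γ ≤ β' := Finset.mem_Iic.mp hγ
          simp only [Finset.mem_filter, Finset.mem_Iic]
          constructor
          · rw [Pi.le_def]
            intro j
            by_cases hji : j = i
            · subst hji
              rw [inc, Function.update_self]
              have h9 : γ j ≤ β' j := hγle j
              omega
            · rw [inc, Function.update_of_ne hji]
              exact le_trans (hγle j) (hβ'le j)
          · rw [inc, Function.update_self]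
            omega
        · intro γ hγ
          simp only [Finset.mem_filter, Finset.mem_Iic] at hγ
          funext j
          by_cases hji : j = i
          · subst hji
            rw [inc, Function.update_self, Function.update_self]
            have := hγ.2
            omega
          · rw [inc, Function.update_of_ne hji, Function.update_of_ne hji]
        · intro γ hγ
          funext j
          by_cases hji : j = i
          · subst hji
            rw [Function.update_self, inc, Function.update_self]
            omega
          · rw [Function.update_of_ne hji, inc, Function.update_of_ne hji]
        · intro γ hγ
          simp only [Finset.mem_filter, Finset.mem_Iic] at hγ
          have hne : ¬ γ i = 0 := hγ.2
          have harg : inc i (Function.update γ i (γ i - 1)) = γ := by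
            funext j
            by_cases hji : j = i
            · subst hji
              rw [inc, Function.update_self, Function.update_self]
              omega
            · rw [inc, Function.update_of_ne hji, Function.update_of_ne hji]
          rw [if_neg hne, harg]
      rw [claim3, claim4, claim5]
      ring


lemma deg_mono {γ α : Fin n → ℕ} (h : γ ≤ α) : deg γ ≤ deg α :=
  Finset.sum_le_sum fun j _ => h j

lemma deg_sub {γ α : Fin n → ℕ} (h : γ ≤ α) : deg (α - γ) + deg γ = deg α := by
  rw [deg, deg, deg, ← Finset.sum_add_distrib]
  apply Finset.sum_congr rfl
  intro j _
  have h9 : γ j ≤ α j := h j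
  simp only [Pi.sub_apply]
  omega

lemma deg_eq_zero {α : Fin n → ℕ} : deg α = 0 ↔ α = fun _ => 0 := by
  constructor
  · intro h
    funext j
    exact Finset.sum_eq_zero_iff.mp h j (Finset.mem_univ j)
  · rintro rfl
    simp [deg]

lemma exists_max_support (α : Fin n → ℕ) (hα0 : α ≠ fun _ => 0) :
    ∃ i, α i ≠ 0 ∧ ∀ j, i < j → α j = 0 := by
  have hβne : ∃ j, α j ≠ 0 := by
    by_contra hc; push_neg at hc; exact hα0 (funext hc)
  have hsne : (Finset.univ.filter (fun j => α j ≠ 0)).Nonempty :=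
    ⟨hβne.choose, by simp [hβne.choose_spec]⟩
  refine ⟨(Finset.univ.filter (fun j => α j ≠ 0)).max' hsne, ?_, ?_⟩
  · have := Finset.max'_mem _ hsne
    simpa using this
  · intro j hj
    by_contra hc
    exact absurd (Finset.le_max' _ j (by simp [hc])) (not_le.mpr hj)

lemma mfact_key {α β' γ : Fin n → ℕ} {i : Fin n} (hβ'def : β' = Function.update α i (α i - 1))
    (hαi : α i ≠ 0) (hγ : γ ≤ β') :
    mchoose β' γ * (mfact γ * mfact (α - γ)) ≤ mfact α := by
  have hexp : mchoose β' γ * (mfact γ * mfact (α - γ))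
      = ∏ j, Nat.choose (β' j) (γ j) * (Nat.factorial (γ j) * Nat.factorial (α j - γ j)) := by
    rw [mchoose, mfact, mfact, ← Finset.prod_mul_distrib, ← Finset.prod_mul_distrib]
    rfl
  rw [hexp, mfact]
  apply Finset.prod_le_prod'
  intro j _
  by_cases hji : j = i
  · subst hji
    have hb' : β' j = α j - 1 := by rw [hβ'def, Function.update_self]
    have hk : γ j ≤ α j - 1 := le_of_le_of_eq (hγ j) hb'
    have h2 := Nat.choose_mul_factorial_mul_factorial hk
    rw [hb']
    have h3 : α j - γ j = (α j - 1 - γ j) + 1 := by omega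
    rw [h3, Nat.factorial_succ]
    calc Nat.choose (α j - 1) (γ j) * (Nat.factorial (γ j)
          * ((α j - 1 - γ j + 1) * Nat.factorial (α j - 1 - γ j)))
        = (Nat.choose (α j - 1) (γ j) * Nat.factorial (γ j)
            * Nat.factorial (α j - 1 - γ j)) * (α j - 1 - γ j + 1) := by ring
      _ = Nat.factorial (α j - 1) * (α j - 1 - γ j + 1) := by rw [h2]
      _ ≤ Nat.factorial (α j - 1) * (α j - 1 + 1) := Nat.mul_le_mul_left _ (by omega)
      _ = Nat.factorial (α j - 1 + 1) := by rw [Nat.factorial_succ]; ring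
      _ = Nat.factorial (α j) := by congr 1; omega
  · have hb' : β' j = α j := by rw [hβ'def, Function.update_of_ne hji]
    have hk : γ j ≤ α j := le_of_le_of_eq (hγ j) hb'
    have h2 := Nat.choose_mul_factorial_mul_factorial hk
    rw [hb']
    exact le_of_eq (by rw [← h2]; ring)

lemma mfact_pos (α : Fin n → ℕ) : 0 < mfact α := by
  rw [mfact]
  exact Finset.prod_pos fun j _ => Nat.factorial_pos _


/-- index set of the Taylor norm -/
def Iset (n r0 : ℕ) : Finset (Fin n → ℕ) :=
  (Finset.Iic (fun _ : Fin n => r0)).filter (fun α => ∑ i, α i ≤ r0)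

noncomputable def uu (f : F n) (z : Fin n → ℝ) (α : Fin n → ℕ) : ℝ :=
  |pdMulti α f z| / (mfact α : ℝ)

lemma taylorNorm_eq (r0 : ℕ) (f : F n) (z : Fin n → ℝ) :
    taylorNorm r0 f z = ∑ α ∈ Iset n r0, uu f z α := rfl

lemma uu_nonneg (f : F n) (z : Fin n → ℝ) (α : Fin n → ℕ) : 0 ≤ uu f z α :=
  div_nonneg (abs_nonneg _) (Nat.cast_nonneg _)

lemma mem_Iset {r0 : ℕ} {α : Fin n → ℕ} :
    α ∈ Iset n r0 ↔ (∀ j, α j ≤ r0) ∧ deg α ≤ r0 := by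
  rw [Iset, Finset.mem_filter, Finset.mem_Iic, Pi.le_def]
  rfl

lemma key (r0 : ℕ) (hr0 : 1 ≤ r0) (f : F n) (hf : ContDiff ℝ (r0 : ℕ) f) (z : Fin n → ℝ)
    (α : Fin n → ℕ) (hαd : deg α ≤ r0) (hα0 : α ≠ fun _ => 0) :
    uu (fun w => Real.exp (f w)) z α
      ≤ ∑ γ ∈ (Finset.Iic α).filter (fun γ => deg γ < deg α),
          uu (fun w => Real.exp (f w)) z γ * uu f z (α - γ) := by
  obtain ⟨i, hαi, hgt⟩ := exists_max_support α hα0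
  have hb1 : 1 ≤ α i := Nat.pos_of_ne_zero hαi
  obtain ⟨β', hβ'def⟩ : ∃ β', β' = Function.update α i (α i - 1) := ⟨_, rfl⟩
  have hβ'i : β' i = α i - 1 := by rw [hβ'def, Function.update_self]
  have hβ'j : ∀ j, j ≠ i → β' j = α j := by
    intro j hj; rw [hβ'def, Function.update_of_ne hj]
  have hβ'gt : ∀ j, i < j → β' j = 0 := by
    intro j hj
    rw [hβ'j j (ne_of_gt hj)]
    exact hgt j hj
  have hinc : inc i β' = α := by
    funext j
    by_cases hji : j = i
    · subst hji
      rw [inc, Function.update_self, hβ'i]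
      omega
    · rw [inc, Function.update_of_ne hji, hβ'j j hji]
  have hdeg' : deg β' + 1 = deg α := by
    have hdu := deg_update α i (α i - 1)
    rw [← hβ'def] at hdu
    omega
  have hβ'le : β' ≤ α := by
    rw [Pi.le_def]
    intro j
    by_cases hji : j = i
    · subst hji; rw [hβ'i]; omega
    · rw [hβ'j j hji]
  -- smoothness
  have hfd : Differentiable ℝ f := hf.differentiable (by exact_mod_cast (by omega : r0 ≠ 0))
  have hg : ContDiff ℝ (r0 : ℕ) (fun w => Real.exp (f w)) := hf.exp
  have hgm : ContDiff ℝ ((r0 - 1 : ℕ) : ℕ) (fun w => Real.exp (f w)) :=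
    hg.of_le (by exact_mod_cast Nat.sub_le r0 1)
  have hf1 : ContDiff ℝ ((r0 - 1 : ℕ) : ℕ) (pd1 i f) := by
    apply contDiff_pd1
    convert hf using 2
    omega
  -- peel and Leibniz
  have e1 : pdMulti α (fun w => Real.exp (f w))
      = pdMulti β' (pd1 i (fun w => Real.exp (f w))) := by
    conv_lhs => rw [← hinc]
    exact pdMulti_peel hβ'gt
  have e2 : pd1 i (fun w => Real.exp (f w))
      = fun w => Real.exp (f w) * pd1 i f w := pd1_exp i hfd
  have e3 := leibniz (n := n) (r0 - 1) β' (by omega) (fun w => Real.exp (f w)) (pd1 i f)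
    hgm hf1 z
  have e4 : pdMulti α (fun w => Real.exp (f w)) z
      = ∑ γ ∈ Finset.Iic β', (mchoose β' γ : ℝ)
          * (pdMulti γ (fun w => Real.exp (f w)) z * pdMulti (β' - γ) (pd1 i f) z) := by
    rw [e1, e2]
    exact e3
  -- rewrite inner derivative of f
  have e5 : ∀ γ ∈ Finset.Iic β', pdMulti (β' - γ) (pd1 i f) z = pdMulti (α - γ) f z := by
    intro γ hγ
    have hγle : γ ≤ β' := Finset.mem_Iic.mp hγ
    have hδgt : ∀ j, i < j → (β' - γ) j = 0 := by
      intro j hj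
      simp only [Pi.sub_apply, hβ'gt j hj, Nat.zero_sub]
    have hpeel : pdMulti (β' - γ) (pd1 i f) = pdMulti (inc i (β' - γ)) f :=
      (pdMulti_peel hδgt).symm
    have hidx : inc i (β' - γ) = α - γ := by
      funext j
      by_cases hji : j = i
      · subst hji
        have h1 : γ j ≤ α j - 1 := le_of_le_of_eq (hγle j) hβ'i
        simp only [inc, Function.update_self, Pi.sub_apply, hβ'i]
        omega
      · simp only [inc, Function.update_of_ne hji, Pi.sub_apply, hβ'j j hji]
    rw [hpeel, hidx]
  -- now estimate
  have step1 : uu (fun w => Real.exp (f w)) z α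
      ≤ ∑ γ ∈ Finset.Iic β',
          uu (fun w => Real.exp (f w)) z γ * uu f z (α - γ) := by
    rw [uu, e4]
    have habs : |∑ γ ∈ Finset.Iic β', (mchoose β' γ : ℝ)
          * (pdMulti γ (fun w => Real.exp (f w)) z * pdMulti (β' - γ) (pd1 i f) z)|
        ≤ ∑ γ ∈ Finset.Iic β', (mchoose β' γ : ℝ)
          * (|pdMulti γ (fun w => Real.exp (f w)) z| * |pdMulti (α - γ) f z|) := by
      refine le_trans (Finset.abs_sum_le_sum_abs _ _) ?_
      apply Finset.sum_le_sum
      intro γ hγ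
      rw [e5 γ hγ, abs_mul, abs_mul, Nat.abs_cast]
    have hden : (0:ℝ) < ((mfact α : ℕ) : ℝ) := by exact_mod_cast mfact_pos α
    refine le_trans (div_le_div_of_nonneg_right habs hden.le) ?_
    rw [Finset.sum_div]
    apply Finset.sum_le_sum
    intro γ hγ
    have hγle : γ ≤ β' := Finset.mem_Iic.mp hγ
    have hnat := mfact_key hβ'def hαi hγle
    have hreal : (mchoose β' γ : ℝ) * (((mfact γ : ℕ) : ℝ) * ((mfact (α - γ) : ℕ) : ℝ))
        ≤ ((mfact α : ℕ) : ℝ) := by exact_mod_cast hnat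
    have hpos2 : (0:ℝ) < ((mfact γ : ℕ) : ℝ) * ((mfact (α - γ) : ℕ) : ℝ) := by
      have := mfact_pos (n := n) γ
      have := mfact_pos (n := n) (α - γ)
      positivity
    rw [uu, uu, div_mul_div_comm, div_le_div_iff₀ hden hpos2]
    have h5 : (0:ℝ) ≤ |pdMulti γ (fun w => Real.exp (f w)) z| * |pdMulti (α - γ) f z| := by
      positivity
    calc (mchoose β' γ : ℝ) * (|pdMulti γ (fun w => Real.exp (f w)) z| * |pdMulti (α - γ) f z|)
          * (((mfact γ : ℕ) : ℝ) * ((mfact (α - γ) : ℕ) : ℝ))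
        = (|pdMulti γ (fun w => Real.exp (f w)) z| * |pdMulti (α - γ) f z|)
          * ((mchoose β' γ : ℝ) * (((mfact γ : ℕ) : ℝ) * ((mfact (α - γ) : ℕ) : ℝ))) := by
          ring
      _ ≤ (|pdMulti γ (fun w => Real.exp (f w)) z| * |pdMulti (α - γ) f z|)
          * ((mfact α : ℕ) : ℝ) := mul_le_mul_of_nonneg_left hreal h5
  refine le_trans step1 (Finset.sum_le_sum_of_subset_of_nonneg ?_ ?_)
  · intro γ hγ
    have hγle : γ ≤ β' := Finset.mem_Iic.mp hγ
    rw [Finset.mem_filter, Finset.mem_Iic]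
    constructor
    · exact le_trans hγle hβ'le
    · have := deg_mono hγle
      omega
  · intro γ _ _
    exact mul_nonneg (uu_nonneg _ _ _) (uu_nonneg _ _ _)

lemma mem_Iset_of_le {r0 : ℕ} {γ α : Fin n → ℕ} (h : γ ≤ α) (hα : α ∈ Iset n r0) :
    γ ∈ Iset n r0 := by
  rw [mem_Iset] at hα ⊢
  exact ⟨fun j => le_trans (h j) (hα.1 j), le_trans (deg_mono h) (hα.2)⟩

lemma double (r0 : ℕ) (hr0 : 1 ≤ r0) (f : F n) (hf : ContDiff ℝ (r0 : ℕ) f) (z : Fin n → ℝ)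
    (m : ℕ) (s : Finset (Fin n → ℕ)) (hs : s ⊆ Iset n r0)
    (h0 : ∀ α ∈ s, α ≠ (fun _ => 0) ∧ deg α ≤ m + 1) :
    ∑ α ∈ s, uu (fun w => Real.exp (f w)) z α
      ≤ (∑ γ ∈ (Iset n r0).filter (fun γ => deg γ ≤ m), uu (fun w => Real.exp (f w)) z γ)
        * ∑ δ ∈ (Iset n r0).filter (fun δ => δ ≠ fun _ => 0), uu f z δ := by
  set g : F n := fun w => Real.exp (f w) with hgdef
  have step1 : ∑ α ∈ s, uu g z α
      ≤ ∑ α ∈ s, ∑ γ ∈ (Finset.Iic α).filter (fun γ => deg γ < deg α),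
          uu g z γ * uu f z (α - γ) := by
    apply Finset.sum_le_sum
    intro α hα
    exact key r0 hr0 f hf z α (mem_Iset.mp (hs hα)).2 (h0 α hα).1
  refine le_trans step1 ?_
  rw [Finset.sum_sigma']
  rw [Finset.sum_mul_sum]
  set t := s.sigma (fun α => (Finset.Iic α).filter (fun γ => deg γ < deg α)) with htdef
  have hmem : ∀ p ∈ t, p.2 ≤ p.1 ∧ deg p.2 < deg p.1 ∧ p.1 ∈ s := by
    intro p hp
    rw [htdef, Finset.mem_sigma, Finset.mem_filter, Finset.mem_Iic] at hp
    exact ⟨hp.2.1, hp.2.2, hp.1⟩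
  have hinj : ∀ p ∈ t, ∀ q ∈ t,
      (p.2, p.1 - p.2) = (q.2, q.1 - q.2) → p = q := by
    intro p hp q hq heq
    obtain ⟨hp1, _, _⟩ := hmem p hp
    obtain ⟨hq1, _, _⟩ := hmem q hq
    have h1 : p.2 = q.2 := (Prod.mk.injEq _ _ _ _ ▸ heq).1
    have h2 : p.1 - p.2 = q.1 - q.2 := (Prod.mk.injEq _ _ _ _ ▸ heq).2
    have h3 : p.1 = q.1 := by
      funext j
      have e1 : p.1 j - p.2 j = q.1 j - q.2 j := by
        have := congrFun h2 j
        simpa [Pi.sub_apply] using this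
      have e2 : p.2 j = q.2 j := congrFun h1 j
      have e3 : p.2 j ≤ p.1 j := hp1 j
      have e4 : q.2 j ≤ q.1 j := hq1 j
      omega
    rcases p with ⟨p1, p2⟩
    rcases q with ⟨q1, q2⟩
    simp only at h1 h3
    simp [h1, h3]
  have himg : ∑ p ∈ t, uu g z p.2 * uu f z (p.1 - p.2)
      = ∑ q ∈ t.image (fun p => (p.2, p.1 - p.2)),
          uu g z q.1 * uu f z q.2 := by
    rw [Finset.sum_image hinj]
  rw [himg, ← Finset.sum_product']
  apply Finset.sum_le_sum_of_subset_of_nonneg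
  · intro q hq
    rw [Finset.mem_image] at hq
    obtain ⟨p, hp, hpq⟩ := hq
    obtain ⟨hp1, hp2, hp3⟩ := hmem p hp
    subst hpq
    have hαI : p.1 ∈ Iset n r0 := hs hp3
    have hdsub := deg_sub hp1
    apply Finset.mem_product.mpr
    constructor
    · show p.2 ∈ Finset.filter (fun γ => deg γ ≤ m) (Iset n r0)
      apply Finset.mem_filter.mpr
      refine ⟨mem_Iset_of_le hp1 hαI, ?_⟩
      have := (h0 p.1 hp3).2
      omega
    · show p.1 - p.2 ∈ Finset.filter (fun δ => δ ≠ fun _ => 0) (Iset n r0)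
      apply Finset.mem_filter.mpr
      constructor
      · apply mem_Iset_of_le (α := p.1) _ hαI
        rw [Pi.le_def]
        intro j
        simp only [Pi.sub_apply]
        omega
      · intro hc
        rw [hc] at hdsub
        have : deg (fun _ : Fin n => 0) = 0 := deg_eq_zero.mpr rfl
        omega
  · intro q _ _
    exact mul_nonneg (uu_nonneg _ _ _) (uu_nonneg _ _ _)

lemma pdMulti_sub_const {α : Fin n → ℕ} (hα0 : α ≠ fun _ => 0) (g : F n) (c : ℝ) :
    pdMulti α (fun w => g w - c) = pdMulti α g := by
  obtain ⟨i, hαi, hgt⟩ := exists_max_support α hα0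
  obtain ⟨β', hβ'def⟩ : ∃ β', β' = Function.update α i (α i - 1) := ⟨_, rfl⟩
  have hβ'i : β' i = α i - 1 := by rw [hβ'def, Function.update_self]
  have hβ'j : ∀ j, j ≠ i → β' j = α j := by
    intro j hj; rw [hβ'def, Function.update_of_ne hj]
  have hβ'gt : ∀ j, i < j → β' j = 0 := by
    intro j hj
    rw [hβ'j j (ne_of_gt hj)]
    exact hgt j hj
  have hb1 : 1 ≤ α i := Nat.pos_of_ne_zero hαi
  have hinc : inc i β' = α := by
    funext j
    by_cases hji : j = i
    · subst hji
      rw [inc, Function.update_self, hβ'i]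
      omega
    · rw [inc, Function.update_of_ne hji, hβ'j j hji]
  rw [← hinc, pdMulti_peel hβ'gt, pdMulti_peel hβ'gt, pd1_sub_const]

lemma filter_deg_zero (r0 : ℕ) :
    (Iset n r0).filter (fun α => deg α ≤ 0) = {fun _ => 0} := by
  ext α
  simp only [Finset.mem_filter, Finset.mem_singleton]
  constructor
  · rintro ⟨_, h⟩
    exact deg_eq_zero.mp (Nat.le_zero.mp h)
  · rintro rfl
    refine ⟨mem_Iset.mpr ⟨fun j => Nat.zero_le _, ?_⟩, ?_⟩
    · rw [deg_eq_zero.mpr rfl]; exact Nat.zero_le _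
    · rw [deg_eq_zero.mpr rfl]

lemma uu_zero_idx (g : F n) (z : Fin n → ℝ) : uu g z (fun _ => 0) = |g z| := by
  rw [uu, pdMulti_zero_idx]
  have : mfact (fun _ : Fin n => 0) = 1 := by simp [mfact]
  rw [this]
  simp

lemma P_bound (r0 : ℕ) (hr0 : 1 ≤ r0) (f : F n) (hf : ContDiff ℝ (r0 : ℕ) f) (z : Fin n → ℝ)
    (m : ℕ) :
    (∑ α ∈ (Iset n r0).filter (fun α => deg α ≤ m), uu (fun w => Real.exp (f w)) z α)
      ≤ Real.exp (f z)
        * (1 + ∑ δ ∈ (Iset n r0).filter (fun δ => δ ≠ fun _ => 0), uu f z δ) ^ m := by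
  set T' := ∑ δ ∈ (Iset n r0).filter (fun δ => δ ≠ fun _ => 0), uu f z δ with hT'def
  have hT'0 : 0 ≤ T' := Finset.sum_nonneg fun δ _ => uu_nonneg _ _ _
  induction m with
  | zero =>
    rw [filter_deg_zero, Finset.sum_singleton, uu_zero_idx, pow_zero, mul_one,
      abs_of_pos (Real.exp_pos _)]
  | succ m ih =>
    have hsplit : ((Iset n r0).filter (fun α => deg α ≤ m + 1)).filter (fun α => deg α ≤ m)
        = (Iset n r0).filter (fun α => deg α ≤ m) := by
      rw [Finset.filter_filter]
      apply Finset.filter_congr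
      intro α _
      constructor
      · intro h; exact h.2
      · intro h; exact ⟨by omega, h⟩
    have hsplit2 : ((Iset n r0).filter (fun α => deg α ≤ m + 1)).filter
          (fun α => ¬ deg α ≤ m)
        = (Iset n r0).filter (fun α => deg α = m + 1) := by
      rw [Finset.filter_filter]
      apply Finset.filter_congr
      intro α _
      constructor
      · intro h; omega
      · intro h; omega
    have hdecomp := Finset.sum_filter_add_sum_filter_not
      ((Iset n r0).filter (fun α => deg α ≤ m + 1)) (fun α => deg α ≤ m)
      (uu (fun w => Real.exp (f w)) z)
    rw [hsplit, hsplit2] at hdecomp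
    have hdb := double r0 hr0 f hf z m ((Iset n r0).filter (fun α => deg α = m + 1))
      (Finset.filter_subset _ _) ?_
    · rw [← hdecomp]
      have hstep : ∑ α ∈ (Iset n r0).filter (fun α => deg α ≤ m),
            uu (fun w => Real.exp (f w)) z α
          + ∑ α ∈ (Iset n r0).filter (fun α => deg α = m + 1),
            uu (fun w => Real.exp (f w)) z α
          ≤ (∑ α ∈ (Iset n r0).filter (fun α => deg α ≤ m),
              uu (fun w => Real.exp (f w)) z α) * (1 + T') := by
        rw [mul_one_add]
        exact add_le_add (le_refl _) hdb
      refine le_trans hstep ?_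
      rw [pow_succ]
      have h1T' : (0:ℝ) ≤ 1 + T' := by linarith
      calc (∑ α ∈ (Iset n r0).filter (fun α => deg α ≤ m),
              uu (fun w => Real.exp (f w)) z α) * (1 + T')
          ≤ (Real.exp (f z) * (1 + T') ^ m) * (1 + T') :=
            mul_le_mul_of_nonneg_right ih h1T'
        _ = Real.exp (f z) * ((1 + T') ^ m * (1 + T')) := by ring
    · intro α hα
      rw [Finset.mem_filter] at hα
      constructor
      · intro hc
        have : deg α = 0 := by rw [hc]; exact deg_eq_zero.mpr rfl
        omega
      · omega

lemma abs_exp_sub_one_le (x : ℝ) : |Real.exp x - 1| ≤ max (Real.exp x) 1 * |x| := by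
  rcases le_or_gt 0 x with hx | hx
  · have h1 : (1:ℝ) ≤ Real.exp x := Real.one_le_exp hx
    rw [abs_of_nonneg (by linarith), abs_of_nonneg hx]
    have h2 := Real.add_one_le_exp (-x)
    have h3 : Real.exp (-x) = (Real.exp x)⁻¹ := Real.exp_neg x
    have h4 : 0 < Real.exp x := Real.exp_pos x
    have h5 : Real.exp x - 1 ≤ x * Real.exp x := by
      rw [h3] at h2
      have := mul_le_mul_of_nonneg_right h2 h4.le
      rw [inv_mul_cancel₀ (ne_of_gt h4)] at this
      nlinarith
    refine le_trans h5 ?_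
    have h6 : Real.exp x ≤ max (Real.exp x) 1 := le_max_left _ _
    nlinarith [le_max_left (Real.exp x) 1]
  · have h1 : Real.exp x < 1 := by
      rw [← Real.exp_zero]
      exact Real.exp_lt_exp.mpr hx
    rw [abs_of_nonpos (by linarith), abs_of_neg hx]
    have h2 := Real.add_one_le_exp x
    have h3 : (1:ℝ) ≤ max (Real.exp x) 1 := le_max_right _ _
    nlinarith

end S1

/-- For every `f ∈ C^{r0}(ℝ^n, ℝ)` and every `z`:
`|e^f|_{T_z} ≤ e^{f(z)} (1 + |f|_{T_z})^{r0}` and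
`|e^f − 1|_{T_z} ≤ max(e^{f(z)}, 1) (1 + |f|_{T_z})^{r0} |f|_{T_z}`. -/
theorem stmt1 (n r0 : ℕ) (hn : 1 ≤ n) (hr0 : 1 ≤ r0) (f : (Fin n → ℝ) → ℝ)
    (hf : ContDiff ℝ r0 f) (z : Fin n → ℝ) :
    taylorNorm r0 (fun w => Real.exp (f w)) z
      ≤ Real.exp (f z) * (1 + taylorNorm r0 f z) ^ r0 ∧
    taylorNorm r0 (fun w => Real.exp (f w) - 1) z
      ≤ max (Real.exp (f z)) 1 * (1 + taylorNorm r0 f z) ^ r0 * taylorNorm r0 f z := by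
  classical
  open S1 in
  have hI : (S1.Iset n r0).filter (fun α => S1.deg α ≤ r0) = S1.Iset n r0 := by
    apply Finset.filter_true_of_mem
    intro α hα
    exact (S1.mem_Iset.mp hα).2
  set T' := ∑ δ ∈ (S1.Iset n r0).filter (fun δ => δ ≠ fun _ => 0), S1.uu f z δ with hT'def
  have hT'0 : 0 ≤ T' := Finset.sum_nonneg fun δ _ => S1.uu_nonneg _ _ _
  have hzeromem : (fun _ : Fin n => 0) ∈ S1.Iset n r0 := by
    rw [S1.mem_Iset]
    refine ⟨fun j => Nat.zero_le _, ?_⟩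
    rw [S1.deg_eq_zero.mpr rfl]
    exact Nat.zero_le _
  have hsplitg : ∀ h : S1.F n, ∑ α ∈ S1.Iset n r0, S1.uu h z α
      = S1.uu h z (fun _ => 0)
        + ∑ α ∈ (S1.Iset n r0).filter (fun α => α ≠ fun _ => 0), S1.uu h z α := by
    intro h
    have hd := Finset.sum_filter_add_sum_filter_not (S1.Iset n r0)
      (fun α => α = fun _ => 0) (S1.uu h z)
    have hf0 : (S1.Iset n r0).filter (fun α => α = fun _ => 0) = {fun _ => 0} := by
      ext α
      simp only [Finset.mem_filter, Finset.mem_singleton]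
      constructor
      · rintro ⟨_, hc⟩; exact hc
      · rintro rfl; exact ⟨hzeromem, rfl⟩
    rw [hf0, Finset.sum_singleton] at hd
    rw [← hd]
  have hTsplit : taylorNorm r0 f z = S1.uu f z (fun _ => 0) + T' := by
    rw [S1.taylorNorm_eq, hsplitg]
  set u0 := S1.uu f z (fun _ => 0) with hu0def
  have hu00 : 0 ≤ u0 := S1.uu_nonneg _ _ _
  set E := Real.exp (f z) with hEdef
  set M := max E 1 with hMdef
  set T := taylorNorm r0 f z with hTdef
  have hT0 : 0 ≤ T := by rw [hTsplit]; linarith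
  have hT'T : T' ≤ T := by rw [hTsplit]; linarith
  have hE0 : 0 < E := Real.exp_pos _
  have hEM : E ≤ M := le_max_left _ _
  have h1M : (1:ℝ) ≤ M := le_max_right _ _
  have hB1 : (1:ℝ) ≤ (1 + T) ^ r0 := one_le_pow₀ (by linarith)
  have hpowmono : (1 + T') ^ (r0 - 1) ≤ (1 + T) ^ r0 := by
    calc (1 + T') ^ (r0 - 1) ≤ (1 + T) ^ (r0 - 1) :=
          pow_le_pow_left₀ (by linarith) (by linarith) _
      _ ≤ (1 + T) ^ r0 := pow_le_pow_right₀ (by linarith) (Nat.sub_le _ _)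
  have hpowmono2 : (1 + T') ^ r0 ≤ (1 + T) ^ r0 :=
    pow_le_pow_left₀ (by linarith) (by linarith) _
  -- first statement
  have hP := S1.P_bound r0 hr0 f hf z r0
  rw [hI] at hP
  have hstmt1 : taylorNorm r0 (fun w => Real.exp (f w)) z ≤ E * (1 + T) ^ r0 := by
    rw [S1.taylorNorm_eq]
    refine le_trans hP ?_
    exact mul_le_mul_of_nonneg_left hpowmono2 hE0.le
  refine ⟨hstmt1, ?_⟩
  -- second statement
  have hP' := S1.P_bound r0 hr0 f hf z (r0 - 1)
  have hdb := S1.double r0 hr0 f hf z (r0 - 1)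
    ((S1.Iset n r0).filter (fun α => α ≠ fun _ => 0)) (Finset.filter_subset _ _) ?_
  swap
  · intro α hα
    rw [Finset.mem_filter] at hα
    refine ⟨hα.2, ?_⟩
    have := (S1.mem_Iset.mp hα.1).2
    omega
  have heq1 : taylorNorm r0 (fun w => Real.exp (f w) - 1) z
      = S1.uu (fun w => Real.exp (f w) - 1) z (fun _ => 0)
        + ∑ α ∈ (S1.Iset n r0).filter (fun α => α ≠ fun _ => 0),
            S1.uu (fun w => Real.exp (f w)) z α := by
    rw [S1.taylorNorm_eq, hsplitg]
    congr 1
    apply Finset.sum_congr rfl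
    intro α hα
    rw [Finset.mem_filter] at hα
    rw [S1.uu, S1.uu, S1.pdMulti_sub_const hα.2]
  have habs0 : S1.uu (fun w => Real.exp (f w) - 1) z (fun _ => 0) = |E - 1| := by
    rw [S1.uu_zero_idx]
  have hu0fz : u0 = |f z| := by rw [hu0def, S1.uu_zero_idx]
  have hQ : ∑ α ∈ (S1.Iset n r0).filter (fun α => α ≠ fun _ => 0),
        S1.uu (fun w => Real.exp (f w)) z α ≤ (E * (1 + T') ^ (r0 - 1)) * T' := by
    refine le_trans hdb ?_
    exact mul_le_mul_of_nonneg_right hP' hT'0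
  have hexp1 : |E - 1| ≤ M * u0 := by
    rw [hu0fz, hEdef, hMdef]
    exact S1.abs_exp_sub_one_le (f z)
  have hEB : E * (1 + T') ^ (r0 - 1) ≤ M * (1 + T) ^ r0 := by
    apply mul_le_mul hEM hpowmono ?_ (by linarith)
    positivity
  rw [heq1, habs0]
  have hQ2 : ∑ α ∈ (S1.Iset n r0).filter (fun α => α ≠ fun _ => 0),
      S1.uu (fun w => Real.exp (f w)) z α ≤ (M * (1 + T) ^ r0) * T' :=
    le_trans hQ (mul_le_mul_of_nonneg_right hEB hT'0)
  have hfin : M * u0 + (M * (1 + T) ^ r0) * T' ≤ M * (1 + T) ^ r0 * T := by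
    have hM0 : (0:ℝ) ≤ M := by linarith
    have h1 : M * u0 ≤ M * (1 + T) ^ r0 * u0 := by
      nlinarith [mul_nonneg (mul_nonneg hM0 hu00) (sub_nonneg.mpr hB1)]
    have h2 : M * (1 + T) ^ r0 * T = M * (1 + T) ^ r0 * u0 + M * (1 + T) ^ r0 * T' := by
      rw [hTsplit]; ring
    linarith
  linarith
end

section
/- Let O ⊆ ℝ^k be open, r0 ≥ 1 an integer, ζ ∈ (0,1), and let Q : ℝ^n → ℝ be a positive definite quadratic form. Let h : O × ℝ^n → ℝ satisfy: (i) for every multiindex α with |α| ≤ r0 the partial derivative ∂_z^α h exists and is continuous on O × ℝ^n; (ii) lim_{|z|→∞} e^{−(1−ζ)Q(z)/2} sup_{F∈O} |h(F,·)|_{T_z} = 0. Then for every F ∈ O and every sequence F_k → F in O: lim_{k→∞} sup_{z∈ℝ^n} e^{−(1−ζ)Q(z)/2} |h(F_k,·) − h(F,·)|_{T_z} = 0. If, moreover, for each i ∈ {1,…,k} the partial derivative h_i := ∂h/∂F_i exists on O × ℝ^n and conditions (i) and (ii) hold with h_i in place of h, then for every F ∈ O and every i: lim_{η→0} |η|^{−1}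 sup_{z∈ℝ^n} e^{−(1−ζ)Q(z)/2} |h(F+ηe_i,·) − h(F,·) − η·h_i(F,·)|_{T_z} = 0. -/
open scoped BigOperators

/-- Partial derivative in the coordinate direction `i` on `EuclideanSpace ℝ ι`. -/
noncomputable def epd {ι : Type} [Fintype ι] [DecidableEq ι] (i : ι)
    (f : EuclideanSpace ℝ ι → ℝ) : EuclideanSpace ℝ ι → ℝ :=
  fun z => fderiv ℝ f z (EuclideanSpace.single i 1)

/-- Iterated partial derivative in one coordinate direction. -/
noncomputable def epdPow {ι : Type} [Fintype ι] [DecidableEq ι] (i : ι) :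
    ℕ → (EuclideanSpace ℝ ι → ℝ) → EuclideanSpace ℝ ι → ℝ
  | 0, f => f
  | k + 1, f => epd i (epdPow i k f)

/-- Multiindex partial derivative `∂^α` on `EuclideanSpace ℝ ι`. -/
noncomputable def epdMulti {ι : Type} [Fintype ι] [DecidableEq ι] (α : ι → ℕ)
    (f : EuclideanSpace ℝ ι → ℝ) : EuclideanSpace ℝ ι → ℝ :=
  (Finset.univ : Finset ι).toList.foldr (fun i g => epdPow i (α i) g) f

/-- Multiindex factorial `α!`. -/
def emfact {ι : Type} [Fintype ι] (α : ι → ℕ) : ℕ := ∏ i, Nat.factorial (α i)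

/-- The quadratic form `z ↦ D²U(0)(z,z)`. -/
noncomputable def equad0 {ι : Type} [Fintype ι] (U : EuclideanSpace ℝ ι → ℝ)
    (z : EuclideanSpace ℝ ι) : ℝ :=
  fderiv ℝ (fderiv ℝ U) 0 z z

/-- Truncated Taylor norm `|f|_{T_z} = ∑_{|α| ≤ r0} |∂^α f(z)|/α!` on `EuclideanSpace ℝ ι`. -/
noncomputable def etaylorNorm {ι : Type} [Fintype ι] [DecidableEq ι] (r0 : ℕ)
    (f : EuclideanSpace ℝ ι → ℝ) (z : EuclideanSpace ℝ ι) : ℝ :=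
  ∑ α ∈ (Finset.Iic (fun _ : ι => r0)).filter (fun α => ∑ i, α i ≤ r0),
    |epdMulti α f z| / ((emfact α : ℕ) : ℝ)

/-- Conditions (i) and (ii) on a parameter-dependent family `h(F, ·)`:  existence and joint
continuity of the `z`-derivatives up to order `r0` on `O × ℝ^n`, and uniform decay of the
weighted Taylor norm as `|z| → ∞`. -/
def GoodFamily (k n r0 : ℕ) (ζ : ℝ) (O : Set (Fin k → ℝ))
    (Q : EuclideanSpace ℝ (Fin n) → ℝ)
    (h : (Fin k → ℝ) → EuclideanSpace ℝ (Fin n) → ℝ) : Prop :=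
  (∀ F ∈ O, ∀ α : Fin n → ℕ, (∑ i, α i) < r0 →
      ∀ z : EuclideanSpace ℝ (Fin n), DifferentiableAt ℝ (epdMulti α (h F)) z) ∧
  (∀ α : Fin n → ℕ, (∑ i, α i) ≤ r0 →
      ContinuousOn
        (fun p : (Fin k → ℝ) × EuclideanSpace ℝ (Fin n) => epdMulti α (h p.1) p.2)
        (O ×ˢ (Set.univ : Set (EuclideanSpace ℝ (Fin n))))) ∧
  (∀ ε : ℝ, 0 < ε → ∃ R : ℝ, ∀ z : EuclideanSpace ℝ (Fin n), R ≤ ‖z‖ → ∀ F ∈ O,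
      Real.exp (-((1 - ζ) * Q z) / 2) * etaylorNorm r0 (h F) z ≤ ε)

section Algebra
variable {ι : Type} [Fintype ι] [DecidableEq ι]

noncomputable def epdList (L : List ι) (α : ι → ℕ) (f : EuclideanSpace ℝ ι → ℝ) :
    EuclideanSpace ℝ ι → ℝ :=
  L.foldr (fun i g => epdPow i (α i) g) f

lemma epdMulti_eq_epdList (α : ι → ℕ) (f : EuclideanSpace ℝ ι → ℝ) :
    epdMulti α f = epdList (Finset.univ : Finset ι).toList α f := rfl

lemma epdList_nil (α : ι → ℕ) (f : EuclideanSpace ℝ ι → ℝ) : epdList [] α f = f := rfl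

lemma epdList_cons (i : ι) (L : List ι) (α : ι → ℕ) (f : EuclideanSpace ℝ ι → ℝ) :
    epdList (i :: L) α f = epdPow i (α i) (epdList L α f) := rfl

lemma epdList_append (P L : List ι) (α : ι → ℕ) (f : EuclideanSpace ℝ ι → ℝ) :
    epdList (P ++ L) α f = epdList P α (epdList L α f) := by
  simp [epdList, List.foldr_append]

lemma epdList_congr {L : List ι} {α β : ι → ℕ} (hc : ∀ j ∈ L, α j = β j)
    (f : EuclideanSpace ℝ ι → ℝ) : epdList L α f = epdList L β f := by
  induction L with
  | nil => rfl
  | cons i L ih =>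
    rw [epdList_cons, epdList_cons, hc i (by simp),
      ih (fun j hj => hc j (by simp [hj]))]

lemma epdList_zero {L : List ι} {α : ι → ℕ} (hc : ∀ j ∈ L, α j = 0)
    (f : EuclideanSpace ℝ ι → ℝ) : epdList L α f = f := by
  induction L with
  | nil => rfl
  | cons i L ih =>
    rw [epdList_cons, hc i (by simp), ih (fun j hj => hc j (by simp [hj]))]
    rfl

/-- Stage decomposition: a partial stage of the foldr is a genuine `epdMulti`. -/
lemma stage_eq_epdMulti (P : List ι) (i : ι) (L : List ι)
    (hPL : (Finset.univ : Finset ι).toList = P ++ i :: L) (α : ι → ℕ) (m : ℕ)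
    (f : EuclideanSpace ℝ ι → ℝ) :
    epdPow i m (epdList L α f)
      = epdMulti (fun j => if j = i then m else if j ∈ L then α j else 0) f := by
  have hnd : (P ++ i :: L).Nodup := hPL ▸ Finset.nodup_toList _
  have hiL : i ∉ L := by
    have := (List.nodup_append.1 hnd).2.1
    simp at this; exact this.1
  have hP : ∀ j ∈ P, j ∉ i :: L := fun j hj => by
    have := (List.nodup_append.1 hnd).2.2
    exact fun hm => this j hj j hm rfl
  set β : ι → ℕ := fun j => if j = i then m else if j ∈ L then α j else 0 with hβ
  rw [epdMulti_eq_epdList, hPL, epdList_append, epdList_cons]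
  have h1 : epdList L β f = epdList L α f := by
    refine epdList_congr (fun j hj => ?_) f
    have : j ≠ i := fun hji => hiL (hji ▸ hj)
    simp [hβ, this, hj]
  have h2 : β i = m := by simp [hβ]
  rw [h1, h2]
  refine (epdList_zero (L := P) (α := β) (fun j hj => ?_) _).symm
  have hji : j ≠ i := fun e => hP j hj (by simp [e])
  have hjL : j ∉ L := fun e => hP j hj (by simp [e])
  simp [hβ, hji, hjL]

lemma sum_stage_lt {P : List ι} {i : ι} {L : List ι}
    (hPL : (Finset.univ : Finset ι).toList = P ++ i :: L) {α : ι → ℕ} {m : ℕ}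
    (hm : m < α i) {r0 : ℕ} (hα : ∑ j, α j ≤ r0) :
    (∑ j, (fun j => if j = i then m else if j ∈ L then α j else 0) j) < r0 := by
  have hnd : (P ++ i :: L).Nodup := hPL ▸ Finset.nodup_toList _
  set β : ι → ℕ := fun j => if j = i then m else if j ∈ L then α j else 0 with hβ
  have hb : ∀ j, β j ≤ α j := by
    intro j
    by_cases hji : j = i
    · subst hji; simp [hβ]; omega
    · by_cases hjL : j ∈ L <;> simp [hβ, hji, hjL]
  have e1 : ∑ j ∈ Finset.univ.erase i, β j + β i = ∑ j, β j :=
    Finset.sum_erase_add _ _ (Finset.mem_univ i)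
  have e2 : ∑ j ∈ Finset.univ.erase i, α j + α i = ∑ j, α j :=
    Finset.sum_erase_add _ _ (Finset.mem_univ i)
  have e3 : ∑ j ∈ Finset.univ.erase i, β j ≤ ∑ j ∈ Finset.univ.erase i, α j :=
    Finset.sum_le_sum (fun j _ => hb j)
  have e4 : β i = m := by simp [hβ]
  calc ∑ j, β j = ∑ j ∈ Finset.univ.erase i, β j + β i := e1.symm
    _ ≤ ∑ j ∈ Finset.univ.erase i, α j + m := by rw [e4]; omega
    _ < ∑ j ∈ Finset.univ.erase i, α j + α i := by omega
    _ = ∑ j, α j := e2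
    _ ≤ r0 := hα

end Algebra
section Linear
variable {ι : Type} [Fintype ι] [DecidableEq ι]

lemma epd_sub {f g : EuclideanSpace ℝ ι → ℝ} (i : ι)
    (hf : ∀ z, DifferentiableAt ℝ f z) (hg : ∀ z, DifferentiableAt ℝ g z) :
    epd i (fun w => f w - g w) = fun z => epd i f z - epd i g z := by
  funext z
  simp only [epd]
  rw [fderiv_fun_sub (hf z) (hg z)]
  rfl

lemma epd_const_mul (c : ℝ) (i : ι) (f : EuclideanSpace ℝ ι → ℝ) :
    epd i (fun w => c * f w) = fun z => c * epd i f z := by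
  funext z
  by_cases hc : c = 0
  · subst hc; simp only [epd, zero_mul]
    rw [show (fun _ : EuclideanSpace ℝ ι => (0 : ℝ)) = (fun _ => (0:ℝ)) from rfl, fderiv_const_apply]
    simp
  by_cases hd : DifferentiableAt ℝ f z
  · simp only [epd]
    rw [fderiv_const_mul hd c]
    simp
  · have hd2 : ¬ DifferentiableAt ℝ (fun w => c * f w) z := by
      intro hcon
      have : DifferentiableAt ℝ (fun w => c⁻¹ * (c * f w)) z := hcon.const_mul _
      simp only [← mul_assoc, inv_mul_cancel₀ hc, one_mul] at this
      exact hd this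
    simp only [epd]
    rw [fderiv_zero_of_not_differentiableAt hd, fderiv_zero_of_not_differentiableAt hd2]
    simp

/-- All proper stages of `epdPow i m` applied to `f` are differentiable. -/
def PowStages (i : ι) : ℕ → (EuclideanSpace ℝ ι → ℝ) → Prop
  | 0, _ => True
  | m + 1, f => PowStages i m f ∧ ∀ z, DifferentiableAt ℝ (epdPow i m f) z

lemma epdPow_sub (i : ι) (m : ℕ) {f g : EuclideanSpace ℝ ι → ℝ}
    (hf : PowStages i m f) (hg : PowStages i m g) :
    epdPow i m (fun w => f w - g w) = fun z => epdPow i m f z - epdPow i m g z := by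
  induction m with
  | zero => rfl
  | succ m ih =>
    show epd i (epdPow i m fun w => f w - g w) = _
    rw [ih hf.1 hg.1, epd_sub i hf.2 hg.2]
    rfl

lemma epdPow_const_mul (c : ℝ) (i : ι) (m : ℕ) (f : EuclideanSpace ℝ ι → ℝ) :
    epdPow i m (fun w => c * f w) = fun z => c * epdPow i m f z := by
  induction m with
  | zero => rfl
  | succ m ih =>
    show epd i (epdPow i m fun w => c * f w) = _
    rw [ih, epd_const_mul c i]
    rfl

/-- All proper stages of the full foldr are differentiable. -/
def ListStages : List ι → (ι → ℕ) → (EuclideanSpace ℝ ι → ℝ) → Prop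
  | [], _, _ => True
  | i :: L, α, f => ListStages L α f ∧ PowStages i (α i) (epdList L α f)

lemma epdList_sub (L : List ι) (α : ι → ℕ) {f g : EuclideanSpace ℝ ι → ℝ}
    (hf : ListStages L α f) (hg : ListStages L α g) :
    epdList L α (fun w => f w - g w) = fun z => epdList L α f z - epdList L α g z := by
  induction L with
  | nil => rfl
  | cons i L ih =>
    rw [epdList_cons, ih hf.1 hg.1, epdPow_sub i (α i) hf.2 hg.2]
    rfl

lemma epdList_const_mul (c : ℝ) (L : List ι) (α : ι → ℕ) (f : EuclideanSpace ℝ ι → ℝ) :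
    epdList L α (fun w => c * f w) = fun z => c * epdList L α f z := by
  induction L with
  | nil => rfl
  | cons i L ih =>
    rw [epdList_cons, ih, epdPow_const_mul c i (α i)]
    rfl

/-- From differentiability of all `epdMulti β f` with `∑ β < r0`, get stagewise
differentiability along any suffix of `univ.toList`. -/
lemma listStages_of_forall {r0 : ℕ} {f : EuclideanSpace ℝ ι → ℝ}
    (H : ∀ β : ι → ℕ, (∑ j, β j) < r0 → ∀ z, DifferentiableAt ℝ (epdMulti β f) z)
    (α : ι → ℕ) (hα : ∑ j, α j ≤ r0) :
    ∀ L P : List ι, (Finset.univ : Finset ι).toList = P ++ L → ListStages L α f := by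
  intro L
  induction L with
  | nil => intro P _; trivial
  | cons i L ih =>
    intro P hPL
    have hPL' : (Finset.univ : Finset ι).toList = (P ++ [i]) ++ L := by
      rw [hPL, List.append_assoc]; rfl
    refine ⟨ih (P ++ [i]) hPL', ?_⟩
    -- PowStages i (α i) (epdList L α f)
    have key : ∀ m, m ≤ α i → PowStages i m (epdList L α f) := by
      intro m
      induction m with
      | zero => intro _; trivial
      | succ m ihm =>
        intro hm
        refine ⟨ihm (by omega), ?_⟩
        rw [stage_eq_epdMulti P i L hPL α m f]
        exact H _ (sum_stage_lt hPL (by omega) hα)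
    exact key (α i) le_rfl

lemma epdMulti_sub {r0 : ℕ} {f g : EuclideanSpace ℝ ι → ℝ}
    (Hf : ∀ β : ι → ℕ, (∑ j, β j) < r0 → ∀ z, DifferentiableAt ℝ (epdMulti β f) z)
    (Hg : ∀ β : ι → ℕ, (∑ j, β j) < r0 → ∀ z, DifferentiableAt ℝ (epdMulti β g) z)
    (α : ι → ℕ) (hα : ∑ j, α j ≤ r0) :
    epdMulti α (fun w => f w - g w) = fun z => epdMulti α f z - epdMulti α g z := by
  rw [epdMulti_eq_epdList, epdMulti_eq_epdList, epdMulti_eq_epdList]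
  exact epdList_sub _ α (listStages_of_forall Hf α hα _ [] rfl)
    (listStages_of_forall Hg α hα _ [] rfl)

lemma epdMulti_const_mul (c : ℝ) (α : ι → ℕ) (f : EuclideanSpace ℝ ι → ℝ) :
    epdMulti α (fun w => c * f w) = fun z => c * epdMulti α f z :=
  epdList_const_mul c _ α f

end Linear
section Norm
set_option linter.unusedSectionVars false
set_option linter.unusedVariables false
variable {ι : Type} [Fintype ι] [DecidableEq ι]

lemma emfact_pos (α : ι → ℕ) : 0 < emfact α :=
  Finset.prod_pos (fun i _ => Nat.factorial_pos (α i))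

lemma etaylorNorm_nonneg (r0 : ℕ) (f : EuclideanSpace ℝ ι → ℝ) (z : EuclideanSpace ℝ ι) :
    0 ≤ etaylorNorm r0 f z :=
  Finset.sum_nonneg fun α _ => div_nonneg (abs_nonneg _) (Nat.cast_nonneg _)

lemma term_le_etaylorNorm {r0 : ℕ} {α : ι → ℕ}
    (hmem : α ∈ (Finset.Iic (fun _ : ι => r0)).filter (fun α => ∑ i, α i ≤ r0))
    (f : EuclideanSpace ℝ ι → ℝ) (z : EuclideanSpace ℝ ι) :
    |epdMulti α f z| / ((emfact α : ℕ) : ℝ) ≤ etaylorNorm r0 f z :=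
  Finset.single_le_sum (f := fun β => |epdMulti β f z| / ((emfact β : ℕ) : ℝ))
    (fun β _ => div_nonneg (abs_nonneg _) (Nat.cast_nonneg _)) hmem

lemma abs_epdMulti_le {r0 : ℕ} {α : ι → ℕ}
    (hmem : α ∈ (Finset.Iic (fun _ : ι => r0)).filter (fun α => ∑ i, α i ≤ r0))
    (f : EuclideanSpace ℝ ι → ℝ) (z : EuclideanSpace ℝ ι) :
    |epdMulti α f z| ≤ ((emfact α : ℕ) : ℝ) * etaylorNorm r0 f z := by
  have h := term_le_etaylorNorm hmem f z
  have hp : (0:ℝ) < ((emfact α : ℕ) : ℝ) := by exact_mod_cast emfact_pos α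
  calc |epdMulti α f z| = ((emfact α : ℕ) : ℝ) * (|epdMulti α f z| / ((emfact α : ℕ) : ℝ)) := by
        field_simp
    _ ≤ ((emfact α : ℕ) : ℝ) * etaylorNorm r0 f z := by
        exact mul_le_mul_of_nonneg_left h (le_of_lt hp)

lemma etaylorNorm_sub_le {r0 : ℕ} {f g : EuclideanSpace ℝ ι → ℝ}
    (Hf : ∀ β : ι → ℕ, (∑ j, β j) < r0 → ∀ z, DifferentiableAt ℝ (epdMulti β f) z)
    (Hg : ∀ β : ι → ℕ, (∑ j, β j) < r0 → ∀ z, DifferentiableAt ℝ (epdMulti β g) z)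
    (z : EuclideanSpace ℝ ι) :
    etaylorNorm r0 (fun w => f w - g w) z ≤ etaylorNorm r0 f z + etaylorNorm r0 g z := by
  unfold etaylorNorm
  rw [← Finset.sum_add_distrib]
  refine Finset.sum_le_sum fun α hα => ?_
  have hs : ∑ j, α j ≤ r0 := (Finset.mem_filter.1 hα).2
  rw [epdMulti_sub Hf Hg α hs]
  rw [← add_div]
  have hp : (0:ℝ) < ((emfact α : ℕ) : ℝ) := by exact_mod_cast emfact_pos α
  gcongr
  exact abs_sub _ _

end Norm
section Part1

lemma weight_le_one {ζ : ℝ} (hζ1 : ζ < 1) {q : ℝ} (hq : 0 ≤ q) :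
    Real.exp (-((1 - ζ) * q) / 2) ≤ 1 := by
  rw [Real.exp_le_one_iff]
  nlinarith

lemma part1 (k n r0 : ℕ) (ζ : ℝ) (hζ1 : ζ < 1)
    (O : Set (Fin k → ℝ)) (hO : IsOpen O)
    (Q : EuclideanSpace ℝ (Fin n) → ℝ) (hQ0 : ∀ z, 0 ≤ Q z)
    (h : (Fin k → ℝ) → EuclideanSpace ℝ (Fin n) → ℝ)
    (hgood : GoodFamily k n r0 ζ O Q h) :
    ∀ F ∈ O, ∀ Fseq : ℕ → (Fin k → ℝ), (∀ j, Fseq j ∈ O) →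
        Filter.Tendsto Fseq Filter.atTop (nhds F) →
        ∀ ε : ℝ, 0 < ε → ∃ J : ℕ, ∀ j : ℕ, J ≤ j →
          ∀ z : EuclideanSpace ℝ (Fin n),
            Real.exp (-((1 - ζ) * Q z) / 2) *
                etaylorNorm r0 (fun w => h (Fseq j) w - h F w) z ≤ ε := by
  intro F hF Fseq hmem htend ε hε
  obtain ⟨R, hR⟩ := hgood.2.2 (ε/2) (by positivity)
  set S := (Finset.Iic (fun _ : Fin n => r0)).filter (fun α => ∑ i, α i ≤ r0) with hS
  obtain ⟨ρ, hρpos, hρball⟩ : ∃ ρ > 0, Metric.closedBall F ρ ⊆ O := by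
    obtain ⟨ρ, hρ, hb⟩ := Metric.isOpen_iff.1 hO F hF
    exact ⟨ρ/2, by linarith, (Metric.closedBall_subset_ball (by linarith)).trans hb⟩
  set R' := max R 0 with hR'
  set K := Metric.closedBall F ρ ×ˢ Metric.closedBall (0 : EuclideanSpace ℝ (Fin n)) R' with hK
  have hKc : IsCompact K := (isCompact_closedBall _ _).prod (isCompact_closedBall _ _)
  have hKsub : K ⊆ O ×ˢ Set.univ := Set.prod_mono hρball (Set.subset_univ _)
  set ε' := ε / (S.card + 1) with hε'
  have hε'pos : 0 < ε' := by positivity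
  have hev : ∀ α ∈ S, ∀ᶠ j in Filter.atTop, ∀ z : EuclideanSpace ℝ (Fin n), ‖z‖ ≤ R' →
      |epdMulti α (h (Fseq j)) z - epdMulti α (h F) z| ≤ ε' := by
    intro α hα
    have hcont := (hgood.2.1 α (Finset.mem_filter.1 hα).2).mono hKsub
    have hUC := hKc.uniformContinuousOn_of_continuous hcont
    rw [Metric.uniformContinuousOn_iff] at hUC
    obtain ⟨δ, hδpos, hδ⟩ := hUC ε' hε'pos
    have h1 : ∀ᶠ j in Filter.atTop, dist (Fseq j) F < min δ ρ :=
      htend (Metric.ball_mem_nhds F (by positivity))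
    filter_upwards [h1] with j hj z hz
    have hzK : z ∈ Metric.closedBall (0 : EuclideanSpace ℝ (Fin n)) R' := by
      simpa [Metric.mem_closedBall, dist_zero_right] using hz
    have hFjK : (Fseq j, z) ∈ K :=
      ⟨Metric.mem_closedBall.2 (le_of_lt (lt_of_lt_of_le hj (min_le_right _ _))), hzK⟩
    have hFK : (F, z) ∈ K := ⟨Metric.mem_closedBall.2 (by simp [hρpos.le]), hzK⟩
    have hdist : dist ((Fseq j, z) : (Fin k → ℝ) × EuclideanSpace ℝ (Fin n)) (F, z) < δ := by
      rw [Prod.dist_eq]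
      simp only [dist_self]
      exact max_lt (lt_of_lt_of_le hj (min_le_left _ _)) hδpos
    have := hδ _ hFjK _ hFK hdist
    rw [Real.dist_eq] at this
    exact this.le
  rw [← Filter.eventually_all_finset S] at hev
  obtain ⟨J1, hJ1⟩ := Filter.eventually_atTop.1 hev
  obtain ⟨J2, hJ2⟩ := Filter.eventually_atTop.1 (htend (Metric.closedBall_mem_nhds F hρpos))
  refine ⟨max J1 J2, fun j hj z => ?_⟩
  have hj1 : J1 ≤ j := le_trans (le_max_left _ _) hj
  have hwt0 : (0:ℝ) ≤ Real.exp (-((1 - ζ) * Q z) / 2) := (Real.exp_pos _).le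
  have hwt1 : Real.exp (-((1 - ζ) * Q z) / 2) ≤ 1 := weight_le_one hζ1 (hQ0 z)
  rcases le_or_gt R ‖z‖ with hfar | hnear
  · -- far field
    have hsub := etaylorNorm_sub_le (r0 := r0)
      (hgood.1 (Fseq j) (hmem j)) (hgood.1 F hF) z
    calc Real.exp (-((1 - ζ) * Q z) / 2) * etaylorNorm r0 (fun w => h (Fseq j) w - h F w) z
        ≤ Real.exp (-((1 - ζ) * Q z) / 2) *
            (etaylorNorm r0 (h (Fseq j)) z + etaylorNorm r0 (h F) z) := by
          exact mul_le_mul_of_nonneg_left hsub hwt0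
      _ = Real.exp (-((1 - ζ) * Q z) / 2) * etaylorNorm r0 (h (Fseq j)) z +
            Real.exp (-((1 - ζ) * Q z) / 2) * etaylorNorm r0 (h F) z := by ring
      _ ≤ ε/2 + ε/2 := add_le_add (hR z hfar (Fseq j) (hmem j)) (hR z hfar F hF)
      _ = ε := by ring
  · -- near field
    have hzR' : ‖z‖ ≤ R' := le_trans hnear.le (le_max_left _ _)
    have hbound : etaylorNorm r0 (fun w => h (Fseq j) w - h F w) z ≤ S.card * ε' := by
      unfold etaylorNorm
      rw [← hS]
      calc (∑ α ∈ S, |epdMulti α (fun w => h (Fseq j) w - h F w) z| / ((emfact α : ℕ) : ℝ))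
          ≤ ∑ α ∈ S, ε' := by
            refine Finset.sum_le_sum fun α hα => ?_
            have heq := epdMulti_sub (hgood.1 (Fseq j) (hmem j)) (hgood.1 F hF) α
              (Finset.mem_filter.1 hα).2
            rw [heq]
            have h1 : |epdMulti α (h (Fseq j)) z - epdMulti α (h F) z| ≤ ε' :=
              hJ1 j hj1 α hα z hzR'
            have hfpos : (1:ℝ) ≤ ((emfact α : ℕ) : ℝ) := by
              exact_mod_cast Nat.one_le_iff_ne_zero.2 (emfact_pos α).ne'
            calc |epdMulti α (h (Fseq j)) z - epdMulti α (h F) z| / ((emfact α : ℕ) : ℝ)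
                ≤ |epdMulti α (h (Fseq j)) z - epdMulti α (h F) z| / 1 := by
                  gcongr
              _ ≤ ε' := by rwa [div_one]
        _ = S.card * ε' := by rw [Finset.sum_const, nsmul_eq_mul]
    calc Real.exp (-((1 - ζ) * Q z) / 2) * etaylorNorm r0 (fun w => h (Fseq j) w - h F w) z
        ≤ 1 * (S.card * ε') := by
          exact mul_le_mul hwt1 hbound (etaylorNorm_nonneg _ _ _) zero_le_one
      _ = S.card * (ε / (S.card + 1)) := by rw [one_mul, hε']
      _ ≤ ε := by
          rw [div_eq_inv_mul, ← mul_assoc]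
          have : (S.card : ℝ) * ((S.card : ℝ) + 1)⁻¹ ≤ 1 := by
            rw [mul_inv_le_iff₀ (by positivity)]
            linarith
          nlinarith
end Part1
section Swap

open MeasureTheory intervalIntegral

lemma line_hasDerivAt {E : Type*} [NormedAddCommGroup E] [NormedSpace ℝ E]
    (z v : E) (x : ℝ) : HasDerivAt (fun s : ℝ => z + s • v) v x := by
  simpa using ((hasDerivAt_id x).smul_const v).const_add z

/-- Differentiation under the interval integral, in one coordinate direction. -/
lemma epd_integral_swap {n : ℕ} (φ : ℝ → EuclideanSpace ℝ (Fin n) → ℝ) (η : ℝ) (j : Fin n)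
    (hdiff : ∀ t ∈ Set.uIcc (0:ℝ) η, ∀ w, DifferentiableAt ℝ (φ t) w)
    (hcont0 : ContinuousOn (fun p : ℝ × EuclideanSpace ℝ (Fin n) => φ p.1 p.2)
      (Set.uIcc (0:ℝ) η ×ˢ Set.univ))
    (hcont1 : ContinuousOn (fun p : ℝ × EuclideanSpace ℝ (Fin n) => epd j (φ p.1) p.2)
      (Set.uIcc (0:ℝ) η ×ˢ Set.univ))
    (u : EuclideanSpace ℝ (Fin n) → ℝ)
    (hu : u = fun z => ∫ t in (0:ℝ)..η, φ t z)
    (hud : ∀ z, DifferentiableAt ℝ u z)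
    (z : EuclideanSpace ℝ (Fin n)) :
    epd j u z = ∫ t in (0:ℝ)..η, epd j (φ t) z := by
  set v : EuclideanSpace ℝ (Fin n) := EuclideanSpace.single j 1 with hv
  -- continuity of slices
  have hmapsTo : ∀ x : ℝ, Set.MapsTo (fun t : ℝ => (t, z + x • v))
      (Set.uIcc (0:ℝ) η) (Set.uIcc (0:ℝ) η ×ˢ Set.univ) :=
    fun x t ht => ⟨ht, trivial⟩
  have hslice0 : ∀ x : ℝ, ContinuousOn (fun t => φ t (z + x • v)) (Set.uIcc (0:ℝ) η) := by
    intro x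
    exact hcont0.comp ((continuous_id.prodMk continuous_const).continuousOn) (hmapsTo x)
  have hslice1 : ∀ x : ℝ, ContinuousOn (fun t => epd j (φ t) (z + x • v)) (Set.uIcc (0:ℝ) η) := by
    intro x
    exact hcont1.comp ((continuous_id.prodMk continuous_const).continuousOn) (hmapsTo x)
  -- bound via compactness
  set K : Set (ℝ × EuclideanSpace ℝ (Fin n)) :=
    Set.uIcc (0:ℝ) η ×ˢ Metric.closedBall z (1 + ‖v‖) with hKdef
  have hKc : IsCompact K := isCompact_uIcc.prod (isCompact_closedBall _ _)
  obtain ⟨C, hC⟩ := hKc.exists_bound_of_continuousOn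
    (hcont1.mono (Set.prod_mono subset_rfl (Set.subset_univ _)))
  -- the dominated derivative theorem
  have key := intervalIntegral.hasDerivAt_integral_of_dominated_loc_of_deriv_le
    (μ := MeasureTheory.volume) (F := fun x t => φ t (z + x • v))
    (F' := fun x t => epd j (φ t) (z + x • v)) (x₀ := (0:ℝ))
    (bound := fun _ => C) (a := 0) (b := η) (s := Metric.ball 0 1) (Metric.ball_mem_nhds 0 one_pos)
    (Filter.Eventually.of_forall fun x =>
      ((hslice0 x).mono Set.uIoc_subset_uIcc).aestronglyMeasurable measurableSet_uIoc)
    (((hslice0 0)).intervalIntegrable)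
    (((hslice1 0).mono Set.uIoc_subset_uIcc).aestronglyMeasurable measurableSet_uIoc)
    (Filter.Eventually.of_forall fun t ht x hx => by
      have hmem : (t, z + x • v) ∈ K := by
        refine ⟨Set.uIoc_subset_uIcc ht, ?_⟩
        rw [Metric.mem_closedBall]
        have : dist (z + x • v) z = ‖x • v‖ := by
          rw [dist_eq_norm]; simp
        rw [this]
        calc ‖x • v‖ = |x| * ‖v‖ := by rw [norm_smul, Real.norm_eq_abs]
          _ ≤ 1 * ‖v‖ := by
              have : |x| < 1 := by simpa [Real.dist_eq] using hx
              exact mul_le_mul_of_nonneg_right this.le (norm_nonneg _)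
          _ ≤ 1 + ‖v‖ := by linarith [norm_nonneg v]
      exact hC _ hmem)
    intervalIntegrable_const
    (Filter.Eventually.of_forall fun t ht x hx => by
      have hd := hdiff t (Set.uIoc_subset_uIcc ht) (z + x • v)
      have hline := line_hasDerivAt z v x
      have := hd.hasFDerivAt.comp_hasDerivAt x hline
      simpa [epd, hv, Function.comp_def] using this)
  obtain ⟨-, hkey⟩ := key
  simp only [zero_smul, add_zero] at hkey
  -- derivative of `u` along the line
  have hu' : HasDerivAt (fun x : ℝ => u (z + x • v)) (fderiv ℝ u z v) 0 := by
    have h0 : HasFDerivAt u (fderiv ℝ u z) (z + (0:ℝ) • v) := by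
      simpa using (hud z).hasFDerivAt
    have := h0.comp_hasDerivAt (0:ℝ) (line_hasDerivAt z v 0)
    simpa [Function.comp_def] using this
  have heq : (fun x : ℝ => u (z + x • v)) = fun x => ∫ t in (0:ℝ)..η, φ t (z + x • v) := by
    funext x; rw [hu]
  rw [heq] at hu'
  have := hu'.unique hkey
  rw [epd, ← hv, this]

end Swap
section Integral
open MeasureTheory intervalIntegral

lemma sum_stage_le {ι : Type} [Fintype ι] [DecidableEq ι] {i : ι} {L : List ι}
    {α : ι → ℕ} {m : ℕ} (hm : m ≤ α i) {r0 : ℕ} (hα : ∑ j, α j ≤ r0) :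
    (∑ j, (fun j => if j = i then m else if j ∈ L then α j else 0) j) ≤ r0 := by
  refine le_trans (Finset.sum_le_sum (fun j _ => ?_)) hα
  by_cases hji : j = i
  · subst hji; simp [hm]
  · by_cases hjL : j ∈ L <;> simp [hji, hjL]

lemma epdMulti_zero_index {ι : Type} [Fintype ι] [DecidableEq ι]
    (f : EuclideanSpace ℝ ι → ℝ) : epdMulti (fun _ => 0) f = f :=
  epdList_zero (fun _ _ => rfl) f

lemma stage_integral (k n r0 : ℕ) (ζ : ℝ) (O : Set (Fin k → ℝ))
    (Q : EuclideanSpace ℝ (Fin n) → ℝ)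
    (h g : (Fin k → ℝ) → EuclideanSpace ℝ (Fin n) → ℝ)
    (hgood : GoodFamily k n r0 ζ O Q h) (hgoodg : GoodFamily k n r0 ζ O Q g)
    (F e : Fin k → ℝ) (η : ℝ)
    (hseg : ∀ t ∈ Set.uIcc (0:ℝ) η, F + t • e ∈ O)
    (hderiv : ∀ t ∈ Set.uIcc (0:ℝ) η, ∀ z,
      HasDerivAt (fun s : ℝ => h (F + s • e) z) (g (F + t • e) z) t)
    (α : Fin n → ℕ) (hα : ∑ j, α j ≤ r0) :
    epdMulti α (fun w => h (F + η • e) w - h F w)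
      = fun z => ∫ t in (0:ℝ)..η, epdMulti α (g (F + t • e)) z := by
  have hF0 : F ∈ O := by simpa using hseg 0 Set.left_mem_uIcc
  have hFη : F + η • e ∈ O := hseg η Set.right_mem_uIcc
  set D : EuclideanSpace ℝ (Fin n) → ℝ := fun w => h (F + η • e) w - h F w with hD
  -- joint continuity of parametrized multiderivatives of g
  have hcontβ : ∀ β : Fin n → ℕ, (∑ j, β j) ≤ r0 →
      ContinuousOn (fun p : ℝ × EuclideanSpace ℝ (Fin n) => epdMulti β (g (F + p.1 • e)) p.2)
        (Set.uIcc (0:ℝ) η ×ˢ Set.univ) := by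
    intro β hβ
    exact ContinuousOn.comp
      (f := fun p : ℝ × EuclideanSpace ℝ (Fin n) =>
        ((F + p.1 • e, p.2) : (Fin k → ℝ) × EuclideanSpace ℝ (Fin n)))
      (g := fun q : (Fin k → ℝ) × EuclideanSpace ℝ (Fin n) => epdMulti β (g q.1) q.2)
      (t := O ×ˢ (Set.univ : Set (EuclideanSpace ℝ (Fin n))))
      (hgoodg.2.1 β hβ)
      (((continuous_const.add (continuous_fst.smul continuous_const)).prodMk
        continuous_snd).continuousOn)
      (fun p hp => ⟨hseg p.1 hp.1, trivial⟩)
  have main : ∀ L P : List (Fin n), (Finset.univ : Finset (Fin n)).toList = P ++ L →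
      epdList L α D = fun z => ∫ t in (0:ℝ)..η, epdList L α (g (F + t • e)) z := by
    intro L
    induction L with
    | nil =>
      intro P hPL
      funext z
      rw [epdList_nil]
      simp only [epdList_nil]
      have hslice : ContinuousOn (fun t => g (F + t • e) z) (Set.uIcc (0:ℝ) η) := by
        have hmap : ContinuousOn (fun t : ℝ => ((t, z) : ℝ × EuclideanSpace ℝ (Fin n)))
            (Set.uIcc (0:ℝ) η) := (continuous_id.prodMk continuous_const).continuousOn
        have := (hcontβ (fun _ => 0) (by simp)).comp hmap (fun t ht => ⟨ht, trivial⟩)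
        simpa [epdMulti_zero_index, Function.comp_def] using this
      have hInt : IntervalIntegrable (fun t => g (F + t • e) z) volume 0 η :=
        hslice.intervalIntegrable
      have hFTC := intervalIntegral.integral_eq_sub_of_hasDerivAt
        (f := fun t => h (F + t • e) z) (fun t ht => hderiv t ht z) hInt
      rw [hFTC]
      simp [hD]
    | cons i L ih =>
      intro P hPL
      have hPL' : (Finset.univ : Finset (Fin n)).toList = (P ++ [i]) ++ L := by
        rw [hPL, List.append_assoc]; rfl
      have hIH := ih (P ++ [i]) hPL'
      have inner : ∀ m, m ≤ α i →
          epdPow i m (epdList L α D)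
            = fun z => ∫ t in (0:ℝ)..η, epdPow i m (epdList L α (g (F + t • e))) z := by
        intro m
        induction m with
        | zero => intro _; exact hIH
        | succ m ihm =>
          intro hm
          have hIHm := ihm (by omega)
          set β : Fin n → ℕ := fun j => if j = i then m else if j ∈ L then α j else 0 with hβ
          set β' : Fin n → ℕ := fun j => if j = i then m+1 else if j ∈ L then α j else 0
            with hβ'
          have hstage : ∀ f, epdPow i m (epdList L α f) = epdMulti β f :=
            fun f => stage_eq_epdMulti P i L hPL α m f
          have hstage' : ∀ f, epdPow i (m+1) (epdList L α f) = epdMulti β' f :=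
            fun f => stage_eq_epdMulti P i L hPL α (m+1) f
          have hsumβ : (∑ j, β j) < r0 := sum_stage_lt hPL (by omega) hα
          have hsumβ' : (∑ j, β' j) ≤ r0 := sum_stage_le (by omega) hα
          have hud : ∀ z, DifferentiableAt ℝ (epdPow i m (epdList L α D)) z := by
            intro z
            rw [hstage, hD, epdMulti_sub (hgood.1 _ hFη) (hgood.1 _ hF0) β hsumβ.le]
            exact (hgood.1 _ hFη β hsumβ z).sub (hgood.1 _ hF0 β hsumβ z)
          have hdiffφ : ∀ t ∈ Set.uIcc (0:ℝ) η, ∀ w,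
              DifferentiableAt ℝ (epdPow i m (epdList L α (g (F + t • e)))) w := by
            intro t ht w
            rw [hstage]
            exact hgoodg.1 _ (hseg t ht) β hsumβ w
          have hcont0 : ContinuousOn
              (fun p : ℝ × EuclideanSpace ℝ (Fin n) =>
                epdPow i m (epdList L α (g (F + p.1 • e))) p.2)
              (Set.uIcc (0:ℝ) η ×ˢ Set.univ) := by
            have heq : (fun p : ℝ × EuclideanSpace ℝ (Fin n) =>
                epdPow i m (epdList L α (g (F + p.1 • e))) p.2)
                = fun p => epdMulti β (g (F + p.1 • e)) p.2 := by
              funext p; rw [hstage]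
            rw [heq]; exact hcontβ β hsumβ.le
          have hcont1 : ContinuousOn
              (fun p : ℝ × EuclideanSpace ℝ (Fin n) =>
                epd i (epdPow i m (epdList L α (g (F + p.1 • e)))) p.2)
              (Set.uIcc (0:ℝ) η ×ˢ Set.univ) := by
            have heq : (fun p : ℝ × EuclideanSpace ℝ (Fin n) =>
                epd i (epdPow i m (epdList L α (g (F + p.1 • e)))) p.2)
                = fun p => epdMulti β' (g (F + p.1 • e)) p.2 := by
              funext p
              rw [show epd i (epdPow i m (epdList L α (g (F + p.1 • e))))
                  = epdPow i (m+1) (epdList L α (g (F + p.1 • e))) from rfl, hstage']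
            rw [heq]; exact hcontβ β' hsumβ'
          funext z
          have hswap := epd_integral_swap
            (fun t => epdPow i m (epdList L α (g (F + t • e)))) η i
            hdiffφ hcont0 hcont1 (epdPow i m (epdList L α D)) hIHm hud z
          exact hswap
      simp only [epdList_cons]
      exact inner (α i) le_rfl
  rw [epdMulti_eq_epdList]
  simp only [epdMulti_eq_epdList]
  exact main (Finset.univ : Finset (Fin n)).toList [] rfl

end Integral
section Part2
open MeasureTheory intervalIntegral

lemma unweight {x A ε : ℝ} (h : Real.exp (-x) * A ≤ ε) : A ≤ ε * Real.exp x := by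
  have hx : Real.exp (-x) > 0 := Real.exp_pos _
  have h1 := mul_le_mul_of_nonneg_right h (Real.exp_pos x).le
  have h2 : Real.exp (-x) * A * Real.exp x = A := by
    rw [mul_comm (Real.exp (-x)) A, mul_assoc, ← Real.exp_add, neg_add_cancel,
      Real.exp_zero, mul_one]
  linarith

lemma abs_le_abs_of_mem_uIcc {t η : ℝ} (ht : t ∈ Set.uIcc (0:ℝ) η) : |t| ≤ |η| := by
  rcases Set.mem_uIcc.1 ht with ⟨h1, h2⟩ | ⟨h1, h2⟩
  · rw [abs_of_nonneg h1]; exact le_trans h2 (le_abs_self η)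
  · rw [abs_of_nonpos h2]; exact le_trans (neg_le_neg h1) (neg_le_abs η)

lemma norm_pi_single_one {k : ℕ} (i : Fin k) : ‖(Pi.single i 1 : Fin k → ℝ)‖ ≤ 1 := by
  refine (pi_norm_le_iff_of_nonneg zero_le_one).2 fun j => ?_
  by_cases hji : j = i
  · subst hji; simp
  · simp [Pi.single_apply, hji]

lemma part2 (k n r0 : ℕ) (ζ : ℝ) (hζ1 : ζ < 1)
    (O : Set (Fin k → ℝ)) (hO : IsOpen O)
    (Q : EuclideanSpace ℝ (Fin n) → ℝ) (hQ0 : ∀ z, 0 ≤ Q z)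
    (h : (Fin k → ℝ) → EuclideanSpace ℝ (Fin n) → ℝ)
    (hgood : GoodFamily k n r0 ζ O Q h)
    (hi : Fin k → (Fin k → ℝ) → EuclideanSpace ℝ (Fin n) → ℝ)
    (hider : ∀ i : Fin k, ∀ F ∈ O, ∀ z : EuclideanSpace ℝ (Fin n),
      HasDerivAt (fun t : ℝ => h (F + t • (Pi.single i 1 : Fin k → ℝ)) z) (hi i F z) 0)
    (hgoodi : ∀ i : Fin k, GoodFamily k n r0 ζ O Q (hi i)) :
    ∀ F ∈ O, ∀ i : Fin k, ∀ ε : ℝ, 0 < ε → ∃ δ : ℝ, 0 < δ ∧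
      ∀ η : ℝ, η ≠ 0 → |η| < δ →
        ∀ z : EuclideanSpace ℝ (Fin n),
          Real.exp (-((1 - ζ) * Q z) / 2) *
              etaylorNorm r0
                (fun w => h (F + η • (Pi.single i 1 : Fin k → ℝ)) w - h F w - η * hi i F w) z
            ≤ ε * |η| := by
  intro F hF i ε hε
  set e : Fin k → ℝ := Pi.single i 1 with he
  set g := hi i with hg
  have hgoodg := hgoodi i
  set S := (Finset.Iic (fun _ : Fin n => r0)).filter (fun α => ∑ j, α j ≤ r0) with hS
  obtain ⟨ρ, hρpos, hρball⟩ : ∃ ρ > 0, Metric.closedBall F ρ ⊆ O := by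
    obtain ⟨ρ', hρ', hb⟩ := Metric.isOpen_iff.1 hO F hF
    exact ⟨ρ'/2, by linarith, (Metric.closedBall_subset_ball (by linarith)).trans hb⟩
  -- segments stay in O
  have hseg : ∀ η : ℝ, |η| ≤ ρ → ∀ t ∈ Set.uIcc (0:ℝ) η, F + t • e ∈ O := by
    intro η hη t ht
    refine hρball ?_
    rw [Metric.mem_closedBall, dist_eq_norm]
    have : F + t • e - F = t • e := by abel
    rw [this, norm_smul, Real.norm_eq_abs]
    calc |t| * ‖e‖ ≤ |t| * 1 := by
          exact mul_le_mul_of_nonneg_left (norm_pi_single_one i) (abs_nonneg t)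
      _ ≤ ρ := by rw [mul_one]; exact le_trans (abs_le_abs_of_mem_uIcc ht) hη
  -- the derivative along the parameter line, at every point of the segment
  have hder : ∀ η : ℝ, |η| ≤ ρ → ∀ t ∈ Set.uIcc (0:ℝ) η, ∀ z,
      HasDerivAt (fun s : ℝ => h (F + s • e) z) (g (F + t • e) z) t := by
    intro η hη t ht z
    have h0 := hider i (F + t • e) (hseg η hη t ht) z
    have h0' : HasDerivAt (fun s : ℝ => h (F + t • e + s • e) z) (g (F + t • e) z)
        ((fun s : ℝ => s - t) t) := by
      show HasDerivAt _ _ (t - t)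
      rw [sub_self]
      simpa [hg] using h0
    have hlin : HasDerivAt (fun s : ℝ => s - t) 1 t := (hasDerivAt_id t).sub_const t
    have hcomp := HasDerivAt.comp (h := fun s : ℝ => s - t)
      (h₂ := fun s : ℝ => h (F + t • e + s • e) z) t h0' hlin
    have hfun : (fun s : ℝ => h (F + t • e + s • e) z) ∘ (fun s : ℝ => s - t)
        = fun s : ℝ => h (F + s • e) z := by
      funext s
      show h (F + t • e + (s - t) • e) z = h (F + s • e) z
      congr 1
      rw [sub_smul]; abel
    rw [hfun, mul_one] at hcomp
    exact hcomp
  -- decay for the derivative family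
  set ε1 := ε / (2 * (S.card + 1)) with hε1
  have hε1pos : 0 < ε1 := by positivity
  obtain ⟨R, hR⟩ := hgoodg.2.2 ε1 hε1pos
  set R' := max R 0 with hR'
  set K := Metric.closedBall F ρ ×ˢ Metric.closedBall (0 : EuclideanSpace ℝ (Fin n)) R' with hK
  have hKc : IsCompact K := (isCompact_closedBall _ _).prod (isCompact_closedBall _ _)
  have hKsub : K ⊆ O ×ˢ Set.univ := Set.prod_mono hρball (Set.subset_univ _)
  -- uniform continuity of all derivatives of g jointly, as a map into a finite product
  set Φ : (Fin k → ℝ) × EuclideanSpace ℝ (Fin n) → ({ x // x ∈ S } → ℝ) :=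
    fun p a => epdMulti a.1 (g p.1) p.2 with hΦ
  have hΦcont : ContinuousOn Φ K := by
    rw [continuousOn_pi]
    intro a
    exact ((hgoodg.2.1 a.1 (Finset.mem_filter.1 a.2).2).mono hKsub)
  have hUC := hKc.uniformContinuousOn_of_continuous hΦcont
  rw [Metric.uniformContinuousOn_iff] at hUC
  obtain ⟨δ0, hδ0pos, hδ0⟩ := hUC ε1 hε1pos
  refine ⟨min δ0 ρ, lt_min hδ0pos hρpos, ?_⟩
  intro η hη0 hηδ z
  have hηρ : |η| ≤ ρ := le_of_lt (lt_of_lt_of_le hηδ (min_le_right _ _))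
  have hηδ0 : |η| < δ0 := lt_of_lt_of_le hηδ (min_le_left _ _)
  have hsegη := hseg η hηρ
  have hFη : F + η • e ∈ O := hsegη η Set.right_mem_uIcc
  -- the main integral identity
  have hkey := fun (α : Fin n → ℕ) (hα : ∑ j, α j ≤ r0) =>
    stage_integral k n r0 ζ O Q h g hgood hgoodg F e η hsegη (hder η hηρ) α hα
  -- stage differentiability of the difference and of the scaled derivative
  have HD : ∀ β : Fin n → ℕ, (∑ j, β j) < r0 → ∀ w,
      DifferentiableAt ℝ (epdMulti β (fun w => h (F + η • e) w - h F w)) w := by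
    intro β hβ w
    rw [epdMulti_sub (hgood.1 _ hFη) (hgood.1 _ hF) β hβ.le]
    exact (hgood.1 _ hFη β hβ w).sub (hgood.1 _ hF β hβ w)
  have HG : ∀ β : Fin n → ℕ, (∑ j, β j) < r0 → ∀ w,
      DifferentiableAt ℝ (epdMulti β (fun w => η * g F w)) w := by
    intro β hβ w
    rw [epdMulti_const_mul η β (g F)]
    exact (hgoodg.1 F hF β hβ w).const_mul η
  -- slice continuity and integrability
  have hslice : ∀ α : Fin n → ℕ, (∑ j, α j) ≤ r0 →
      ContinuousOn (fun t => epdMulti α (g (F + t • e)) z) (Set.uIcc (0:ℝ) η) := by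
    intro α hα
    exact ContinuousOn.comp
      (f := fun t : ℝ => ((F + t • e, z) : (Fin k → ℝ) × EuclideanSpace ℝ (Fin n)))
      (g := fun q : (Fin k → ℝ) × EuclideanSpace ℝ (Fin n) => epdMulti α (g q.1) q.2)
      (t := O ×ˢ (Set.univ : Set (EuclideanSpace ℝ (Fin n))))
      (hgoodg.2.1 α hα)
      (((continuous_const.add (continuous_id.smul continuous_const)).prodMk
        continuous_const).continuousOn)
      (fun t ht => ⟨hsegη t ht, trivial⟩)
  -- expression of each derivative of Δ as an integral
  have hΔ : ∀ α : Fin n → ℕ, (∑ j, α j) ≤ r0 →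
      epdMulti α (fun w => h (F + η • e) w - h F w - η * g F w) z
        = ∫ t in (0:ℝ)..η, (epdMulti α (g (F + t • e)) z - epdMulti α (g F) z) := by
    intro α hα
    have hsplit := epdMulti_sub (r0 := r0) HD HG α hα
    have h1 : epdMulti α (fun w => h (F + η • e) w - h F w - η * g F w) z
        = epdMulti α (fun w => h (F + η • e) w - h F w) z - η * epdMulti α (g F) z := by
      have := congrFun hsplit z
      rw [show (fun w => h (F + η • e) w - h F w - η * g F w)
          = (fun w => (fun w => h (F + η • e) w - h F w) w - (fun w => η * g F w) w)
          from rfl] at this ⊢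
      rw [this, epdMulti_const_mul η α (g F)]
    rw [h1, congrFun (hkey α hα) z]
    rw [intervalIntegral.integral_sub ((hslice α hα).intervalIntegrable)
      intervalIntegrable_const]
    congr 1
    rw [intervalIntegral.integral_const]
    simp [smul_eq_mul]
  -- weight facts
  set X := ((1 - ζ) * Q z) / 2 with hX
  have hwt : Real.exp (-((1 - ζ) * Q z) / 2) = Real.exp (-X) := by rw [hX, neg_div]
  have hX0 : 0 ≤ X := by
    have := hQ0 z
    rw [hX]
    nlinarith
  rcases le_or_gt R ‖z‖ with hfar | hnear
  · -- far field
    have hbound : ∀ α ∈ S, |epdMulti α (fun w => h (F + η • e) w - h F w - η * g F w) z|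
        / ((emfact α : ℕ) : ℝ) ≤ 2 * ε1 * Real.exp X * |η| := by
      intro α hαS
      have hα : ∑ j, α j ≤ r0 := (Finset.mem_filter.1 hαS).2
      have hCb : ∀ t ∈ Set.uIoc (0:ℝ) η,
          ‖epdMulti α (g (F + t • e)) z - epdMulti α (g F) z‖
            ≤ ((emfact α : ℕ) : ℝ) * (2 * ε1 * Real.exp X) := by
        intro t ht
        have ht' : t ∈ Set.uIcc (0:ℝ) η := Set.uIoc_subset_uIcc ht
        have hb1 : etaylorNorm r0 (g (F + t • e)) z ≤ ε1 * Real.exp X := by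
          refine unweight ?_
          have := hR z hfar _ (hsegη t ht')
          rwa [hwt] at this
        have hb2 : etaylorNorm r0 (g F) z ≤ ε1 * Real.exp X := by
          refine unweight ?_
          have := hR z hfar F hF
          rwa [hwt] at this
        rw [Real.norm_eq_abs]
        calc |epdMulti α (g (F + t • e)) z - epdMulti α (g F) z|
            ≤ |epdMulti α (g (F + t • e)) z| + |epdMulti α (g F) z| := abs_sub _ _
          _ ≤ ((emfact α : ℕ) : ℝ) * etaylorNorm r0 (g (F + t • e)) z
              + ((emfact α : ℕ) : ℝ) * etaylorNorm r0 (g F) z :=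
              add_le_add (abs_epdMulti_le hαS _ z) (abs_epdMulti_le hαS _ z)
          _ ≤ ((emfact α : ℕ) : ℝ) * (ε1 * Real.exp X)
              + ((emfact α : ℕ) : ℝ) * (ε1 * Real.exp X) := by
              have hfp : (0:ℝ) ≤ ((emfact α : ℕ) : ℝ) := Nat.cast_nonneg _
              exact add_le_add (mul_le_mul_of_nonneg_left hb1 hfp)
                (mul_le_mul_of_nonneg_left hb2 hfp)
          _ = ((emfact α : ℕ) : ℝ) * (2 * ε1 * Real.exp X) := by ring
      have hint := intervalIntegral.norm_integral_le_of_norm_le_const hCb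
      rw [hΔ α hα]
      rw [Real.norm_eq_abs, sub_zero] at hint
      have hfp : (0:ℝ) < ((emfact α : ℕ) : ℝ) := by exact_mod_cast emfact_pos α
      rw [div_le_iff₀ hfp]
      calc |∫ t in (0:ℝ)..η, (epdMulti α (g (F + t • e)) z - epdMulti α (g F) z)|
          ≤ ((emfact α : ℕ) : ℝ) * (2 * ε1 * Real.exp X) * |η| := hint
        _ = 2 * ε1 * Real.exp X * |η| * ((emfact α : ℕ) : ℝ) := by ring
    have hsum : etaylorNorm r0 (fun w => h (F + η • e) w - h F w - η * g F w) z
        ≤ S.card * (2 * ε1 * Real.exp X * |η|) := by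
      unfold etaylorNorm
      rw [← hS]
      calc (∑ α ∈ S, |epdMulti α (fun w => h (F + η • e) w - h F w - η * g F w) z|
            / ((emfact α : ℕ) : ℝ))
          ≤ ∑ _α ∈ S, 2 * ε1 * Real.exp X * |η| :=
            Finset.sum_le_sum fun α hα => hbound α hα
        _ = S.card * (2 * ε1 * Real.exp X * |η|) := by
            rw [Finset.sum_const, nsmul_eq_mul]
    rw [hwt]
    calc Real.exp (-X) * etaylorNorm r0 (fun w => h (F + η • e) w - h F w - η * g F w) z
        ≤ Real.exp (-X) * (S.card * (2 * ε1 * Real.exp X * |η|)) :=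
          mul_le_mul_of_nonneg_left hsum (Real.exp_pos _).le
      _ = S.card * 2 * ε1 * (Real.exp (-X) * Real.exp X) * |η| := by ring
      _ = S.card * 2 * ε1 * |η| := by rw [← Real.exp_add, neg_add_cancel, Real.exp_zero, mul_one]
      _ ≤ ε * |η| := by
          have hc : (S.card : ℝ) * 2 * ε1 ≤ ε := by
            rw [hε1]
            rw [div_eq_inv_mul, ← mul_assoc]
            have h1 : (S.card : ℝ) * 2 * (2 * ((S.card : ℝ) + 1))⁻¹ ≤ 1 := by
              rw [mul_inv_le_iff₀ (by positivity)]
              nlinarith [Nat.cast_nonneg (α := ℝ) S.card]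
            nlinarith
          exact mul_le_mul_of_nonneg_right hc (abs_nonneg _)
  · -- near field
    have hzR' : z ∈ Metric.closedBall (0 : EuclideanSpace ℝ (Fin n)) R' := by
      rw [Metric.mem_closedBall, dist_zero_right]
      exact le_trans hnear.le (le_max_left _ _)
    have hbound : ∀ α ∈ S, |epdMulti α (fun w => h (F + η • e) w - h F w - η * g F w) z|
        / ((emfact α : ℕ) : ℝ) ≤ ε1 * |η| := by
      intro α hαS
      have hα : ∑ j, α j ≤ r0 := (Finset.mem_filter.1 hαS).2
      have hCb : ∀ t ∈ Set.uIoc (0:ℝ) η,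
          ‖epdMulti α (g (F + t • e)) z - epdMulti α (g F) z‖ ≤ ε1 := by
        intro t ht
        have ht' : t ∈ Set.uIcc (0:ℝ) η := Set.uIoc_subset_uIcc ht
        have hp : ((F + t • e, z) : (Fin k → ℝ) × EuclideanSpace ℝ (Fin n)) ∈ K := by
          refine ⟨?_, hzR'⟩
          rw [Metric.mem_closedBall, dist_eq_norm]
          have : F + t • e - F = t • e := by abel
          rw [this, norm_smul, Real.norm_eq_abs]
          calc |t| * ‖e‖ ≤ |t| * 1 :=
                mul_le_mul_of_nonneg_left (norm_pi_single_one i) (abs_nonneg t)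
            _ ≤ ρ := by rw [mul_one]; exact le_trans (abs_le_abs_of_mem_uIcc ht') hηρ
        have hq : ((F, z) : (Fin k → ℝ) × EuclideanSpace ℝ (Fin n)) ∈ K :=
          ⟨Metric.mem_closedBall.2 (by simp [hρpos.le]), hzR'⟩
        have hdist : dist ((F + t • e, z) : (Fin k → ℝ) × EuclideanSpace ℝ (Fin n)) (F, z)
            < δ0 := by
          rw [Prod.dist_eq]
          simp only [dist_self]
          refine max_lt ?_ hδ0pos
          rw [dist_eq_norm]
          have : F + t • e - F = t • e := by abel
          rw [this, norm_smul, Real.norm_eq_abs]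
          calc |t| * ‖e‖ ≤ |t| * 1 :=
                mul_le_mul_of_nonneg_left (norm_pi_single_one i) (abs_nonneg t)
            _ = |t| := mul_one _
            _ ≤ |η| := abs_le_abs_of_mem_uIcc ht'
            _ < δ0 := hηδ0
        have hd := hδ0 _ hp _ hq hdist
        have := dist_le_pi_dist (Φ (F + t • e, z)) (Φ (F, z)) ⟨α, hαS⟩
        rw [Real.dist_eq] at this
        rw [Real.norm_eq_abs]
        calc |epdMulti α (g (F + t • e)) z - epdMulti α (g F) z|
            = |Φ (F + t • e, z) ⟨α, hαS⟩ - Φ (F, z) ⟨α, hαS⟩| := rfl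
          _ ≤ dist (Φ (F + t • e, z)) (Φ (F, z)) := this
          _ ≤ ε1 := (hd).le
      have hint := intervalIntegral.norm_integral_le_of_norm_le_const hCb
      rw [Real.norm_eq_abs, sub_zero] at hint
      rw [hΔ α hα]
      have hfp : (1:ℝ) ≤ ((emfact α : ℕ) : ℝ) := by
        exact_mod_cast Nat.one_le_iff_ne_zero.2 (emfact_pos α).ne'
      calc |∫ t in (0:ℝ)..η, (epdMulti α (g (F + t • e)) z - epdMulti α (g F) z)|
            / ((emfact α : ℕ) : ℝ)
          ≤ |∫ t in (0:ℝ)..η, (epdMulti α (g (F + t • e)) z - epdMulti α (g F) z)| / 1 := by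
            gcongr
        _ ≤ ε1 * |η| := by rw [div_one]; exact hint
    have hsum : etaylorNorm r0 (fun w => h (F + η • e) w - h F w - η * g F w) z
        ≤ S.card * (ε1 * |η|) := by
      unfold etaylorNorm
      rw [← hS]
      calc (∑ α ∈ S, |epdMulti α (fun w => h (F + η • e) w - h F w - η * g F w) z|
            / ((emfact α : ℕ) : ℝ))
          ≤ ∑ _α ∈ S, ε1 * |η| := Finset.sum_le_sum fun α hα => hbound α hα
        _ = S.card * (ε1 * |η|) := by rw [Finset.sum_const, nsmul_eq_mul]
    have hwt1 : Real.exp (-((1 - ζ) * Q z) / 2) ≤ 1 := weight_le_one hζ1 (hQ0 z)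
    calc Real.exp (-((1 - ζ) * Q z) / 2) *
          etaylorNorm r0 (fun w => h (F + η • e) w - h F w - η * g F w) z
        ≤ 1 * (S.card * (ε1 * |η|)) :=
          mul_le_mul hwt1 hsum (etaylorNorm_nonneg _ _ _) zero_le_one
      _ = S.card * ε1 * |η| := by ring
      _ ≤ ε * |η| := by
          refine mul_le_mul_of_nonneg_right ?_ (abs_nonneg _)
          rw [hε1, div_eq_inv_mul, ← mul_assoc]
          have h1 : (S.card : ℝ) * (2 * ((S.card : ℝ) + 1))⁻¹ ≤ 1 := by
            rw [mul_inv_le_iff₀ (by positivity)]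
            nlinarith [Nat.cast_nonneg (α := ℝ) S.card]
          nlinarith

end Part2

/-- Continuity, and differentiability, in the parameter `F` of `F ↦ h(F,·)` in the weighted
Taylor-norm topology, given conditions (i) and (ii) for `h` and for its partial derivatives. -/
theorem stmt6 (k n r0 : ℕ) (hn : 1 ≤ n) (hr0 : 1 ≤ r0) (ζ : ℝ)
    (hζ0 : 0 < ζ) (hζ1 : ζ < 1)
    (O : Set (Fin k → ℝ)) (hO : IsOpen O)
    (Q : EuclideanSpace ℝ (Fin n) → ℝ)
    (B : EuclideanSpace ℝ (Fin n) →ₗ[ℝ] EuclideanSpace ℝ (Fin n) →ₗ[ℝ] ℝ)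
    (hBsymm : ∀ z w, B z w = B w z) (hQB : ∀ z, Q z = B z z)
    (hQpos : ∀ z : EuclideanSpace ℝ (Fin n), z ≠ 0 → 0 < Q z)
    (h : (Fin k → ℝ) → EuclideanSpace ℝ (Fin n) → ℝ)
    (hgood : GoodFamily k n r0 ζ O Q h) :
    (∀ F ∈ O, ∀ Fseq : ℕ → (Fin k → ℝ), (∀ j, Fseq j ∈ O) →
        Filter.Tendsto Fseq Filter.atTop (nhds F) →
        ∀ ε : ℝ, 0 < ε → ∃ J : ℕ, ∀ j : ℕ, J ≤ j →
          ∀ z : EuclideanSpace ℝ (Fin n),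
            Real.exp (-((1 - ζ) * Q z) / 2) *
                etaylorNorm r0 (fun w => h (Fseq j) w - h F w) z ≤ ε) ∧
    (∀ hi : Fin k → (Fin k → ℝ) → EuclideanSpace ℝ (Fin n) → ℝ,
        (∀ i : Fin k, ∀ F ∈ O, ∀ z : EuclideanSpace ℝ (Fin n),
          HasDerivAt (fun t : ℝ => h (F + t • (Pi.single i 1 : Fin k → ℝ)) z) (hi i F z) 0) →
        (∀ i : Fin k, GoodFamily k n r0 ζ O Q (hi i)) →
        ∀ F ∈ O, ∀ i : Fin k, ∀ ε : ℝ, 0 < ε → ∃ δ : ℝ, 0 < δ ∧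
          ∀ η : ℝ, η ≠ 0 → |η| < δ →
            ∀ z : EuclideanSpace ℝ (Fin n),
              Real.exp (-((1 - ζ) * Q z) / 2) *
                  etaylorNorm r0
                    (fun w => h (F + η • (Pi.single i 1 : Fin k → ℝ)) w - h F w - η * hi i F w) z
                ≤ ε * |η|) := by
  have hQ0 : ∀ z : EuclideanSpace ℝ (Fin n), 0 ≤ Q z := by
    intro z
    by_cases hz : z = 0
    · subst hz; rw [hQB]; simp
    · exact (hQpos z hz).le
  constructor
  · exact part1 k n r0 ζ hζ1 O hO Q hQ0 h hgood
  · intro hi hider hgoodi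
    exact part2 k n r0 ζ hζ1 O hO Q hQ0 h hgood hi hider hgoodi
end

section
/- Let A ⊂ ℤ^d be finite and let 𝒩 : (ℝ^d)^A → ℝ be a discrete null Lagrangian which is invariant under constant shifts (𝒩(ψ + a) = 𝒩(ψ) for every ψ ∈ (ℝ^d)^A and every constant a ∈ ℝ^d) and bounded on bounded subsets of (ℝ^d)^A. Let F : ℝ^d → ℝ^d be linear and let P ≥ 1 be an integer with 8·sup_{y∈A}|y|_∞ ≤ P. Then for every P-periodic function φ : ℤ^d → ℝ^d (i.e. φ(x + P e_i) = φ(x) for all x and i): Σ_{x ∈ {0,…,P−1}^d} 𝒩((F+φ)_{τ_x(A)}) = P^d · 𝒩(F|_A), where (F+φ)_{τ_x(A)} ∈ (ℝ^d)^A is the function y ↦ F(x+y) + φ(x+y) and F|_A is the restriction of F to A. -/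
open scoped BigOperators

/-- The set `Λ_A = {x ∈ ℤ^d : (x + A) ∩ Λ ≠ ∅}` as a finset. -/
def LambdaA {d : ℕ} (A Λ : Finset (Fin d → ℤ)) : Finset (Fin d → ℤ) :=
  Λ.biUnion fun l => A.image fun a => l - a

/-- `𝒩 : (ℝ^m)^A → ℝ` is a discrete null Lagrangian if for every finite `Λ ⊂ ℤ^d` and all
`φ, φ̃ : ℤ^d → ℝ^m` agreeing outside `Λ`, the sums of `𝒩` over translates indexed by `Λ_A`
agree. -/
def IsDiscreteNullLagrangian {d m : ℕ} (A : Finset (Fin d → ℤ))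
    (N : (↥A → (Fin m → ℝ)) → ℝ) : Prop :=
  ∀ (Λ : Finset (Fin d → ℤ)) (φ φ' : (Fin d → ℤ) → (Fin m → ℝ)),
    (∀ x, x ∉ Λ → φ x = φ' x) →
    ∑ x ∈ LambdaA A Λ, N (fun y => φ (x + ↑y)) = ∑ x ∈ LambdaA A Λ, N (fun y => φ' (x + ↑y))

private lemma single_period' {d P : ℕ} {α : Type*} (φ : (Fin d → ℤ) → α)
    (hper : ∀ x, ∀ i : Fin d, φ (x + Pi.single i (P : ℤ)) = φ x) :
    ∀ (n : ℤ) (x : Fin d → ℤ) (i : Fin d), φ (x + Pi.single i ((P : ℤ) * n)) = φ x := by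
  intro n
  induction n using Int.induction_on with
  | zero => intro x i; simp
  | succ n ih =>
      intro x i
      have : (P : ℤ) * (n + 1) = (P : ℤ) * n + P := by ring
      rw [this, Pi.single_add, ← add_assoc]
      rw [show x + Pi.single i ((P:ℤ)*n) + Pi.single i (P:ℤ)
          = (x + Pi.single i ((P:ℤ)*n)) + Pi.single i (P:ℤ) from rfl,
        hper, ih]
  | pred n ih =>
      intro x i
      have h1 : φ ((x + Pi.single i ((P:ℤ) * (-n - 1))) + Pi.single i (P:ℤ))
          = φ (x + Pi.single i ((P:ℤ) * (-n - 1))) := hper _ i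
      have h2 : (x + Pi.single i ((P:ℤ) * (-n - 1))) + Pi.single i (P:ℤ)
          = x + Pi.single i ((P:ℤ) * (-n)) := by
        rw [add_assoc, ← Pi.single_add]; ring_nf
      rw [h2] at h1
      rw [← h1, ih]

private lemma multi_period' {d P : ℕ} {α : Type*} (φ : (Fin d → ℤ) → α)
    (hper : ∀ x, ∀ i : Fin d, φ (x + Pi.single i (P : ℤ)) = φ x) :
    ∀ (m x : Fin d → ℤ), φ (x + fun j => (P : ℤ) * m j) = φ x := by
  have hs : ∀ s : Finset (Fin d), ∀ (m x : Fin d → ℤ),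
      φ (x + fun j => if j ∈ s then (P : ℤ) * m j else 0) = φ x := by
    intro s
    induction s using Finset.induction_on with
    | empty => intro m x; simp only [Finset.notMem_empty, if_false]; exact congrArg φ (by funext j; simp)
    | insert i s hnotmem ih =>
        intro m x
        have hfun : (fun j => if j ∈ insert i s then (P : ℤ) * m j else 0)
            = (fun j => if j ∈ s then (P : ℤ) * m j else 0) + Pi.single i ((P:ℤ) * m i) := by
          funext j
          by_cases hj : j = i
          · subst hj; simp [hnotmem]
          · simp [Pi.single_apply, hj, Finset.mem_insert]
        rw [hfun, ← add_assoc, single_period' φ hper, ih]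
  intro m x
  have := hs Finset.univ m x
  simpa using this

private lemma sum_box' {d : ℕ} (n : ℕ) (hn : 1 ≤ n) (f : (Fin d → ℤ) → ℝ) :
    ∑ x ∈ Finset.Icc (0 : Fin d → ℤ) (fun _ => (n : ℤ) - 1), f x
      = ∑ x : Fin d → Fin n, f (fun j => (x j : ℤ)) := by
  have key : ∀ x ∈ Finset.Icc (0 : Fin d → ℤ) (fun _ => (n : ℤ) - 1),
      (fun j => (((⟨min (x j).toNat (n-1), by omega⟩ : Fin n)) : ℤ)) = x := by
    intro x hx
    rw [Finset.mem_Icc] at hx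
    funext j
    have h1 := hx.1 j
    have h2 : x j ≤ (n:ℤ)-1 := hx.2 j
    simp only [Pi.zero_apply] at h1
    simp only [Fin.val_mk]
    omega
  refine Finset.sum_nbij' (fun x => fun j => (⟨min (x j).toNat (n-1), by omega⟩ : Fin n))
    (fun x => fun j => ((x j : ℤ))) (fun x hx => Finset.mem_univ _) ?_ key ?_ ?_
  · intro x _
    rw [Finset.mem_Icc]
    constructor <;> intro j <;> simp only [Pi.zero_apply] <;> [positivity; skip]
    have := (x j).isLt
    omega
  · intro x _
    funext j
    ext
    have := (x j).isLt
    simp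
    omega
  · intro x hx
    exact (congrArg f (key x hx)).symm

private def boxEquiv (d k P : ℕ) : ((Fin d → Fin k) × (Fin d → Fin P)) ≃ (Fin d → Fin (k * P)) :=
  (Equiv.arrowProdEquivProdArrow (Fin d) (fun _ => Fin k) (fun _ => Fin P)).symm.trans
    (Equiv.piCongrRight fun _ => finProdFinEquiv)

private lemma periodic_box_sum {d P : ℕ} (k : ℕ) (f : (Fin d → ℤ) → ℝ)
    (hper : ∀ (m x : Fin d → ℤ), f (x + fun j => (P : ℤ) * m j) = f x) :
    ∑ x : Fin d → Fin (k * P), f (fun j => (x j : ℤ))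
      = (k : ℝ) ^ d * ∑ x : Fin d → Fin P, f (fun j => (x j : ℤ)) := by
  set e := boxEquiv d k P with he
  rw [← Equiv.sum_comp e (fun x => f (fun j => (x j : ℤ)))]
  rw [Fintype.sum_prod_type]
  have key : ∀ (m : Fin d → Fin k) (r : Fin d → Fin P),
      f (fun j => ((e (m, r)) j : ℤ)) = f (fun j => (r j : ℤ)) := by
    intro m r
    have hco : (fun j => ((e (m, r)) j : ℤ))
        = (fun j => ((r j : ℤ))) + fun j => (P:ℤ) * ((m j : ℕ) : ℤ) := by
      funext j
      have : (e (m, r)) j = finProdFinEquiv (m j, r j) := by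
        simp [he, boxEquiv, Equiv.arrowProdEquivProdArrow]
      rw [this]
      have hv : ((finProdFinEquiv (m j, r j) : Fin (k * P)) : ℕ) = r j + P * m j := rfl
      simp only [Pi.add_apply]
      push_cast [hv]
      ring
    rw [hco, hper]
  simp_rw [key]
  rw [Finset.sum_const, Finset.card_univ]
  simp [nsmul_eq_mul, Fintype.card_fun]

/-- A shift-invariant discrete null Lagrangian which is bounded on bounded sets sums, over a
period box, to `P^d 𝒩(F|_A)` on periodic perturbations of a linear map `F`. -/
theorem stmt7 (d : ℕ) (hd : 1 ≤ d) (A : Finset (Fin d → ℤ))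
    (N : (↥A → (Fin d → ℝ)) → ℝ)
    (hNL : IsDiscreteNullLagrangian A N)
    (hshift : ∀ (ψ : ↥A → Fin d → ℝ) (a : Fin d → ℝ), N (fun y => ψ y + a) = N ψ)
    (hbdd : ∀ r : ℝ, ∃ M : ℝ, ∀ ψ : ↥A → Fin d → ℝ, (∀ y s, |ψ y s| ≤ r) → |N ψ| ≤ M)
    (F : (Fin d → ℝ) →ₗ[ℝ] (Fin d → ℝ))
    (P : ℕ) (hP : 1 ≤ P)
    (hPA : ∀ y ∈ A, ∀ j, 8 * (y j).natAbs ≤ P)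
    (φ : (Fin d → ℤ) → (Fin d → ℝ))
    (hper : ∀ x, ∀ i : Fin d, φ (x + Pi.single i (P : ℤ)) = φ x) :
    ∑ x : Fin d → Fin P, N (fun y : ↥A =>
        F (fun j => (((x j : ℤ) + (y : Fin d → ℤ) j : ℤ) : ℝ)) +
          φ ((fun j => (x j : ℤ)) + ↑y))
      = (P : ℝ) ^ d * N (fun y : ↥A => F (fun j => (((y : Fin d → ℤ) j : ℝ)))) := by
  classical
  rcases A.eq_empty_or_nonempty with hAe | hA
  · subst hAe
    have hsub : ∀ (ψ ψ' : (↥(∅ : Finset (Fin d → ℤ)) → Fin d → ℝ)), ψ = ψ' := by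
      intro ψ ψ'; funext y; exact absurd y.2 (Finset.notMem_empty _)
    calc ∑ x : Fin d → Fin P, N (fun y : ↥(∅ : Finset (Fin d → ℤ)) =>
            F (fun j => (((x j : ℤ) + (y : Fin d → ℤ) j : ℤ) : ℝ)) +
              φ ((fun j => (x j : ℤ)) + ↑y))
        = ∑ _x : Fin d → Fin P, N (fun y : ↥(∅ : Finset (Fin d → ℤ)) =>
            F (fun j => (((y : Fin d → ℤ) j : ℝ)))) :=
          Finset.sum_congr rfl (fun x _ => congrArg N (hsub _ _))
      _ = (P : ℝ) ^ d * N (fun y : ↥(∅ : Finset (Fin d → ℤ)) =>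
            F (fun j => (((y : Fin d → ℤ) j : ℝ)))) := by
          rw [Finset.sum_const, Finset.card_univ]
          simp [Fintype.card_fun, nsmul_eq_mul]
  obtain ⟨a₀, ha₀⟩ := hA
  have key : ∀ (x : Fin d → ℤ) (g : (Fin d → ℤ) → Fin d → ℝ),
      N (fun y : ↥A => F (fun j => ((x j + (y : Fin d → ℤ) j : ℤ) : ℝ)) + g (x + ↑y))
      = N (fun y : ↥A => F (fun j => (((y : Fin d → ℤ) j : ℤ) : ℝ)) + g (x + ↑y)) := by
    intro x g
    have hfun : (fun y : ↥A => F (fun j => ((x j + (y : Fin d → ℤ) j : ℤ) : ℝ)) + g (x + ↑y))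
        = fun y : ↥A => (fun y : ↥A => F (fun j => (((y : Fin d → ℤ) j : ℤ) : ℝ)) + g (x + ↑y)) y
            + F (fun j => ((x j : ℤ) : ℝ)) := by
      funext y
      have harg : (fun j => ((x j + (y : Fin d → ℤ) j : ℤ) : ℝ))
          = (fun j => ((x j : ℤ) : ℝ)) + (fun j => (((y : Fin d → ℤ) j : ℤ) : ℝ)) := by
        funext j; simp only [Pi.add_apply]; push_cast; ring
      rw [harg, map_add]
      abel
    rw [hfun, hshift]
  set c : ℝ := N (fun y : ↥A => F (fun j => (((y : Fin d → ℤ) j : ℝ)))) with hc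
  set h : (Fin d → ℤ) → ℝ :=
    fun x => N (fun y : ↥A => F (fun j => (((y : Fin d → ℤ) j : ℤ) : ℝ)) + φ (x + ↑y)) with hh
  set S : ℝ := ∑ x : Fin d → Fin P, h (fun j => ((x j : ℤ))) with hS
  have hLHS : (∑ x : Fin d → Fin P, N (fun y : ↥A =>
        F (fun j => (((x j : ℤ) + (y : Fin d → ℤ) j : ℤ) : ℝ)) +
          φ ((fun j => (x j : ℤ)) + ↑y))) = S :=
    Finset.sum_congr rfl (fun x _ => key (fun j => ((x j : ℤ))) φ)
  rw [hLHS]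
  -- boundedness
  obtain ⟨Cf, hCf0⟩ := Finite.exists_le
    (fun p : ↥A × Fin d => |F (fun j => (((p.1 : Fin d → ℤ) j : ℝ))) p.2|)
  have hCf : ∀ (y : ↥A) (s : Fin d), |F (fun j => (((y : Fin d → ℤ) j : ℝ))) s| ≤ Cf :=
    fun y s => hCf0 (y, s)
  have hφmulti : ∀ (m x : Fin d → ℤ), φ (x + fun j => (P : ℤ) * m j) = φ x :=
    multi_period' φ hper
  obtain ⟨Cφ, hCφ0⟩ := Finite.exists_le
    (fun p : (Fin d → Fin P) × Fin d => |φ (fun j => ((p.1 j : ℤ))) p.2|)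
  have hCφ : ∀ (z : Fin d → ℤ) (s : Fin d), |φ z s| ≤ Cφ := by
    intro z s
    have hzlt : ∀ j, (z j % (P : ℤ)).toNat < P := by
      intro j
      have h1 : 0 ≤ z j % (P : ℤ) := Int.emod_nonneg _ (by positivity)
      have h2 : z j % (P : ℤ) < P := Int.emod_lt_of_pos _ (by positivity)
      omega
    have hz : φ z = φ (fun j => (((⟨(z j % (P:ℤ)).toNat, hzlt j⟩ : Fin P) : ℕ) : ℤ)) := by
      have hdec : z = (fun j => z j % (P : ℤ)) + fun j => (P : ℤ) * (z j / P) := by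
        funext j
        simp only [Pi.add_apply]
        exact (Int.emod_add_mul_ediv (z j) (P:ℤ)).symm
      conv_lhs => rw [hdec]
      rw [hφmulti]
      refine congrArg φ ?_
      funext j
      have h1 : 0 ≤ z j % (P : ℤ) := Int.emod_nonneg _ (by positivity)
      have h2 := hzlt j
      simp only [Fin.val_mk]
      omega
    rw [hz]
    exact hCφ0 ((fun j => (⟨(z j % (P:ℤ)).toNat, hzlt j⟩ : Fin P)), s)
  have hCφpos : 0 ≤ Cφ :=
    le_trans (abs_nonneg _) (hCφ0 ((fun _ => (⟨0, hP⟩ : Fin P)), (⟨0, hd⟩ : Fin d)))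
  obtain ⟨M, hM⟩ := hbdd (Cf + Cφ)
  have hMg : ∀ (g : (Fin d → ℤ) → Fin d → ℝ), (∀ z s, |g z s| ≤ Cφ) → ∀ x : Fin d → ℤ,
      |N (fun y : ↥A => F (fun j => (((y : Fin d → ℤ) j : ℤ) : ℝ)) + g (x + ↑y))| ≤ M := by
    intro g hg x
    apply hM
    intro y s
    simp only [Pi.add_apply]
    refine le_trans (abs_add_le _ _) (add_le_add (hCf y s) (hg _ s))
  have hMh : ∀ x, |h x| ≤ M := hMg φ hCφ
  have hMc : |c| ≤ M := by
    apply hM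
    intro y s
    exact le_trans (hCf y s) (le_add_of_nonneg_right hCφpos)
  have hM0 : 0 ≤ M := le_trans (abs_nonneg _) hMc
  -- periodicity of h
  have hhper : ∀ x, ∀ i : Fin d, h (x + Pi.single i (P : ℤ)) = h x := by
    intro x i
    apply congrArg N
    funext y
    rw [add_right_comm x (Pi.single i (P:ℤ)) (↑y), hper]
  have hhmulti : ∀ (m x : Fin d → ℤ), h (x + fun j => (P : ℤ) * m j) = h x :=
    multi_period' h hhper
  -- key estimate
  have hk : ∀ k : ℕ, 2 ≤ k →
      |(k:ℝ)^d * S - ((k:ℝ)*P)^d * c| ≤ 3*M*(((k:ℝ)+2)^d*(P:ℝ)^d - ((k:ℝ)-2)^d*(P:ℝ)^d) := by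
    intro k hk2
    have hkP1 : 1 ≤ k * P := Nat.one_le_iff_ne_zero.2 (by positivity)
    set Λ := Finset.Icc (0 : Fin d → ℤ) (fun _ => ((k*P : ℕ) : ℤ) - 1) with hΛdef
    set Qp := Finset.Icc (fun _ => -(P:ℤ) : Fin d → ℤ) (fun _ => ((k*P:ℕ) : ℤ) - 1 + P) with hQpdef
    set J := Finset.Icc (fun _ => (P:ℤ) : Fin d → ℤ) (fun _ => ((k*P:ℕ):ℤ) - 1 - P) with hJdef
    have haP : ∀ a ∈ A, ∀ j, -(P:ℤ) ≤ a j ∧ a j ≤ P := by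
      intro a ha j
      have := hPA a ha j
      omega
    have hmemΛ : ∀ x : Fin d → ℤ, x ∈ Λ ↔ (∀ j, 0 ≤ x j) ∧ (∀ j, x j ≤ ((k*P:ℕ):ℤ) - 1) := by
      intro x; rw [hΛdef, Finset.mem_Icc]; simp [Pi.le_def]
    have hmemQp : ∀ x : Fin d → ℤ, x ∈ Qp ↔
        (∀ j, -(P:ℤ) ≤ x j) ∧ (∀ j, x j ≤ ((k*P:ℕ):ℤ) - 1 + P) := by
      intro x; rw [hQpdef, Finset.mem_Icc]; simp [Pi.le_def]
    have hmemJ : ∀ x : Fin d → ℤ, x ∈ J ↔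
        (∀ j, (P:ℤ) ≤ x j) ∧ (∀ j, x j ≤ ((k*P:ℕ):ℤ) - 1 - P) := by
      intro x; rw [hJdef, Finset.mem_Icc]; simp [Pi.le_def]
    have hJΛ : J ⊆ Λ := by
      intro x hx
      rw [hmemJ] at hx
      rw [hmemΛ]
      constructor <;> intro j
      · have := hx.1 j; omega
      · have := hx.2 j; omega
    have hΛQp : Λ ⊆ Qp := by
      intro x hx
      rw [hmemΛ] at hx
      rw [hmemQp]
      constructor <;> intro j
      · have := hx.1 j; omega
      · have := hx.2 j; omega
    have hLQp : LambdaA A Λ ⊆ Qp := by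
      intro x hx
      simp only [LambdaA, Finset.mem_biUnion, Finset.mem_image] at hx
      obtain ⟨l, hl, a, ha, rfl⟩ := hx
      rw [hmemΛ] at hl
      rw [hmemQp]
      constructor <;> intro j <;>
        [have h5 := hl.1 j; have h5 := hl.2 j] <;> have h4 := haP a ha j <;>
        simp only [Pi.sub_apply] <;> omega
    have hJL : J ⊆ LambdaA A Λ := by
      intro x hx
      rw [hmemJ] at hx
      simp only [LambdaA, Finset.mem_biUnion, Finset.mem_image]
      refine ⟨x + a₀, ?_, a₀, ha₀, by rw [add_sub_cancel_right]⟩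
      rw [hmemΛ]
      constructor <;> intro j <;>
        [have h5 := hx.1 j; have h5 := hx.2 j] <;> have h4 := haP a₀ ha₀ j <;>
        simp only [Pi.add_apply] <;> omega
    have hJin : ∀ x ∈ J, ∀ a ∈ A, x + a ∈ Λ := by
      intro x hx a ha
      rw [hmemJ] at hx
      rw [hmemΛ]
      constructor <;> intro j <;>
        [have h5 := hx.1 j; have h5 := hx.2 j] <;> have h4 := haP a ha j <;>
        simp only [Pi.add_apply] <;> omega
    have h2P : 2 * P ≤ k * P := Nat.mul_le_mul_right P hk2
    have cardΛ : Λ.card = (k*P)^d := by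
      rw [hΛdef, Pi.card_Icc]
      simp only [Pi.zero_apply, Int.card_Icc]
      rw [Finset.prod_const, Finset.card_univ, Fintype.card_fin]
      congr 1
      omega
    have cardQp : Qp.card = ((k+2)*P)^d := by
      rw [hQpdef, Pi.card_Icc]
      simp only [Int.card_Icc]
      rw [Finset.prod_const, Finset.card_univ, Fintype.card_fin]
      congr 1
      rw [add_mul]
      omega
    have cardJ : J.card = ((k-2)*P)^d := by
      rw [hJdef, Pi.card_Icc]
      simp only [Int.card_Icc]
      rw [Finset.prod_const, Finset.card_univ, Fintype.card_fin]
      congr 1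
      rw [Nat.sub_mul]
      omega
    set g2 : (Fin d → ℤ) → (Fin d → ℝ) := fun z => if z ∈ Λ then φ z else 0 with hg2
    have hagree : ∀ z, z ∉ Λ →
        (fun z => F (fun j => ((z j : ℤ):ℝ)) + g2 z) z = (fun z => F (fun j => ((z j : ℤ):ℝ))) z := by
      intro z hz
      simp only [hg2, if_neg hz, add_zero]
    have hNLk := hNL Λ (fun z => F (fun j => ((z j : ℤ):ℝ)) + g2 z)
      (fun z => F (fun j => ((z j : ℤ):ℝ))) hagree
    simp only [Pi.add_apply] at hNLk
    set t : (Fin d → ℤ) → ℝ :=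
      fun x => N (fun y : ↥A => F (fun j => (((y : Fin d → ℤ) j : ℤ) : ℝ)) + g2 (x + ↑y)) with htdef
    have hFc : ∀ x : Fin d → ℤ,
        N (fun y : ↥A => F (fun j => ((x j + (y : Fin d → ℤ) j : ℤ) : ℝ))) = c := by
      intro x
      have h0 := key x (fun _ => (0 : Fin d → ℝ))
      simp only [add_zero] at h0
      rw [h0, hc]
    have hsumL : ∑ x ∈ LambdaA A Λ, t x = ((LambdaA A Λ).card : ℝ) * c := by
      calc ∑ x ∈ LambdaA A Λ, t x
          = ∑ x ∈ LambdaA A Λ,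
              N (fun y : ↥A => F (fun j => ((x j + (y : Fin d → ℤ) j : ℤ) : ℝ)) + g2 (x + ↑y)) :=
            Finset.sum_congr rfl (fun x _ => (key x g2).symm)
        _ = ∑ x ∈ LambdaA A Λ,
              N (fun y : ↥A => F (fun j => ((x j + (y : Fin d → ℤ) j : ℤ) : ℝ))) := hNLk
        _ = ∑ _x ∈ LambdaA A Λ, c := Finset.sum_congr rfl (fun x _ => hFc x)
        _ = ((LambdaA A Λ).card : ℝ) * c := by rw [Finset.sum_const, nsmul_eq_mul]
    have hth : ∀ x ∈ J, t x = h x := by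
      intro x hx
      rw [htdef]
      apply congrArg N
      funext y
      have hmem : x + ↑y ∈ Λ := hJin x hx ↑y y.2
      simp only [hg2, if_pos hmem]
    have hsum1 : (∑ x ∈ LambdaA A Λ \ J, t x) + (∑ x ∈ J, h x)
        = ((LambdaA A Λ).card : ℝ) * c := by
      rw [← Finset.sum_congr rfl hth, Finset.sum_sdiff hJL, hsumL]
    have hΛsum : ∑ x ∈ Λ, h x = (k:ℝ)^d * S := by
      rw [hΛdef, sum_box' (k*P) hkP1 h, periodic_box_sum k h hhmulti, hS]
    have hsum2 : (∑ x ∈ Λ \ J, h x) + (∑ x ∈ J, h x) = (k:ℝ)^d * S := by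
      rw [Finset.sum_sdiff hJΛ, hΛsum]
    have hMt : ∀ x : Fin d → ℤ, |t x| ≤ M := by
      intro x
      rw [htdef]
      apply hMg
      intro z s
      rw [hg2]
      by_cases hz : z ∈ Λ
      · simp only [if_pos hz]; exact hCφ z s
      · simp only [if_neg hz, Pi.zero_apply, abs_zero]; exact hCφpos
    have hB : |∑ x ∈ Λ \ J, h x| ≤ M * ((Λ.card:ℝ) - J.card) := by
      calc |∑ x ∈ Λ \ J, h x| ≤ ∑ x ∈ Λ \ J, |h x| := Finset.abs_sum_le_sum_abs _ _
        _ ≤ ∑ _x ∈ Λ \ J, M := Finset.sum_le_sum (fun x _ => hMh x)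
        _ = ((Λ \ J).card : ℝ) * M := by rw [Finset.sum_const, nsmul_eq_mul]
        _ = M * ((Λ.card:ℝ) - J.card) := by
            rw [Finset.card_sdiff_of_subset hJΛ, Nat.cast_sub (Finset.card_le_card hJΛ)]
            ring
    have hT : |∑ x ∈ LambdaA A Λ \ J, t x| ≤ M * (((LambdaA A Λ).card:ℝ) - J.card) := by
      calc |∑ x ∈ LambdaA A Λ \ J, t x| ≤ ∑ x ∈ LambdaA A Λ \ J, |t x| :=
            Finset.abs_sum_le_sum_abs _ _
        _ ≤ ∑ _x ∈ LambdaA A Λ \ J, M := Finset.sum_le_sum (fun x _ => hMt x)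
        _ = (((LambdaA A Λ) \ J).card : ℝ) * M := by rw [Finset.sum_const, nsmul_eq_mul]
        _ = M * (((LambdaA A Λ).card:ℝ) - J.card) := by
            rw [Finset.card_sdiff_of_subset hJL, Nat.cast_sub (Finset.card_le_card hJL)]
            ring
    have hc1 : (J.card:ℝ) ≤ ((LambdaA A Λ).card:ℝ) := by
      exact_mod_cast Finset.card_le_card hJL
    have hc2 : (((LambdaA A Λ)).card:ℝ) ≤ (Qp.card:ℝ) := by
      exact_mod_cast Finset.card_le_card hLQp
    have hc3 : (J.card:ℝ) ≤ (Λ.card:ℝ) := by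
      exact_mod_cast Finset.card_le_card hJΛ
    have hc4 : ((Λ.card):ℝ) ≤ (Qp.card:ℝ) := by
      exact_mod_cast Finset.card_le_card hΛQp
    have hcΛ : ((Λ.card):ℝ) = (k:ℝ)^d*(P:ℝ)^d := by
      rw [cardΛ]; push_cast [mul_pow]; rfl
    have hcQp : ((Qp.card):ℝ) = ((k:ℝ)+2)^d*(P:ℝ)^d := by
      rw [cardQp]; push_cast [mul_pow]; rfl
    have hcJ : ((J.card):ℝ) = ((k:ℝ)-2)^d*(P:ℝ)^d := by
      rw [cardJ]; push_cast [Nat.cast_sub hk2, mul_pow]; rfl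
    have heq : (k:ℝ)^d*S - ((Λ.card):ℝ)*c
        = (∑ x ∈ Λ \ J, h x) - (∑ x ∈ LambdaA A Λ \ J, t x)
          + (((LambdaA A Λ).card:ℝ) - (Λ.card:ℝ))*c := by
      linear_combination hsum1 - hsum2
    calc |(k:ℝ)^d * S - ((k:ℝ)*P)^d * c|
        = |(k:ℝ)^d * S - ((Λ.card):ℝ) * c| := by rw [hcΛ, mul_pow]
      _ = |(∑ x ∈ Λ \ J, h x) - (∑ x ∈ LambdaA A Λ \ J, t x)
            + (((LambdaA A Λ).card:ℝ) - (Λ.card:ℝ))*c| := by rw [heq]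
      _ ≤ |(∑ x ∈ Λ \ J, h x) - (∑ x ∈ LambdaA A Λ \ J, t x)|
            + |(((LambdaA A Λ).card:ℝ) - (Λ.card:ℝ))*c| := abs_add_le _ _
      _ ≤ |∑ x ∈ Λ \ J, h x| + |∑ x ∈ LambdaA A Λ \ J, t x|
            + |((LambdaA A Λ).card:ℝ) - (Λ.card:ℝ)| * |c| := by
          have h6 := abs_sub (∑ x ∈ Λ \ J, h x) (∑ x ∈ LambdaA A Λ \ J, t x)
          rw [abs_mul]
          linarith
      _ ≤ M * ((Λ.card:ℝ) - J.card) + M * (((LambdaA A Λ).card:ℝ) - J.card)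
            + ((Qp.card:ℝ) - (J.card:ℝ))*M := by
          have habs2 : |((LambdaA A Λ).card:ℝ) - (Λ.card:ℝ)| ≤ (Qp.card:ℝ) - (J.card:ℝ) := by
            rw [abs_sub_le_iff]
            constructor <;> linarith
          have h1 : |((LambdaA A Λ).card:ℝ) - (Λ.card:ℝ)| * |c| ≤ ((Qp.card:ℝ) - (J.card:ℝ))*M :=
            mul_le_mul habs2 hMc (abs_nonneg _) (by linarith)
          linarith [hB, hT]
      _ ≤ M*((Qp.card:ℝ)-(J.card:ℝ)) + M*((Qp.card:ℝ)-(J.card:ℝ))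
            + ((Qp.card:ℝ)-(J.card:ℝ))*M := by
          have g1 : M*((Λ.card:ℝ) - (J.card:ℝ)) ≤ M*((Qp.card:ℝ)-(J.card:ℝ)) :=
            mul_le_mul_of_nonneg_left (by linarith) hM0
          have g2' : M*(((LambdaA A Λ).card:ℝ) - (J.card:ℝ)) ≤ M*((Qp.card:ℝ)-(J.card:ℝ)) :=
            mul_le_mul_of_nonneg_left (by linarith) hM0
          linarith
      _ = 3*M*(((k:ℝ)+2)^d*(P:ℝ)^d - ((k:ℝ)-2)^d*(P:ℝ)^d) := by
          rw [hcQp, hcJ]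
          ring

  -- limit
  set X := S - (P:ℝ)^d * c with hX
  have hXbound : ∀ k : ℕ, 2 ≤ k →
      |X| ≤ 3*M*(P:ℝ)^d*((1+2/(k:ℝ))^d - (1-2/(k:ℝ))^d) := by
    intro k hk2
    have hkpos : (0:ℝ) < (k:ℝ) := by
      have : (0:ℕ) < k := by omega
      exact_mod_cast this
    have hkdpos : (0:ℝ) < (k:ℝ)^d := by positivity
    have hk0 : (k:ℝ) ≠ 0 := ne_of_gt hkpos
    refine le_of_mul_le_mul_right ?_ hkdpos
    have e1 : (1+2/(k:ℝ)) * k = (k:ℝ) + 2 := by field_simp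
    have e2 : (1-2/(k:ℝ)) * k = (k:ℝ) - 2 := by field_simp
    have lhs_eq : |X| * (k:ℝ)^d = |(k:ℝ)^d * S - ((k:ℝ)*P)^d * c| := by
      have e3 : (k:ℝ)^d * S - ((k:ℝ)*P)^d * c = X * (k:ℝ)^d := by rw [hX]; ring
      rw [e3, abs_mul, abs_of_nonneg (le_of_lt hkdpos)]
    have rhs_eq : 3*M*(P:ℝ)^d*((1+2/(k:ℝ))^d - (1-2/(k:ℝ))^d) * (k:ℝ)^d
        = 3*M*(((k:ℝ)+2)^d*(P:ℝ)^d - ((k:ℝ)-2)^d*(P:ℝ)^d) := by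
      rw [← e1, ← e2, mul_pow, mul_pow]
      ring
    rw [lhs_eq, rhs_eq]
    exact hk k hk2
  have t0 : Filter.Tendsto (fun k : ℕ => 3*M*(P:ℝ)^d*((1+2/(k:ℝ))^d - (1-2/(k:ℝ))^d))
      Filter.atTop (nhds 0) := by
    have h2k := tendsto_const_div_atTop_nhds_zero_nat (2:ℝ)
    have h1 : Filter.Tendsto (fun k : ℕ => (1+2/(k:ℝ))^d) Filter.atTop (nhds 1) := by
      have := ((tendsto_const_nhds (x := (1:ℝ)) (f := Filter.atTop (α := ℕ))).add h2k).pow d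
      simpa using this
    have h2 : Filter.Tendsto (fun k : ℕ => (1-2/(k:ℝ))^d) Filter.atTop (nhds 1) := by
      have := ((tendsto_const_nhds (x := (1:ℝ)) (f := Filter.atTop (α := ℕ))).sub h2k).pow d
      simpa using this
    have := (h1.sub h2).const_mul (3*M*(P:ℝ)^d)
    simpa using this
  have hXle : |X| ≤ 0 :=
    ge_of_tendsto t0 (Filter.eventually_atTop.2 ⟨2, fun k hk2 => hXbound k hk2⟩)
  have hX0 : X = 0 := abs_eq_zero.1 (le_antisymm hXle (abs_nonneg _))
  have : S - (P:ℝ)^d * c = 0 := hX0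
  linarith
end

section
/- Let d ≥ 1, m ≥ 1, R0 ≥ 1 and Q := {0,…,R0}^d. The function 𝒩_0 : (ℝ^m)^Q → ℝ defined by 𝒩_0(ψ) := −Σ_{i=1}^d |∇_i ψ(0)|² + (R0 (R0+1)^{d−1})^{−1} Σ_{i=1}^d Σ_{y ∈ Q, y+e_i ∈ Q} |∇_i ψ(y)|² is a discrete null Lagrangian, and 𝒩_0(ψ) = 0 whenever ψ is the restriction to Q of an affine map ℝ^d → ℝ^m. -/
open scoped BigOperators

/-- The box `Q = {0,…,R0}^d ⊂ ℤ^d`. -/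
noncomputable def QBox (d R0 : ℕ) : Finset (Fin d → ℤ) :=
  Finset.Icc 0 (fun _ => (R0 : ℤ))

/-- Extension of `ψ : (ℝ^m)^Q` by `0` outside `Q`. -/
noncomputable def extQ {d m R0 : ℕ} (ψ : ↥(QBox d R0) → Fin m → ℝ) (x : Fin d → ℤ) : Fin m → ℝ :=
  if h : x ∈ QBox d R0 then ψ ⟨x, h⟩ else 0

/-- The null Lagrangian
`𝒩₀(ψ) = −∑_i |∇_i ψ(0)|² + (R0 (R0+1)^{d−1})⁻¹ ∑_i ∑_{y, y+e_i ∈ Q} |∇_i ψ(y)|²`. -/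
noncomputable def NL0 {d m R0 : ℕ} (ψ : ↥(QBox d R0) → Fin m → ℝ) : ℝ :=
  -(∑ i : Fin d, ∑ s : Fin m, (extQ ψ (Pi.single i 1) s - extQ ψ 0 s) ^ 2) +
    ((R0 : ℝ) * ((R0 : ℝ) + 1) ^ (d - 1))⁻¹ *
      ∑ i : Fin d, ∑ y ∈ (QBox d R0).filter (fun y => y + Pi.single i 1 ∈ QBox d R0),
        ∑ s : Fin m, (extQ ψ (y + Pi.single i 1) s - extQ ψ y s) ^ 2

lemma mem_QBox {d R0 : ℕ} {x : Fin d → ℤ} :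
    x ∈ QBox d R0 ↔ ∀ j, 0 ≤ x j ∧ x j ≤ (R0 : ℤ) := by
  simp [QBox, Finset.mem_Icc, Pi.le_def, forall_and]

lemma zero_mem_QBox {d R0 : ℕ} : (0 : Fin d → ℤ) ∈ QBox d R0 := by
  simp [mem_QBox]

lemma single_mem_QBox {d R0 : ℕ} (hR0 : 1 ≤ R0) (i : Fin d) :
    (Pi.single i 1 : Fin d → ℤ) ∈ QBox d R0 := by
  rw [mem_QBox]
  intro j
  have h1 : (1:ℤ) ≤ (R0:ℤ) := by exact_mod_cast hR0
  rw [Pi.single_apply]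
  rcases eq_or_ne j i with h | h
  · rw [if_pos h]; omega
  · rw [if_neg h]; omega

lemma extQ_eval {d m R0 : ℕ} (φ : (Fin d → ℤ) → Fin m → ℝ) (x z : Fin d → ℤ)
    (hz : z ∈ QBox d R0) :
    extQ (fun y : ↥(QBox d R0) => φ (x + ↑y)) z = φ (x + z) := by
  simp [extQ, hz]

lemma filter_QBox_eq {d R0 : ℕ} (hR0 : 1 ≤ R0) (i : Fin d) :
    (QBox d R0).filter (fun y => y + Pi.single i 1 ∈ QBox d R0) =
      Finset.Icc 0 (fun j => if j = i then (R0:ℤ) - 1 else R0) := by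
  have h1 : (1:ℤ) ≤ (R0:ℤ) := by exact_mod_cast hR0
  ext y
  simp only [Finset.mem_filter, mem_QBox, Finset.mem_Icc, Pi.le_def, Pi.zero_apply,
    Pi.add_apply, Pi.single_apply]
  constructor
  · rintro ⟨ha, hb⟩
    refine ⟨fun j => (ha j).1, fun j => ?_⟩
    have haj := ha j
    have hbj := (hb j).2
    rcases eq_or_ne j i with h | h
    · rw [if_pos h] at hbj ⊢; omega
    · rw [if_neg h] at hbj ⊢; omega
  · rintro ⟨ha, hb⟩
    constructor
    · intro j
      have haj := ha j
      have hbj := hb j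
      rcases eq_or_ne j i with h | h
      · rw [if_pos h] at hbj; omega
      · rw [if_neg h] at hbj; omega
    · intro j
      have haj := ha j
      have hbj := hb j
      rcases eq_or_ne j i with h | h
      · rw [if_pos h] at hbj ⊢; omega
      · rw [if_neg h] at hbj ⊢; omega

lemma card_Qi {d R0 : ℕ} (hR0 : 1 ≤ R0) (i : Fin d) :
    ((QBox d R0).filter (fun y => y + Pi.single i 1 ∈ QBox d R0)).card
      = R0 * (R0 + 1) ^ (d - 1) := by
  rw [filter_QBox_eq hR0 i, Pi.card_Icc]
  simp only [Int.card_Icc, Pi.zero_apply]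
  rw [← Finset.mul_prod_erase Finset.univ _ (Finset.mem_univ i)]
  have h1 : (((if i = i then (R0:ℤ) - 1 else R0) + 1 - 0)).toNat = R0 := by
    rw [if_pos rfl]; omega
  rw [h1]
  congr 1
  rw [Finset.prod_congr rfl (fun j hj => ?_), Finset.prod_const,
    Finset.card_erase_of_mem (Finset.mem_univ i), Finset.card_univ, Fintype.card_fin]
  have hj' : j ≠ i := Finset.ne_of_mem_erase hj
  rw [if_neg hj']; omega

lemma NL0_apply {d m R0 : ℕ} (hR0 : 1 ≤ R0) (φ : (Fin d → ℤ) → Fin m → ℝ) (x : Fin d → ℤ) :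
    NL0 (fun y : ↥(QBox d R0) => φ (x + ↑y)) =
      -(∑ i : Fin d, ∑ s : Fin m, (φ (x + Pi.single i 1) s - φ x s) ^ 2) +
        ((R0 : ℝ) * ((R0 : ℝ) + 1) ^ (d - 1))⁻¹ *
          ∑ i : Fin d, ∑ y ∈ (QBox d R0).filter (fun y => y + Pi.single i 1 ∈ QBox d R0),
            ∑ s : Fin m, (φ (x + y + Pi.single i 1) s - φ (x + y) s) ^ 2 := by
  unfold NL0
  congr 1
  · congr 1
    refine Finset.sum_congr rfl fun i _ => Finset.sum_congr rfl fun s _ => ?_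
    rw [extQ_eval _ _ _ (single_mem_QBox hR0 i), extQ_eval _ _ _ zero_mem_QBox, add_zero]
  · congr 1
    refine Finset.sum_congr rfl fun i _ => Finset.sum_congr rfl fun y hy =>
      Finset.sum_congr rfl fun s _ => ?_
    rw [Finset.mem_filter] at hy
    rw [extQ_eval _ _ _ hy.2, extQ_eval _ _ _ hy.1, add_assoc]

/-- `𝒩₀` is a discrete null Lagrangian and vanishes on restrictions of affine maps. -/
theorem stmt9 (d m R0 : ℕ) (hd : 1 ≤ d) (hm : 1 ≤ m) (hR0 : 1 ≤ R0) :
    IsDiscreteNullLagrangian (QBox d R0) (NL0 (d := d) (m := m) (R0 := R0)) ∧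
    ∀ (ψ : ↥(QBox d R0) → Fin m → ℝ) (T : (Fin d → ℝ) →ₗ[ℝ] (Fin m → ℝ)) (b : Fin m → ℝ),
      (∀ y : ↥(QBox d R0), ψ y = T (fun j => (((y : Fin d → ℤ) j : ℝ))) + b) →
      NL0 ψ = 0 := by
  have hc : (0:ℝ) < (R0 : ℝ) * ((R0 : ℝ) + 1) ^ (d - 1) := by
    have : (0:ℝ) < (R0:ℝ) := by exact_mod_cast hR0
    positivity
  constructor
  · intro Λ φ φ' hagree
    set L := LambdaA (QBox d R0) Λ with hL
    have memL : ∀ l ∈ Λ, ∀ a ∈ QBox d R0, l - a ∈ L := by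
      intro l hl a ha
      rw [hL, LambdaA]
      exact Finset.mem_biUnion.2 ⟨l, hl, Finset.mem_image.2 ⟨a, ha, rfl⟩⟩
    set E : ((Fin d → ℤ) → Fin m → ℝ) → (Fin d → ℤ) → Fin d → ℝ :=
      fun f z i => ∑ s : Fin m, (f (z + Pi.single i 1) s - f z s) ^ 2 with hE
    have expand : ∀ f : (Fin d → ℤ) → Fin m → ℝ,
        ∑ x ∈ L, NL0 (fun y : ↥(QBox d R0) => f (x + ↑y)) =
          ∑ i : Fin d, (-(∑ x ∈ L, E f x i) +
            ((R0 : ℝ) * ((R0 : ℝ) + 1) ^ (d - 1))⁻¹ *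
              ∑ y ∈ (QBox d R0).filter (fun y => y + Pi.single i 1 ∈ QBox d R0),
                ∑ x ∈ L, E f (x + y) i) := by
      intro f
      simp_rw [NL0_apply hR0 f]
      rw [Finset.sum_add_distrib, Finset.sum_add_distrib]
      congr 1
      · rw [Finset.sum_neg_distrib, Finset.sum_neg_distrib, Finset.sum_comm]
      · rw [← Finset.mul_sum, ← Finset.mul_sum]
        congr 1
        rw [Finset.sum_comm]
        exact Finset.sum_congr rfl fun i _ => Finset.sum_comm
    rw [expand φ, expand φ']
    refine Finset.sum_congr rfl fun i _ => ?_
    set Si := Λ ∪ Λ.image (fun l => l - Pi.single i 1) with hSi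
    have hSiL : Si ⊆ L := by
      intro z hz
      rcases Finset.mem_union.1 hz with h | h
      · have := memL z h 0 zero_mem_QBox
        simpa using this
      · rcases Finset.mem_image.1 h with ⟨l, hl, rfl⟩
        exact memL l hl _ (single_mem_QBox hR0 i)
    have hzero : ∀ z, z ∉ Si → E φ z i - E φ' z i = 0 := by
      intro z hz
      rw [hSi, Finset.mem_union] at hz
      push_neg at hz
      have h1 : z ∉ Λ := hz.1
      have h2 : z + Pi.single i 1 ∉ Λ := by
        intro hmem
        exact hz.2 (Finset.mem_image.2 ⟨z + Pi.single i 1, hmem, by abel⟩)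
      rw [hE]
      simp only
      rw [hagree _ h1, hagree _ h2]
      ring
    set S : ℝ := ∑ z ∈ Si, (E φ z i - E φ' z i) with hS
    have key : ∀ (t : Finset (Fin d → ℤ)), Si ⊆ t →
        ∑ z ∈ t, (E φ z i - E φ' z i) = S := by
      intro t ht
      exact (Finset.sum_subset ht (fun z _ hz => hzero z hz)).symm
    have h1 : (∑ x ∈ L, E φ x i) - (∑ x ∈ L, E φ' x i) = S := by
      rw [← Finset.sum_sub_distrib]; exact key L hSiL
    have h2 : ∀ y ∈ (QBox d R0).filter (fun y => y + Pi.single i 1 ∈ QBox d R0),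
        (∑ x ∈ L, E φ (x + y) i) - (∑ x ∈ L, E φ' (x + y) i) = S := by
      intro y hy
      rw [Finset.mem_filter] at hy
      rw [← Finset.sum_sub_distrib,
        ← Finset.sum_image (f := fun z => E φ z i - E φ' z i)
          (g := fun x => x + y) (s := L) (fun a _ b _ h => add_left_injective y h)]
      apply key
      intro z hz
      refine Finset.mem_image.2 ⟨z - y, ?_, by abel⟩
      rcases Finset.mem_union.1 hz with h | h
      · exact memL z h y hy.1
      · rcases Finset.mem_image.1 h with ⟨l, hl, rfl⟩
        have hmem := memL l hl (y + Pi.single i 1) hy.2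
        have heq : l - Pi.single i 1 - y = l - (y + Pi.single i 1) := by abel
        rw [heq]
        exact hmem
    rw [← sub_eq_zero]
    have hBexp : (∑ y ∈ (QBox d R0).filter (fun y => y + Pi.single i 1 ∈ QBox d R0),
          ∑ x ∈ L, E φ (x + y) i) -
        (∑ y ∈ (QBox d R0).filter (fun y => y + Pi.single i 1 ∈ QBox d R0),
          ∑ x ∈ L, E φ' (x + y) i) =
        ((R0 : ℝ) * ((R0 : ℝ) + 1) ^ (d - 1)) * S := by
      rw [← Finset.sum_sub_distrib, Finset.sum_congr rfl h2, Finset.sum_const,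
        nsmul_eq_mul, card_Qi hR0 i]
      push_cast
      ring
    have hre : ∀ A B A' B' : ℝ,
        (-A + ((R0 : ℝ) * ((R0 : ℝ) + 1) ^ (d - 1))⁻¹ * B) -
          (-A' + ((R0 : ℝ) * ((R0 : ℝ) + 1) ^ (d - 1))⁻¹ * B')
        = -(A - A') + ((R0 : ℝ) * ((R0 : ℝ) + 1) ^ (d - 1))⁻¹ * (B - B') := by
      intro A B A' B'; ring
    rw [hre, h1, hBexp, inv_mul_cancel_left₀ hc.ne']
    exact neg_add_cancel S
  · intro ψ T b hψ
    set u : Fin d → (Fin d → ℝ) :=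
      fun i => fun j => (((Pi.single i 1 : Fin d → ℤ) j : ℤ) : ℝ) with hu
    have hext : ∀ (z : Fin d → ℤ) (hz : z ∈ QBox d R0),
        extQ ψ z = T (fun j => ((z j : ℤ) : ℝ)) + b := by
      intro z hz
      rw [extQ, dif_pos hz, hψ]
    have hdiff : ∀ (z : Fin d → ℤ) (i : Fin d), z ∈ QBox d R0 →
        z + Pi.single i 1 ∈ QBox d R0 →
        ∀ s, extQ ψ (z + Pi.single i 1) s - extQ ψ z s = T (u i) s := by
      intro z i hz hz' s
      rw [hext _ hz', hext _ hz]
      have hfe : T (fun j => (((z + Pi.single i 1 : Fin d → ℤ)) j : ℝ))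
          = T (fun j => ((z j : ℤ) : ℝ)) + T (u i) := by
        rw [← map_add]
        congr 1
        funext j
        simp only [Pi.add_apply, hu, Int.cast_add]
      rw [hfe]
      simp only [Pi.add_apply]
      ring
    have hdiff0 : ∀ i s, extQ ψ (Pi.single i 1) s - extQ ψ 0 s = T (u i) s := by
      intro i s
      have := hdiff 0 i zero_mem_QBox
        (by rw [zero_add]; exact single_mem_QBox hR0 i) s
      rwa [zero_add] at this
    have e0 : ∑ i : Fin d, ∑ s : Fin m, (extQ ψ (Pi.single i 1) s - extQ ψ 0 s) ^ 2
        = ∑ i : Fin d, ∑ s : Fin m, (T (u i) s) ^ 2 :=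
      Finset.sum_congr rfl fun i _ => Finset.sum_congr rfl fun s _ => by rw [hdiff0 i s]
    have e1 : ∀ i : Fin d,
        ∑ y ∈ (QBox d R0).filter (fun y => y + Pi.single i 1 ∈ QBox d R0),
          ∑ s : Fin m, (extQ ψ (y + Pi.single i 1) s - extQ ψ y s) ^ 2
        = ((R0 : ℝ) * ((R0 : ℝ) + 1) ^ (d - 1)) * ∑ s : Fin m, (T (u i) s) ^ 2 := by
      intro i
      have hcongr : ∀ y ∈ (QBox d R0).filter (fun y => y + Pi.single i 1 ∈ QBox d R0),
          ∑ s : Fin m, (extQ ψ (y + Pi.single i 1) s - extQ ψ y s) ^ 2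
            = ∑ s : Fin m, (T (u i) s) ^ 2 := by
        intro y hy
        rw [Finset.mem_filter] at hy
        exact Finset.sum_congr rfl fun s _ => by rw [hdiff y i hy.1 hy.2 s]
      rw [Finset.sum_congr rfl hcongr, Finset.sum_const, nsmul_eq_mul, card_Qi hR0 i]
      push_cast
      ring
    unfold NL0
    rw [e0, Finset.sum_congr rfl (fun i _ => e1 i), ← Finset.mul_sum,
      inv_mul_cancel_left₀ hc.ne']
    exact neg_add_cancel _
end

section
/- Let n ≥ 1 and let A, B, C be Hermitian n×n complex matrices such that C is positive definite, A and B are positive definite, B − A is positive semidefinite, and C⁻¹ − B is positive definite. Then A⁻¹ − C and B⁻¹ − C are positive definite, and (B⁻¹ − C)⁻¹ − (A⁻¹ − C)⁻¹ is positive semidefinite; that is, the map A ↦ (A⁻¹ − C)⁻¹ is matrix monotone on the set of positive definite Hermitian matrices A with A < C⁻¹. -/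
open scoped ComplexOrder
open Matrix

namespace Stmt12Aux

variable {n : ℕ}

lemma posDef_conj {A : Matrix (Fin n) (Fin n) ℂ} (hA : A.PosDef)
    {B : Matrix (Fin n) (Fin n) ℂ} (hB : IsUnit B) : (Bᴴ * A * B).PosDef := by
  exact hA.conjTranspose_mul_mul_same (Matrix.mulVec_injective_of_isUnit hB)

lemma sandwich {S : Matrix (Fin n) (Fin n) ℂ} (hS : IsUnit S.det) :
    S * (S * S)⁻¹ * S = 1 := by
  rw [Matrix.mul_inv_rev]
  simp only [Matrix.mul_assoc]
  rw [Matrix.nonsing_inv_mul _ hS, Matrix.mul_one, Matrix.mul_nonsing_inv _ hS]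

lemma isUnit_of_sq {S X : Matrix (Fin n) (Fin n) ℂ} (h : S * S = X) (hX : X.PosDef) :
    IsUnit S := by
  have hdet : IsUnit (S.det * S.det) := by
    rw [← Matrix.det_mul, h]; exact hX.det_pos.ne'.isUnit
  exact (Matrix.isUnit_iff_isUnit_det S).2 (isUnit_of_mul_isUnit_left hdet)

open scoped MatrixOrder in
/-- Key conjugation identity: `X⁻¹ - Y⁻¹` is a conjugate of `Y - X`. -/
lemma exists_conj {X Y : Matrix (Fin n) (Fin n) ℂ} (hX : X.PosDef) (hY : Y.PosDef) :
    ∃ E : Matrix (Fin n) (Fin n) ℂ, IsUnit E ∧ X⁻¹ - Y⁻¹ = Eᴴ * (Y - X) * E := by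
  set S := CFC.sqrt X⁻¹ with hSdef
  have hSH : Sᴴ = S := (CFC.sqrt_nonneg X⁻¹).posSemidef.1
  have hSS : S * S = X⁻¹ := CFC.sqrt_mul_sqrt_self X⁻¹ hX.inv.posSemidef.nonneg
  have hSu : IsUnit S := isUnit_of_sq hSS hX.inv
  have hSd : IsUnit S.det := (Matrix.isUnit_iff_isUnit_det S).1 hSu
  have hM : (S * Y * S).PosDef := by
    have := posDef_conj hY hSu
    rwa [hSH] at this
  set M := S * Y * S with hMdef
  set T := CFC.sqrt M⁻¹ with hTdef
  have hTH : Tᴴ = T := (CFC.sqrt_nonneg M⁻¹).posSemidef.1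
  have hTT : T * T = M⁻¹ := CFC.sqrt_mul_sqrt_self M⁻¹ hM.inv.posSemidef.nonneg
  have hTu : IsUnit T := isUnit_of_sq hTT hM.inv
  have hTd : IsUnit T.det := (Matrix.isUnit_iff_isUnit_det T).1 hTu
  -- identities
  have hXinv : (X⁻¹)⁻¹ = X := Matrix.nonsing_inv_nonsing_inv X hX.det_pos.ne'.isUnit
  have hMinv : (M⁻¹)⁻¹ = M := Matrix.nonsing_inv_nonsing_inv M hM.det_pos.ne'.isUnit
  have hSXS : S * X * S = 1 := by
    calc S * X * S = S * (S * S)⁻¹ * S := by rw [hSS, hXinv]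
    _ = 1 := sandwich hSd
  have hTMT : T * M * T = 1 := by
    calc T * M * T = T * (T * T)⁻¹ * T := by rw [hTT, hMinv]
    _ = 1 := sandwich hTd
  have hSMS : S * M⁻¹ * S = Y⁻¹ := by
    rw [hMdef, Matrix.mul_inv_rev, Matrix.mul_inv_rev]
    simp only [Matrix.mul_assoc]
    rw [Matrix.nonsing_inv_mul _ hSd, Matrix.mul_one, ← Matrix.mul_assoc,
      Matrix.mul_nonsing_inv _ hSd, Matrix.one_mul]
  refine ⟨S * T * S, hSu.mul hTu |>.mul hSu, ?_⟩
  have hEH : (S * T * S)ᴴ = S * T * S := by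
    simp [Matrix.conjTranspose_mul, hSH, hTH, Matrix.mul_assoc]
  rw [hEH]
  have expand : S * T * S * (Y - X) * (S * T * S)
      = S * (T * (S * Y * S - S * X * S) * T) * S := by
    simp only [Matrix.mul_sub, Matrix.sub_mul, Matrix.mul_assoc]
  rw [expand, hSXS, ← hMdef]
  have inner : T * (M - 1) * T = 1 - M⁻¹ := by
    simp only [Matrix.mul_sub, Matrix.sub_mul, Matrix.mul_one, Matrix.one_mul, hTMT, hTT]
  rw [inner]
  simp only [Matrix.mul_sub, Matrix.sub_mul, Matrix.mul_one, hSS, hSMS]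

lemma inv_sub_inv_posSemidef {X Y : Matrix (Fin n) (Fin n) ℂ} (hX : X.PosDef) (hY : Y.PosDef)
    (h : (Y - X).PosSemidef) : (X⁻¹ - Y⁻¹).PosSemidef := by
  obtain ⟨E, hE, hEq⟩ := exists_conj hX hY
  rw [hEq]; exact h.conjTranspose_mul_mul_same E

lemma inv_sub_inv_posDef {X Y : Matrix (Fin n) (Fin n) ℂ} (hX : X.PosDef) (hY : Y.PosDef)
    (h : (Y - X).PosDef) : (X⁻¹ - Y⁻¹).PosDef := by
  obtain ⟨E, hE, hEq⟩ := exists_conj hX hY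
  rw [hEq]; exact posDef_conj h hE

end Stmt12Aux

open Stmt12Aux in
/-- Matrix monotonicity of `A ↦ (A⁻¹ − C)⁻¹`: if `A, B, C` are Hermitian with `C` positive
definite, `A, B` positive definite, `A ≤ B` and `B < C⁻¹`, then `A⁻¹ − C` and `B⁻¹ − C` are
positive definite and `(A⁻¹ − C)⁻¹ ≤ (B⁻¹ − C)⁻¹`. -/
theorem stmt12 (n : ℕ) (hn : 1 ≤ n) (A B C : Matrix (Fin n) (Fin n) ℂ)
    (hAherm : A.IsHermitian) (hBherm : B.IsHermitian) (hCherm : C.IsHermitian)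
    (hC : C.PosDef) (hA : A.PosDef) (hB : B.PosDef)
    (hAB : (B - A).PosSemidef) (hCB : (C⁻¹ - B).PosDef) :
    (A⁻¹ - C).PosDef ∧ (B⁻¹ - C).PosDef ∧
      ((B⁻¹ - C)⁻¹ - (A⁻¹ - C)⁻¹).PosSemidef := by
  have hCinv : (C⁻¹)⁻¹ = C := Matrix.nonsing_inv_nonsing_inv C hC.det_pos.ne'.isUnit
  have hCA : (C⁻¹ - A).PosDef := by
    have h : C⁻¹ - A = (C⁻¹ - B) + (B - A) := by abel
    rw [h]; exact hCB.add_posSemidef hAB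
  have hAC : (A⁻¹ - C).PosDef := by
    have := inv_sub_inv_posDef hA hC.inv hCA
    rwa [hCinv] at this
  have hBC : (B⁻¹ - C).PosDef := by
    have := inv_sub_inv_posDef hB hC.inv hCB
    rwa [hCinv] at this
  refine ⟨hAC, hBC, ?_⟩
  have hinv : (A⁻¹ - B⁻¹).PosSemidef := inv_sub_inv_posSemidef hA hB hAB
  have h : (A⁻¹ - C - (B⁻¹ - C)).PosSemidef := by
    rw [sub_sub_sub_cancel_right]; exact hinv
  exact inv_sub_inv_posSemidef hBC hAC h
end

section
/- Let n ≥ 1 and let A, C be Hermitian n×n complex matrices with A positive semidefinite, C positive definite, and C⁻¹ − A positive definite. Then 𝟙 − A^{1/2} C A^{1/2} is positive definite, where A^{1/2} denotes the positive semidefinite square root of A, and A^{1/2} (𝟙 − A^{1/2} C A^{1/2})⁻¹ A^{1/2} = Σ_{i=0}^∞ A (C A)^i, the series on the right converging absolutely (in any matrix norm). -/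
open scoped ComplexOrder

/-- The positive semidefinite square root of a positive semidefinite matrix (removed from Mathlib;
restored with its old definition). -/
noncomputable def Matrix.PosSemidef.sqrt {n : Type*} [Fintype n] [DecidableEq n]
    {A : Matrix n n ℂ} (hA : A.PosSemidef) : Matrix n n ℂ :=
  hA.1.eigenvectorUnitary.1 * Matrix.diagonal ((↑) ∘ (Real.sqrt ·) ∘ hA.1.eigenvalues) *
  (star hA.1.eigenvectorUnitary : Matrix n n ℂ)

open Matrix

section StmtAux

variable {m : Type*} [Fintype m] [DecidableEq m]

private lemma stmt13_posDef_conj {X U : Matrix m m ℂ} (hX : X.PosDef) (hU : IsUnit U.det) :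
    (U * X * Uᴴ).PosDef := by
  have hps := hX.posSemidef.conjTranspose_mul_mul_same Uᴴ
  rw [conjTranspose_conjTranspose] at hps
  refine Matrix.PosDef.of_dotProduct_mulVec_pos hps.1 fun x hx => ?_
  have hUH : IsUnit (Uᴴ) := by
    rw [Matrix.isUnit_iff_isUnit_det, Matrix.det_conjTranspose]
    exact hU.star
  have hinj : Function.Injective (Uᴴ).mulVec := Matrix.mulVec_injective_iff_isUnit.mpr hUH
  have hy : Uᴴ *ᵥ x ≠ 0 := by
    intro h
    exact hx (hinj (h.trans (Matrix.mulVec_zero _).symm))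
  have key : star x ⬝ᵥ ((U * X * Uᴴ) *ᵥ x) = star (Uᴴ *ᵥ x) ⬝ᵥ (X *ᵥ (Uᴴ *ᵥ x)) := by
    rw [star_mulVec, conjTranspose_conjTranspose, ← Matrix.mulVec_mulVec, ← Matrix.mulVec_mulVec,
      Matrix.dotProduct_mulVec]
  rw [key]
  exact hX.dotProduct_mulVec_pos hy

private lemma stmt13_dot_conj (N : Matrix m m ℂ) (x : m → ℂ) :
    star x ⬝ᵥ ((Nᴴ * N) *ᵥ x) = star (N *ᵥ x) ⬝ᵥ (N *ᵥ x) := by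
  rw [star_mulVec, ← Matrix.mulVec_mulVec, Matrix.dotProduct_mulVec]

private lemma stmt13_inner_equiv_symm (x y : m → ℂ) :
    inner ℂ ((WithLp.equiv 2 (m → ℂ)).symm x) ((WithLp.equiv 2 (m → ℂ)).symm y) = star x ⬝ᵥ y := by
  rw [dotProduct_comm]; rfl

private lemma stmt13_flip {N : Matrix m m ℂ} (h : (1 - N * Nᴴ).PosDef) :
    (1 - Nᴴ * N).PosDef := by
  have hherm : (1 - Nᴴ * N).IsHermitian :=
    Matrix.isHermitian_one.sub (Matrix.isHermitian_conjTranspose_mul_self N)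
  refine Matrix.PosDef.of_dotProduct_mulVec_pos hherm fun x hx => ?_
  set u := N *ᵥ x with hu
  set v := Nᴴ *ᵥ u with hv
  have e1 : star x ⬝ᵥ ((1 - Nᴴ * N) *ᵥ x) = star x ⬝ᵥ x - star u ⬝ᵥ u := by
    rw [Matrix.sub_mulVec, dotProduct_sub, Matrix.one_mulVec, stmt13_dot_conj]
  rw [e1]
  by_cases hu0 : u = 0
  · rw [hu0]
    simpa using Matrix.dotProduct_star_self_pos_iff.mpr hx
  set X : EuclideanSpace ℂ m := (WithLp.equiv 2 (m → ℂ)).symm x with hX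
  set Uu : EuclideanSpace ℂ m := (WithLp.equiv 2 (m → ℂ)).symm u with hU
  set V : EuclideanSpace ℂ m := (WithLp.equiv 2 (m → ℂ)).symm v with hV
  have hxx : star x ⬝ᵥ x = ((‖X‖ ^ 2 : ℝ) : ℂ) := by
    rw [← stmt13_inner_equiv_symm, ← hX, inner_self_eq_norm_sq_to_K]
    norm_cast
  have huu : star u ⬝ᵥ u = ((‖Uu‖ ^ 2 : ℝ) : ℂ) := by
    rw [← stmt13_inner_equiv_symm, ← hU, inner_self_eq_norm_sq_to_K]
    norm_cast
  have hvv : star v ⬝ᵥ v = ((‖V‖ ^ 2 : ℝ) : ℂ) := by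
    rw [← stmt13_inner_equiv_symm, ← hV, inner_self_eq_norm_sq_to_K]
    norm_cast
  have h2 : 0 < star u ⬝ᵥ u - star v ⬝ᵥ v := by
    have := h.dotProduct_mulVec_pos hu0
    rwa [Matrix.sub_mulVec, dotProduct_sub, Matrix.one_mulVec,
      (by rw [conjTranspose_conjTranspose] : N * Nᴴ = (Nᴴ)ᴴ * Nᴴ), stmt13_dot_conj] at this
  have hVU : ‖V‖ < ‖Uu‖ := by
    rw [huu, hvv, ← Complex.ofReal_sub] at h2
    have h3 := Complex.zero_lt_real.mp h2
    have : ‖V‖ ^ 2 < ‖Uu‖ ^ 2 := by linarith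
    exact lt_of_pow_lt_pow_left₀ 2 (norm_nonneg _) this
  have e3 : star u ⬝ᵥ u = star v ⬝ᵥ x :=
    calc star u ⬝ᵥ u = star u ⬝ᵥ (N *ᵥ x) := rfl
    _ = (star u ᵥ* N) ⬝ᵥ x := Matrix.dotProduct_mulVec _ _ _
    _ = star v ⬝ᵥ x := by simp [hv, star_mulVec, Matrix.vecMul_vecMul]
  have hUpos : 0 < ‖Uu‖ := by
    rw [norm_pos_iff]
    simpa [hU] using hu0
  have hCS : ‖Uu‖ ^ 2 ≤ ‖V‖ * ‖X‖ := by
    have hin : (inner ℂ V X : ℂ) = ((‖Uu‖ ^ 2 : ℝ) : ℂ) := by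
      rw [stmt13_inner_equiv_symm, ← e3, huu]
    calc ‖Uu‖ ^ 2 = ‖(inner ℂ V X : ℂ)‖ := by
          rw [hin, Complex.norm_real, Real.norm_eq_abs, abs_of_nonneg (sq_nonneg _)]
    _ ≤ ‖V‖ * ‖X‖ := norm_inner_le_norm _ _
  have hUX : ‖Uu‖ < ‖X‖ := by nlinarith [norm_nonneg V, norm_nonneg X]
  rw [hxx, huu, ← Complex.ofReal_sub, Complex.zero_lt_real]
  nlinarith

private lemma stmt13_hasSum_iff {ι : Type*} {f : ι → Matrix m m ℂ} {M : Matrix m m ℂ} :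
    HasSum f M ↔ ∀ i j, HasSum (fun k => f k i j) (M i j) := by
  exact Pi.hasSum.trans (forall_congr' fun i => Pi.hasSum)

private lemma stmt13_entry (V : Matrix m m ℂ) (g : m → ℂ) (i j : m) :
    (V * Matrix.diagonal g * Vᴴ) i j = ∑ a, V i a * g a * star (V j a) := by
  rw [Matrix.mul_apply]
  congr 1
  ext a
  rw [Matrix.mul_diagonal, conjTranspose_apply]

private lemma stmt13_conj_mul (U X Y : Matrix m m ℂ) (hU1 : Uᴴ * U = 1) :
    (U * X * Uᴴ) * (U * Y * Uᴴ) = U * (X * Y) * Uᴴ := by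
  simp only [Matrix.mul_assoc]
  rw [← Matrix.mul_assoc Uᴴ U, hU1, Matrix.one_mul]

private lemma stmt13_eig_lt_one {B : Matrix m m ℂ} (hB : B.PosSemidef) (h1 : (1 - B).PosDef)
    (a : m) : hB.1.eigenvalues a < 1 := by
  set w : m → ℂ := ⇑(hB.1.eigenvectorBasis a) with hw
  have hw1 : ‖hB.1.eigenvectorBasis a‖ = 1 := hB.1.eigenvectorBasis.orthonormal.1 a
  have hwne : w ≠ 0 := by
    intro h
    exact hB.1.eigenvectorBasis.orthonormal.ne_zero a (by ext1 j; exact congrFun h j)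
  have hpos := h1.dotProduct_mulVec_pos hwne
  rw [Matrix.sub_mulVec, dotProduct_sub, Matrix.one_mulVec] at hpos
  have hre : 0 < (star w ⬝ᵥ w - star w ⬝ᵥ (B *ᵥ w)).re := (Complex.lt_def.mp hpos).1
  rw [Complex.sub_re] at hre
  have hww : star w ⬝ᵥ w = (1 : ℂ) := by
    rw [show star w ⬝ᵥ w
        = @inner ℂ _ _ (hB.1.eigenvectorBasis a) (hB.1.eigenvectorBasis a) from by rw [dotProduct_comm]; rfl,
      inner_self_eq_norm_sq_to_K, hw1]
    norm_num
  rw [hww] at hre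
  have heig := hB.1.eigenvalues_eq a
  rw [← hw] at heig
  rw [heig, RCLike.re_to_complex]
  rw [Complex.one_re] at hre
  linarith

private lemma stmt13_sqrt_psd {A : Matrix m m ℂ} (hA : A.PosSemidef) : hA.sqrt.PosSemidef := by
  have hD : (Matrix.diagonal ((↑) ∘ (Real.sqrt ·) ∘ hA.1.eigenvalues) : Matrix m m ℂ).PosSemidef :=
    Matrix.posSemidef_diagonal_iff.mpr fun i => Complex.zero_le_real.mpr (Real.sqrt_nonneg _)
  have := hD.conjTranspose_mul_mul_same (star (hA.1.eigenvectorUnitary : Matrix m m ℂ))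
  rw [← Matrix.star_eq_conjTranspose, star_star] at this
  exact this

private lemma stmt13_sqrt_mul_self {A : Matrix m m ℂ} (hA : A.PosSemidef) :
    hA.sqrt * hA.sqrt = A := by
  have hU : (star hA.1.eigenvectorUnitary : Matrix m m ℂ) * (hA.1.eigenvectorUnitary : Matrix m m ℂ)
      = 1 := Unitary.coe_star_mul_self _
  have hDD : (Matrix.diagonal ((↑) ∘ (Real.sqrt ·) ∘ hA.1.eigenvalues) : Matrix m m ℂ) *
      Matrix.diagonal ((↑) ∘ (Real.sqrt ·) ∘ hA.1.eigenvalues)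
      = Matrix.diagonal (RCLike.ofReal ∘ hA.1.eigenvalues : m → ℂ) := by
    rw [Matrix.diagonal_mul_diagonal]
    congr 1
    ext i
    simp only [Function.comp_apply]
    rw [← Complex.ofReal_mul, Real.mul_self_sqrt (hA.eigenvalues_nonneg i)]
    rfl
  conv_rhs => rw [hA.1.spectral_theorem, Unitary.conjStarAlgAut_apply]
  unfold Matrix.PosSemidef.sqrt
  simp only [Matrix.mul_assoc]
  rw [← Matrix.mul_assoc (star _ : Matrix m m ℂ) (_ : Matrix m m ℂ), hU, Matrix.one_mul,
    ← Matrix.mul_assoc (Matrix.diagonal _), hDD]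

end StmtAux

set_option maxHeartbeats 2000000 in
/-- If `A` is positive semidefinite, `C` positive definite and `C⁻¹ − A` positive definite, then
`𝟙 − A^{1/2} C A^{1/2}` is positive definite and
`A^{1/2} (𝟙 − A^{1/2} C A^{1/2})⁻¹ A^{1/2} = ∑_{i=0}^∞ A (C A)^i`, the series converging
absolutely (equivalently, entrywise absolutely). -/
theorem stmt13 (n : ℕ) (hn : 1 ≤ n) (A C : Matrix (Fin n) (Fin n) ℂ)
    (hAherm : A.IsHermitian) (hCherm : C.IsHermitian)
    (hA : A.PosSemidef) (hC : C.PosDef) (hCA : (C⁻¹ - A).PosDef) :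
    (1 - hA.sqrt * C * hA.sqrt).PosDef ∧
    HasSum (fun i : ℕ => A * (C * A) ^ i)
      (hA.sqrt * (1 - hA.sqrt * C * hA.sqrt)⁻¹ * hA.sqrt) ∧
    ∀ i j, Summable (fun k : ℕ => ‖(A * (C * A) ^ k) i j‖) := by
  classical
  set S := hA.sqrt with hSdef
  have hS := stmt13_sqrt_psd hA
  have hSH : Sᴴ = S := hS.1
  have hSS : S * S = A := stmt13_sqrt_mul_self hA
  set T := hC.posSemidef.sqrt with hTdef
  have hT := stmt13_sqrt_psd hC.posSemidef
  have hTH : Tᴴ = T := hT.1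
  have hTT : T * T = C := stmt13_sqrt_mul_self hC.posSemidef
  have hdetT : IsUnit T.det := by
    have hmul : T.det * T.det = C.det := by rw [← Matrix.det_mul, hTT]
    have h2 : IsUnit (C.det) := isUnit_iff_ne_zero.mpr hC.det_pos.ne'
    rw [← hmul] at h2
    exact isUnit_of_mul_isUnit_left h2
  -- Step A : 1 - T A T is positive definite
  have hMMH : (1 - (T * S) * (T * S)ᴴ).PosDef := by
    have h0 : (T * S) * (T * S)ᴴ = T * A * T := by
      rw [conjTranspose_mul, hSH, hTH]
      calc T * S * (S * T) = T * (S * S) * T := by simp only [Matrix.mul_assoc]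
      _ = T * A * T := by rw [hSS]
    rw [h0]
    have hconj := stmt13_posDef_conj hCA hdetT
    rw [hTH] at hconj
    have heq : T * (C⁻¹ - A) * T = 1 - T * A * T := by
      rw [Matrix.mul_sub, Matrix.sub_mul]
      congr 1
      have hCinv : C⁻¹ = T⁻¹ * T⁻¹ := by rw [← hTT, Matrix.mul_inv_rev]
      rw [hCinv]
      calc T * (T⁻¹ * T⁻¹) * T = T * T⁻¹ * (T⁻¹ * T) := by simp only [Matrix.mul_assoc]
      _ = 1 := by rw [Matrix.mul_nonsing_inv _ hdetT, Matrix.nonsing_inv_mul _ hdetT, one_mul]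
    rwa [heq] at hconj
  -- Step B : 1 - S C S is positive definite
  have hB0 : (T * S)ᴴ * (T * S) = S * C * S := by
    rw [conjTranspose_mul, hSH, hTH]
    calc S * T * (T * S) = S * (T * T) * S := by simp only [Matrix.mul_assoc]
    _ = S * C * S := by rw [hTT]
  set B := S * C * S with hBdef
  have h1 : (1 - B).PosDef := by
    have := stmt13_flip hMMH
    rwa [hB0] at this
  have hB : B.PosSemidef := by
    have := hC.posSemidef.conjTranspose_mul_mul_same S
    rw [hSH] at this
    rw [hBdef]
    exact this
  -- spectral data
  set U : Matrix (Fin n) (Fin n) ℂ :=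
    (hB.1.eigenvectorUnitary : Matrix (Fin n) (Fin n) ℂ) with hUdef
  have hUmem := hB.1.eigenvectorUnitary.2
  have hU1 : Uᴴ * U = 1 := (Unitary.mem_iff.mp hUmem).1
  have hU2 : U * Uᴴ = 1 := (Unitary.mem_iff.mp hUmem).2
  set d : Fin n → ℝ := hB.1.eigenvalues with hddef
  have hspec : B = U * Matrix.diagonal (fun a => (d a : ℂ)) * Uᴴ := by
    have := hB.1.spectral_theorem
    rw [Unitary.conjStarAlgAut_apply] at this
    exact this
  have hd0 : ∀ a, 0 ≤ d a := fun a => hB.eigenvalues_nonneg a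
  have hd1 : ∀ a, d a < 1 := fun a => stmt13_eig_lt_one hB h1 a
  have hdne : ∀ a, (1 : ℂ) - (d a : ℂ) ≠ 0 := fun a =>
    sub_ne_zero.mpr (by exact_mod_cast (hd1 a).ne')
  -- powers
  have hBk : ∀ k : ℕ, B ^ k = U * Matrix.diagonal (fun a => (d a : ℂ) ^ k) * Uᴴ := by
    intro k
    induction k with
    | zero => simp [hU2]
    | succ k ih =>
      rw [pow_succ, ih]
      conv_lhs => rw [hspec]
      rw [stmt13_conj_mul U _ _ hU1, Matrix.diagonal_mul_diagonal]
      simp only [← pow_succ]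
  have hstep : ∀ X : Matrix (Fin n) (Fin n) ℂ, S * X * S * (C * A) = S * (X * B) * S := by
    intro X
    rw [hBdef, ← hSS]
    simp only [Matrix.mul_assoc]
  have hSB : ∀ k : ℕ, A * (C * A) ^ k = S * B ^ k * S := by
    intro k
    induction k with
    | zero => simp [hSS]
    | succ k ih =>
      rw [pow_succ, ← Matrix.mul_assoc, ih, hstep, ← pow_succ]
  set V : Matrix (Fin n) (Fin n) ℂ := S * U with hVdef
  have hVH : Vᴴ = Uᴴ * S := by rw [hVdef, conjTranspose_mul, hSH]
  have hVD : ∀ k : ℕ, A * (C * A) ^ k = V * Matrix.diagonal (fun a => (d a : ℂ) ^ k) * Vᴴ := by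
    intro k
    rw [hSB k, hBk k, hVdef, hVH]
    simp only [Matrix.mul_assoc]
  -- inverse formula
  have h1mB : 1 - B = U * Matrix.diagonal (fun a => 1 - (d a : ℂ)) * Uᴴ := by
    have hd : Matrix.diagonal (fun a => 1 - (d a : ℂ))
        = 1 - Matrix.diagonal (fun a => (d a : ℂ)) := by
      rw [← Matrix.diagonal_one, Matrix.diagonal_sub]
    rw [hd, Matrix.mul_sub, Matrix.sub_mul, Matrix.mul_one, hU2]
    rw [← hspec]
  have hinv : (1 - B)⁻¹ = U * Matrix.diagonal (fun a => ((1 : ℂ) - (d a : ℂ))⁻¹) * Uᴴ := by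
    apply Matrix.inv_eq_right_inv
    rw [h1mB, stmt13_conj_mul U _ _ hU1, Matrix.diagonal_mul_diagonal]
    have : (fun a => (1 - (d a : ℂ)) * ((1 : ℂ) - (d a : ℂ))⁻¹) = fun _ => (1 : ℂ) :=
      funext fun a => mul_inv_cancel₀ (hdne a)
    rw [this, Matrix.diagonal_one, Matrix.mul_one, hU2]
  have hfinal : S * (1 - B)⁻¹ * S
      = V * Matrix.diagonal (fun a => ((1 : ℂ) - (d a : ℂ))⁻¹) * Vᴴ := by
    rw [hinv, hVdef, hVH]
    simp only [Matrix.mul_assoc]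
  refine ⟨h1, ?_, ?_⟩
  · rw [stmt13_hasSum_iff]
    intro i j
    have hrw : ∀ k : ℕ, (A * (C * A) ^ k) i j
        = ∑ a, V i a * (d a : ℂ) ^ k * star (V j a) := fun k => by
      rw [hVD k, stmt13_entry]
    simp only [hrw]
    rw [hfinal, stmt13_entry]
    refine hasSum_sum fun a _ => ?_
    have hnorm : ‖((d a : ℝ) : ℂ)‖ < 1 := by
      rw [Complex.norm_real, Real.norm_eq_abs, abs_of_nonneg (hd0 a)]
      exact hd1 a
    exact ((hasSum_geometric_of_norm_lt_one hnorm).mul_left (V i a)).mul_right (star (V j a))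
  · intro i j
    have hrw : ∀ k : ℕ, (A * (C * A) ^ k) i j
        = ∑ a, V i a * (d a : ℂ) ^ k * star (V j a) := fun k => by
      rw [hVD k, stmt13_entry]
    refine Summable.of_nonneg_of_le
      (fun k => norm_nonneg _) (fun k => ?_)
      (?_ : Summable fun k : ℕ => ∑ a, ‖V i a‖ * ‖V j a‖ * d a ^ k)
    · rw [hrw k]
      refine le_trans (norm_sum_le _ _) (Finset.sum_le_sum fun a _ => le_of_eq ?_)
      rw [norm_mul, norm_mul, norm_pow, Complex.norm_real, Real.norm_eq_abs, abs_of_nonneg (hd0 a),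
        RCLike.star_def, Complex.norm_conj]
      ring
    · exact summable_sum fun a _ =>
        ((summable_geometric_of_lt_one (hd0 a) (hd1 a)).mul_left _)
end
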